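/- arXiv:2507.09803 — 12 statements merged into one kernel-verified Lean document; each statement's English description precedes it below -/
import Mathlib

section
/- Let a ∈ ℝ, a ≠ 0, and let f, f̃, g, g̃, h, h̃ : ℤ × ℝ → ℂ be such that for each k ∈ ℤ the functions t ↦ f_k(t), t ↦ f̃_k(t), t ↦ h_k(t) are differentiable, and suppose the semi-discrete bilinear system holds for all k ∈ ℤ and t ∈ ℝ: (i/a)(g_{k+1} f_k − g_k f_{k+1}) + h_{k+1} f̃_k = 0; (i/a)(f_{k+1} f̃_k − f_k f̃_{k+1}) + h_{k+1} h̃_k = 0; i(h_k' f̃_k − h_k f̃_k') + g_k f_k = 0; i(f_k' f̃_k − f_k f̃_k') = g_k g̃_k, where ' denotes d/dt. Define u_k = g_k/f̃_k, v_k = h_k/f_k, ũ_k = g̃_k/f_k, ṽ_k = h̃_k/f̃_k. Then for every k ∈ ℤ and t ∈ ℝ at which f_k(t), f̃_k(t), f_{k+1}(t), f̃_{k+1}(t) are all nonzero: (i/a)(u_{k+1}(t) − u_k(t)) + v_{k+1}(t) + u_{k+1}(t) v_{k+1}(t) ṽ_k(t) = 0 and i·(d/dt)v_k(t) + u_k(t)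 + v_k(t) u_k(t) ũ_k(t) = 0. -/
/-- The dependent-variable transformation `u_k = g_k/f̃_k`, `v_k = h_k/f_k`,
`ũ_k = g̃_k/f_k`, `ṽ_k = h̃_k/f̃_k` converts the semi-discrete bilinear system into
the semi-discrete massive Thirring model. -/
theorem semi_discrete_bilinear_to_MT (a : ℝ) (ha : a ≠ 0)
    (f ft g gt h ht : ℤ → ℝ → ℂ)
    (hdf : ∀ k, Differentiable ℝ (f k))
    (hdft : ∀ k, Differentiable ℝ (ft k))
    (hdh : ∀ k, Differentiable ℝ (h k))
    (bil1 : ∀ (k : ℤ) (t : ℝ),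
      (Complex.I / (a : ℂ)) * (g (k + 1) t * f k t - g k t * f (k + 1) t)
        + h (k + 1) t * ft k t = 0)
    (bil2 : ∀ (k : ℤ) (t : ℝ),
      (Complex.I / (a : ℂ)) * (f (k + 1) t * ft k t - f k t * ft (k + 1) t)
        + h (k + 1) t * ht k t = 0)
    (bil3 : ∀ (k : ℤ) (t : ℝ),
      Complex.I * (deriv (h k) t * ft k t - h k t * deriv (ft k) t) + g k t * f k t = 0)
    (bil4 : ∀ (k : ℤ) (t : ℝ),
      Complex.I * (deriv (f k) t * ft k t - f k t * deriv (ft k) t) = g k t * gt k t)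
    (u v ut vt : ℤ → ℝ → ℂ)
    (hu : ∀ k t, u k t = g k t / ft k t)
    (hv : ∀ k t, v k t = h k t / f k t)
    (hut : ∀ k t, ut k t = gt k t / f k t)
    (hvt : ∀ k t, vt k t = ht k t / ft k t) :
    ∀ (k : ℤ) (t : ℝ), f k t ≠ 0 → ft k t ≠ 0 → f (k + 1) t ≠ 0 → ft (k + 1) t ≠ 0 →
      (Complex.I / (a : ℂ)) * (u (k + 1) t - u k t) + v (k + 1) t
        + u (k + 1) t * v (k + 1) t * vt k t = 0 ∧
      Complex.I * deriv (v k) t + u k t + v k t * u k t * ut k t = 0 := by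
  intro k t hf hft hf1 hft1
  have ha' : (a : ℂ) ≠ 0 := by exact_mod_cast Complex.ofReal_ne_zero.mpr ha
  constructor
  · rw [hu, hu, hv, hvt]
    field_simp
    have b1 := bil1 k t
    have b2 := bil2 k t
    field_simp at b1 b2
    linear_combination ft (k+1) t * b1
      + g (k+1) t * b2
  · have hvk : v k = fun s => h k s / f k s := funext (hv k)
    have hd : deriv (v k) t =
        (deriv (h k) t * f k t - h k t * deriv (f k) t) / (f k t)^2 := by
      rw [hvk]
      exact deriv_div ((hdh k).differentiableAt) ((hdf k).differentiableAt) hf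
    rw [hd, hu, hv, hut]
    field_simp
    linear_combination f k t * bil3 k t - h k t * bil4 k t
end

section
/- Let a, b ∈ ℝ be nonzero and let f, f̃, g, g̃, h, h̃ : ℤ × ℤ → ℂ (written f^l_k etc.) satisfy the fully discrete bilinear system for all k, l ∈ ℤ: (i/a)(g^l_{k+1} f^l_k − g^l_k f^l_{k+1}) + h^l_{k+1} f̃^l_k = 0; (i/a)(f^l_{k+1} f̃^l_k − f^l_k f̃^l_{k+1}) + h^l_{k+1} h̃^l_k = 0; (i/b)(h^{l+1}_k f̃^l_k − h^l_k f̃^{l+1}_k) + g^{l+1}_k f^l_k = 0; (i/b)(f^{l+1}_k f̃^l_k − f^l_k f̃^{l+1}_k) = g^{l+1}_k g̃^l_k. Define u^l_k = g^l_k/f̃^l_k, v^l_k = h^l_k/f^l_k, ũ^l_k = g̃^l_k/f^l_k, ṽ^l_k = h̃^l_k/f̃^l_k. Then for all k,l ∈ ℤ at which f^l_k, f̃^l_k, f^l_{k+1}, f̃^l_{k+1}, f^{l+1}_k, f̃^{l+1}_k are nonzero: (i/a)(u^l_{k+1} − u^l_k) + v^l_{k+1} + u^l_{k+1} v^l_{k+1}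 ṽ^l_k = 0 and (i/b)(v^{l+1}_k − v^l_k) + u^{l+1}_k + v^{l+1}_k u^{l+1}_k ũ^l_k = 0. -/
/-- The dependent-variable transformation `u^l_k = g^l_k/f̃^l_k`, `v^l_k = h^l_k/f^l_k`,
`ũ^l_k = g̃^l_k/f^l_k`, `ṽ^l_k = h̃^l_k/f̃^l_k` converts the fully discrete bilinear
system into the fully discrete massive Thirring model. -/
theorem fully_discrete_bilinear_to_MT (a b : ℝ) (ha : a ≠ 0) (hb : b ≠ 0)
    (f ft g gt h ht : ℤ → ℤ → ℂ)
    (bil1 : ∀ k l : ℤ,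
      (Complex.I / (a : ℂ)) * (g (k + 1) l * f k l - g k l * f (k + 1) l)
        + h (k + 1) l * ft k l = 0)
    (bil2 : ∀ k l : ℤ,
      (Complex.I / (a : ℂ)) * (f (k + 1) l * ft k l - f k l * ft (k + 1) l)
        + h (k + 1) l * ht k l = 0)
    (bil3 : ∀ k l : ℤ,
      (Complex.I / (b : ℂ)) * (h k (l + 1) * ft k l - h k l * ft k (l + 1))
        + g k (l + 1) * f k l = 0)
    (bil4 : ∀ k l : ℤ,
      (Complex.I / (b : ℂ)) * (f k (l + 1) * ft k l - f k l * ft k (l + 1))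
        = g k (l + 1) * gt k l)
    (u v ut vt : ℤ → ℤ → ℂ)
    (hu : ∀ k l, u k l = g k l / ft k l)
    (hv : ∀ k l, v k l = h k l / f k l)
    (hut : ∀ k l, ut k l = gt k l / f k l)
    (hvt : ∀ k l, vt k l = ht k l / ft k l) :
    ∀ k l : ℤ, f k l ≠ 0 → ft k l ≠ 0 → f (k + 1) l ≠ 0 → ft (k + 1) l ≠ 0 →
      f k (l + 1) ≠ 0 → ft k (l + 1) ≠ 0 →
      (Complex.I / (a : ℂ)) * (u (k + 1) l - u k l) + v (k + 1) l
        + u (k + 1) l * v (k + 1) l * vt k l = 0 ∧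
      (Complex.I / (b : ℂ)) * (v k (l + 1) - v k l) + u k (l + 1)
        + v k (l + 1) * u k (l + 1) * ut k l = 0 := by
  intro k l hf hft hf1 hft1 hfl hftl
  have ha' : (a : ℂ) ≠ 0 := by exact_mod_cast ha
  have hb' : (b : ℂ) ≠ 0 := by exact_mod_cast hb
  constructor
  · rw [hu, hu, hv, hvt]
    have h1 := bil1 k l
    have h2 := bil2 k l
    field_simp at h1 h2 ⊢
    linear_combination (ft (k+1) l) * h1
      + (g (k+1) l) * h2
  · rw [hv, hv, hu, hut]
    have h3 := bil3 k l
    have h4 := bil4 k l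
    field_simp at h3 h4 ⊢
    linear_combination (f k (l+1)) * h3
      - (h k (l+1)) * h4
end

section
/- Let p₁, α₁, ξ₁₀ ∈ ℂ with p₁ ≠ 0 and p₁ + conj(p₁) ≠ 0, and let a ∈ ℝ, a ≠ 0, with 1 − a·p₁ ≠ 0 and 1 + a·conj(p₁) ≠ 0. Set ξ₁(t) = −t/p₁ + ξ₁₀ and ξ₁*(t) = −t/conj(p₁) + conj(ξ₁₀), and define for k ∈ ℤ, t ∈ ℝ: f_k(t) = 1 + (i·p₁·α₁·conj(α₁)/(p₁+conj(p₁))²)·((1−a·p₁)/(1+a·conj(p₁)))^{−k}·exp(ξ₁(t)+ξ₁*(t)); f̃_k(t) = 1 − (i·conj(p₁)·α₁·conj(α₁)/(p₁+conj(p₁))²)·((1−a·p₁)/(1+a·conj(p₁)))^{−k}·exp(ξ₁(t)+ξ₁*(t)); g_k(t) = (i·conj(α₁)/p₁)·(1−a·p₁)^{−k}·exp(ξ₁(t)); g̃_k(t) = −(i·α₁/conj(p₁))·(1+a·conj(p₁))^{k}·exp(ξ₁*(t)); h_k(t) = conj(α₁)·(1−a·p₁)^{−k}·exp(ξ₁(t));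 h̃_k(t) = α₁·(1+a·conj(p₁))^{k}·exp(ξ₁*(t)). Then for all k ∈ ℤ and t ∈ ℝ the semi-discrete bilinear system holds: (i/a)(g_{k+1} f_k − g_k f_{k+1}) + h_{k+1} f̃_k = 0; (i/a)(f_{k+1} f̃_k − f_k f̃_{k+1}) + h_{k+1} h̃_k = 0; i(h_k'(t) f̃_k(t) − h_k(t) f̃_k'(t)) + g_k(t) f_k(t) = 0; i(f_k'(t) f̃_k(t) − f_k(t) f̃_k'(t)) = g_k(t) g̃_k(t), where ' denotes d/dt. -/
open Complex

set_option maxHeartbeats 1600000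


/-- The one-soliton tau functions satisfy the semi-discrete bilinear system of the
massive Thirring model. -/
theorem semi_discrete_MT_one_soliton_bilinear
    (p₁ α₁ ξ₁₀ : ℂ) (hp : p₁ ≠ 0) (hps : p₁ + starRingEnd ℂ p₁ ≠ 0)
    (a : ℝ) (ha : a ≠ 0)
    (h1 : 1 - (a : ℂ) * p₁ ≠ 0) (h2 : 1 + (a : ℂ) * starRingEnd ℂ p₁ ≠ 0)
    (ξ ξs : ℝ → ℂ)
    (hξ : ∀ t : ℝ, ξ t = -(t : ℂ) / p₁ + ξ₁₀)
    (hξs : ∀ t : ℝ, ξs t = -(t : ℂ) / starRingEnd ℂ p₁ + starRingEnd ℂ ξ₁₀)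
    (f ft g gt h ht : ℤ → ℝ → ℂ)
    (hf : ∀ (k : ℤ) (t : ℝ), f k t =
      1 + (Complex.I * p₁ * α₁ * starRingEnd ℂ α₁ / (p₁ + starRingEnd ℂ p₁) ^ 2) *
        ((1 - (a : ℂ) * p₁) / (1 + (a : ℂ) * starRingEnd ℂ p₁)) ^ (-k) *
        Complex.exp (ξ t + ξs t))
    (hft : ∀ (k : ℤ) (t : ℝ), ft k t =
      1 - (Complex.I * starRingEnd ℂ p₁ * α₁ * starRingEnd ℂ α₁ /
          (p₁ + starRingEnd ℂ p₁) ^ 2) *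
        ((1 - (a : ℂ) * p₁) / (1 + (a : ℂ) * starRingEnd ℂ p₁)) ^ (-k) *
        Complex.exp (ξ t + ξs t))
    (hg : ∀ (k : ℤ) (t : ℝ), g k t =
      (Complex.I * starRingEnd ℂ α₁ / p₁) * (1 - (a : ℂ) * p₁) ^ (-k) * Complex.exp (ξ t))
    (hgt : ∀ (k : ℤ) (t : ℝ), gt k t =
      -(Complex.I * α₁ / starRingEnd ℂ p₁) * (1 + (a : ℂ) * starRingEnd ℂ p₁) ^ k *
        Complex.exp (ξs t))
    (hh : ∀ (k : ℤ) (t : ℝ), h k t =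
      starRingEnd ℂ α₁ * (1 - (a : ℂ) * p₁) ^ (-k) * Complex.exp (ξ t))
    (hht : ∀ (k : ℤ) (t : ℝ), ht k t =
      α₁ * (1 + (a : ℂ) * starRingEnd ℂ p₁) ^ k * Complex.exp (ξs t))
    :
    ∀ (k : ℤ) (t : ℝ),
      (Complex.I / (a : ℂ)) * (g (k + 1) t * f k t - g k t * f (k + 1) t)
        + h (k + 1) t * ft k t = 0 ∧
      (Complex.I / (a : ℂ)) * (f (k + 1) t * ft k t - f k t * ft (k + 1) t)
        + h (k + 1) t * ht k t = 0 ∧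
      Complex.I * (deriv (h k) t * ft k t - h k t * deriv (ft k) t) + g k t * f k t = 0 ∧
      Complex.I * (deriv (f k) t * ft k t - f k t * deriv (ft k) t) = g k t * gt k t := by
  have hQ : starRingEnd ℂ p₁ ≠ 0 := by simpa using hp
  have haC : (a : ℂ) ≠ 0 := Complex.ofReal_ne_zero.mpr ha
  intro k t
  have base : ∀ (c d : ℂ), HasDerivAt (fun s : ℝ => -(s : ℂ) / c + d) (-1 / c) t := by
    intro c d
    have h0 : HasDerivAt (fun s : ℝ => (s : ℂ)) 1 t := by
      simpa using (hasDerivAt_id t).ofReal_comp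
    simpa using ((h0.neg).div_const c).add_const d
  have dξ : HasDerivAt ξ (-1 / p₁) t := by
    have hξe : ξ = fun s : ℝ => -(s : ℂ) / p₁ + ξ₁₀ := funext hξ
    rw [hξe]; exact base p₁ ξ₁₀
  have dξs : HasDerivAt ξs (-1 / starRingEnd ℂ p₁) t := by
    have hξse : ξs = fun s : ℝ => -(s : ℂ) / starRingEnd ℂ p₁ + starRingEnd ℂ ξ₁₀ :=
      funext hξs
    rw [hξse]; exact base (starRingEnd ℂ p₁) (starRingEnd ℂ ξ₁₀)
  have dE : HasDerivAt (fun s : ℝ => Complex.exp (ξ s))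
      (Complex.exp (ξ t) * (-1 / p₁)) t := dξ.cexp
  have dEE : HasDerivAt (fun s : ℝ => Complex.exp (ξ s + ξs s))
      (Complex.exp (ξ t + ξs t) * (-1 / p₁ + -1 / starRingEnd ℂ p₁)) t :=
    (dξ.add dξs).cexp
  have dh : deriv (h k) t = starRingEnd ℂ α₁ * (1 - (a : ℂ) * p₁) ^ (-k) *
      (Complex.exp (ξ t) * (-1 / p₁)) := by
    rw [show h k = fun s : ℝ => starRingEnd ℂ α₁ * (1 - (a : ℂ) * p₁) ^ (-k) *
      Complex.exp (ξ s) from funext (hh k)]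
    exact (dE.const_mul _).deriv
  have dft : deriv (ft k) t = -((Complex.I * starRingEnd ℂ p₁ * α₁ * starRingEnd ℂ α₁ /
      (p₁ + starRingEnd ℂ p₁) ^ 2) *
      ((1 - (a : ℂ) * p₁) / (1 + (a : ℂ) * starRingEnd ℂ p₁)) ^ (-k) *
      (Complex.exp (ξ t + ξs t) * (-1 / p₁ + -1 / starRingEnd ℂ p₁))) := by
    rw [show ft k = fun s : ℝ =>
      1 - (Complex.I * starRingEnd ℂ p₁ * α₁ * starRingEnd ℂ α₁ /
          (p₁ + starRingEnd ℂ p₁) ^ 2) *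
        ((1 - (a : ℂ) * p₁) / (1 + (a : ℂ) * starRingEnd ℂ p₁)) ^ (-k) *
        Complex.exp (ξ s + ξs s) from funext (hft k)]
    have hd := (dEE.const_mul ((Complex.I * starRingEnd ℂ p₁ * α₁ * starRingEnd ℂ α₁ /
          (p₁ + starRingEnd ℂ p₁) ^ 2) *
        ((1 - (a : ℂ) * p₁) / (1 + (a : ℂ) * starRingEnd ℂ p₁)) ^ (-k))).const_sub 1
    rw [hd.deriv]
  have df : deriv (f k) t = (Complex.I * p₁ * α₁ * starRingEnd ℂ α₁ /
      (p₁ + starRingEnd ℂ p₁) ^ 2) *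
      ((1 - (a : ℂ) * p₁) / (1 + (a : ℂ) * starRingEnd ℂ p₁)) ^ (-k) *
      (Complex.exp (ξ t + ξs t) * (-1 / p₁ + -1 / starRingEnd ℂ p₁)) := by
    rw [show f k = fun s : ℝ =>
      1 + (Complex.I * p₁ * α₁ * starRingEnd ℂ α₁ / (p₁ + starRingEnd ℂ p₁) ^ 2) *
        ((1 - (a : ℂ) * p₁) / (1 + (a : ℂ) * starRingEnd ℂ p₁)) ^ (-k) *
        Complex.exp (ξ s + ξs s) from funext (hf k)]
    have hd := (dEE.const_mul ((Complex.I * p₁ * α₁ * starRingEnd ℂ α₁ /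
          (p₁ + starRingEnd ℂ p₁) ^ 2) *
        ((1 - (a : ℂ) * p₁) / (1 + (a : ℂ) * starRingEnd ℂ p₁)) ^ (-k))).const_add 1
    rw [hd.deriv]
  have e3 : (1 - (a : ℂ) * p₁) ^ (-(k + 1)) =
      (1 - (a : ℂ) * p₁) ^ (-k) * (1 - (a : ℂ) * p₁)⁻¹ := by
    rw [show -(k + 1) = -k + (-1) by ring, zpow_add₀ h1, zpow_neg_one]
  have e2 : ((1 - (a : ℂ) * p₁) / (1 + (a : ℂ) * starRingEnd ℂ p₁)) ^ (-(k + 1)) =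
      (1 - (a : ℂ) * p₁) ^ (-k) * (1 + (a : ℂ) * starRingEnd ℂ p₁) ^ k *
        ((1 - (a : ℂ) * p₁)⁻¹ * (1 + (a : ℂ) * starRingEnd ℂ p₁)) := by
    rw [div_zpow, div_eq_mul_inv, ← zpow_neg, neg_neg, e3, zpow_add_one₀ h2]; ring
  have e1 : ((1 - (a : ℂ) * p₁) / (1 + (a : ℂ) * starRingEnd ℂ p₁)) ^ (-k) =
      (1 - (a : ℂ) * p₁) ^ (-k) * (1 + (a : ℂ) * starRingEnd ℂ p₁) ^ k := by
    rw [div_zpow, div_eq_mul_inv, ← zpow_neg, neg_neg]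
  have eE : Complex.exp (ξ t + ξs t) = Complex.exp (ξ t) * Complex.exp (ξs t) :=
    Complex.exp_add _ _
  have hI := Complex.I_sq
  refine ⟨?_, ?_, ?_, ?_⟩
  · rw [hg (k+1) t, hg k t, hf k t, hf (k+1) t, hh (k+1) t, hft k t, eE, e2, e1, e3]
    generalize (1 - (a : ℂ) * p₁) ^ (-k) = u
    generalize (1 + (a : ℂ) * starRingEnd ℂ p₁) ^ k = v
    have hne : ∀ x y : ℂ, x ≠ 0 → y ≠ 0 → x * y ≠ 0 := fun _ _ => mul_ne_zero
    have hW : (p₁ + starRingEnd ℂ p₁) ^ 2 ≠ 0 := pow_ne_zero _ hps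
    have hD : (a:ℂ) * (p₁ * (1 - (a:ℂ) * p₁) * (p₁ + starRingEnd ℂ p₁) ^ 2 * (p₁ * ((p₁ + starRingEnd ℂ p₁) ^ 2 * (1 - (a:ℂ) * p₁)))) ≠ 0 :=
      hne _ _ haC (hne _ _ (hne _ _ (hne _ _ hp h1) hW) (hne _ _ hp (hne _ _ hW h1)))
    field_simp
    ring_nf
    simp only [hI, Complex.I_pow_three]
    ring_nf
  · rw [hf (k+1) t, hf k t, hft k t, hft (k+1) t, hh (k+1) t, hht k t, eE, e2, e1, e3]
    generalize (1 - (a : ℂ) * p₁) ^ (-k) = u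
    generalize (1 + (a : ℂ) * starRingEnd ℂ p₁) ^ k = v
    have hne : ∀ x y : ℂ, x ≠ 0 → y ≠ 0 → x * y ≠ 0 := fun _ _ => mul_ne_zero
    have hW : (p₁ + starRingEnd ℂ p₁) ^ 2 ≠ 0 := pow_ne_zero _ hps
    have hD : (a:ℂ) * ((p₁ + starRingEnd ℂ p₁) ^ 2 * (1 - (a:ℂ) * p₁) * (p₁ + starRingEnd ℂ p₁) ^ 2 * ((p₁ + starRingEnd ℂ p₁) ^ 2 * ((p₁ + starRingEnd ℂ p₁) ^ 2 * (1 - (a:ℂ) * p₁)))) ≠ 0 :=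
      hne _ _ haC (hne _ _ (hne _ _ (hne _ _ hW h1) hW) (hne _ _ hW (hne _ _ hW h1)))
    field_simp
    ring_nf
    simp only [hI, Complex.I_pow_three]
    ring_nf
  · rw [dh, dft, hh k t, hft k t, hg k t, hf k t, eE, e1]
    generalize (1 - (a : ℂ) * p₁) ^ (-k) = u
    generalize (1 + (a : ℂ) * starRingEnd ℂ p₁) ^ k = v
    field_simp
    ring
  · rw [df, dft, hf k t, hft k t, hg k t, hgt k t, eE, e1]
    generalize (1 - (a : ℂ) * p₁) ^ (-k) = u
    generalize (1 + (a : ℂ) * starRingEnd ℂ p₁) ^ k = v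
    have hne : ∀ x y : ℂ, x ≠ 0 → y ≠ 0 → x * y ≠ 0 := fun _ _ => mul_ne_zero
    have hW : (p₁ + starRingEnd ℂ p₁) ^ 2 ≠ 0 := pow_ne_zero _ hps
    have hD : (p₁ + starRingEnd ℂ p₁) ^ 2 * (p₁ * starRingEnd ℂ p₁) * (p₁ + starRingEnd ℂ p₁) ^ 2 * ((p₁ + starRingEnd ℂ p₁) ^ 2 * ((p₁ + starRingEnd ℂ p₁) ^ 2 * (p₁ * starRingEnd ℂ p₁))) ≠ 0 :=
      hne _ _ (hne _ _ (hne _ _ hW (hne _ _ hp hQ)) hW) (hne _ _ hW (hne _ _ hW (hne _ _ hp hQ)))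
    field_simp
    ring
end

section
/- Let p₁ ∈ ℂ with p₁ ≠ 0 and p₁ + conj(p₁) ≠ 0, and let a, b ∈ ℝ be nonzero with 1 − a·p₁ ≠ 0, 1 + a·conj(p₁) ≠ 0, 1 + b/p₁ ≠ 0, 1 − b/conj(p₁) ≠ 0. For k, l ∈ ℤ define E(k,l) = ((1−a·p₁)/(1+a·conj(p₁)))^{−k}·((1+b/p₁)/(1−b/conj(p₁)))^{−l} and set f^l_k = 1 + (i·p₁/(p₁+conj(p₁))²)·E(k,l); f̃^l_k = 1 − (i·conj(p₁)/(p₁+conj(p₁))²)·E(k,l); g^l_k = (i/p₁)·(1−a·p₁)^{−k}·(1+b/p₁)^{−l}; g̃^l_k = −(i/conj(p₁))·(1+a·conj(p₁))^{k}·(1−b/conj(p₁))^{l}; h^l_k = (1−a·p₁)^{−k}·(1+b/p₁)^{−l}; h̃^l_k = (1+a·conj(p₁))^{k}·(1−b/conj(p₁))^{l}. Then for all k, l ∈ ℤ the fully discrete bilinear system holds: (i/a)(g^l_{k+1} f^l_k − g^l_k f^l_{k+1}) + h^l_{k+1} f̃^l_k = 0; (i/a)(f^l_{k+1} f̃^l_k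 − f^l_k f̃^l_{k+1}) + h^l_{k+1} h̃^l_k = 0; (i/b)(h^{l+1}_k f̃^l_k − h^l_k f̃^{l+1}_k) + g^{l+1}_k f^l_k = 0; (i/b)(f^{l+1}_k f̃^l_k − f^l_k f̃^{l+1}_k) = g^{l+1}_k g̃^l_k. -/
set_option maxHeartbeats 2000000


/-- The one-soliton tau functions satisfy the fully discrete bilinear system of the
massive Thirring model. -/
theorem fully_discrete_MT_one_soliton_bilinear
    (p₁ : ℂ) (hp : p₁ ≠ 0) (hps : p₁ + starRingEnd ℂ p₁ ≠ 0)
    (a b : ℝ) (ha : a ≠ 0) (hb : b ≠ 0)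
    (h1 : 1 - (a : ℂ) * p₁ ≠ 0) (h2 : 1 + (a : ℂ) * starRingEnd ℂ p₁ ≠ 0)
    (h3 : 1 + (b : ℂ) / p₁ ≠ 0) (h4 : 1 - (b : ℂ) / starRingEnd ℂ p₁ ≠ 0)
    (E : ℤ → ℤ → ℂ)
    (hE : ∀ k l : ℤ, E k l =
      ((1 - (a : ℂ) * p₁) / (1 + (a : ℂ) * starRingEnd ℂ p₁)) ^ (-k) *
      ((1 + (b : ℂ) / p₁) / (1 - (b : ℂ) / starRingEnd ℂ p₁)) ^ (-l))
    (f ft g gt h ht : ℤ → ℤ → ℂ)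
    (hf : ∀ k l : ℤ, f k l =
      1 + (Complex.I * p₁ / (p₁ + starRingEnd ℂ p₁) ^ 2) * E k l)
    (hft : ∀ k l : ℤ, ft k l =
      1 - (Complex.I * starRingEnd ℂ p₁ / (p₁ + starRingEnd ℂ p₁) ^ 2) * E k l)
    (hg : ∀ k l : ℤ, g k l =
      (Complex.I / p₁) * (1 - (a : ℂ) * p₁) ^ (-k) * (1 + (b : ℂ) / p₁) ^ (-l))
    (hgt : ∀ k l : ℤ, gt k l =
      -(Complex.I / starRingEnd ℂ p₁) * (1 + (a : ℂ) * starRingEnd ℂ p₁) ^ k *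
        (1 - (b : ℂ) / starRingEnd ℂ p₁) ^ l)
    (hh : ∀ k l : ℤ, h k l =
      (1 - (a : ℂ) * p₁) ^ (-k) * (1 + (b : ℂ) / p₁) ^ (-l))
    (hht : ∀ k l : ℤ, ht k l =
      (1 + (a : ℂ) * starRingEnd ℂ p₁) ^ k * (1 - (b : ℂ) / starRingEnd ℂ p₁) ^ l)
    :
    ∀ k l : ℤ,
      (Complex.I / (a : ℂ)) * (g (k + 1) l * f k l - g k l * f (k + 1) l)
        + h (k + 1) l * ft k l = 0 ∧
      (Complex.I / (a : ℂ)) * (f (k + 1) l * ft k l - f k l * ft (k + 1) l)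
        + h (k + 1) l * ht k l = 0 ∧
      (Complex.I / (b : ℂ)) * (h k (l + 1) * ft k l - h k l * ft k (l + 1))
        + g k (l + 1) * f k l = 0 ∧
      (Complex.I / (b : ℂ)) * (f k (l + 1) * ft k l - f k l * ft k (l + 1))
        = g k (l + 1) * gt k l := by

  intro k l
  set q : ℂ := starRingEnd ℂ p₁ with hqdef
  have hq : q ≠ 0 := by
    rw [hqdef]; exact (map_ne_zero (starRingEnd ℂ)).mpr hp
  have haC : (a : ℂ) ≠ 0 := Complex.ofReal_ne_zero.mpr ha
  have hbC : (b : ℂ) ≠ 0 := Complex.ofReal_ne_zero.mpr hb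
  set A : ℂ := 1 - (a : ℂ) * p₁ with hAdef
  set B : ℂ := 1 + (a : ℂ) * q with hBdef
  set C : ℂ := 1 + (b : ℂ) / p₁ with hCdef
  set D : ℂ := 1 - (b : ℂ) / q with hDdef
  set s : ℂ := p₁ + q with hsdef
  have hXY : ∀ m : ℤ, (A / B) ^ (-m) = A ^ (-m) * B ^ m := by
    intro m
    rw [div_zpow, zpow_neg B, div_eq_mul_inv, inv_inv]
  have hZW : ∀ m : ℤ, (C / D) ^ (-m) = C ^ (-m) * D ^ m := by
    intro m
    rw [div_zpow, zpow_neg D, div_eq_mul_inv, inv_inv]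
  have hA1 : A ^ (-(k + 1)) = A ^ (-k) * A⁻¹ := by
    rw [neg_add, zpow_add₀ h1, zpow_neg_one]
  have hB1 : B ^ (k + 1) = B ^ k * B := zpow_add_one₀ h2 k
  have hC1 : C ^ (-(l + 1)) = C ^ (-l) * C⁻¹ := by
    rw [neg_add, zpow_add₀ h3, zpow_neg_one]
  have hD1 : D ^ (l + 1) = D ^ l * D := zpow_add_one₀ h4 l
  have hX : A ^ (-k) ≠ 0 := zpow_ne_zero _ h1
  have hY : B ^ k ≠ 0 := zpow_ne_zero _ h2
  have hZ : C ^ (-l) ≠ 0 := zpow_ne_zero _ h3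
  have hW : D ^ l ≠ 0 := zpow_ne_zero _ h4
  set X := A ^ (-k) with hXdef
  set Y := B ^ k with hYdef
  set Z := C ^ (-l) with hZdef
  set W := D ^ l with hWdef
  simp only [hE, hf, hft, hg, hgt, hh, hht, hXY, hZW, hA1, hB1, hC1, hD1,
    ← hXdef, ← hYdef, ← hZdef, ← hWdef]
  clear_value X Y Z W
  clear hXdef hYdef hZdef hWdef hXY hZW
  clear hE hf hft hg hgt hh hht
  clear_value A B C D s
  have hj2 : Complex.I ^ 2 = -1 := Complex.I_sq
  have hj3 : Complex.I ^ 3 = -Complex.I := by rw [pow_succ, hj2]; ring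
  have hj4 : Complex.I ^ 4 = 1 := by rw [pow_succ, hj3]; simp [Complex.I_mul_I]
  have h1' : (1 : ℂ) - (a : ℂ) * p₁ ≠ 0 := by rw [← hAdef]; exact h1
  have h2' : (1 : ℂ) + (a : ℂ) * q ≠ 0 := by rw [← hBdef]; exact h2
  have h3' : (1 : ℂ) + (b : ℂ) / p₁ ≠ 0 := by rw [← hCdef]; exact h3
  have h4' : (1 : ℂ) - (b : ℂ) / q ≠ 0 := by rw [← hDdef]; exact h4
  have hs' : p₁ + q ≠ 0 := by rw [← hsdef]; exact hps
  refine ⟨?_, ?_, ?_, ?_⟩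
  · try rw [add_eq_zero_iff_eq_neg]
    field_simp
    try rw [div_eq_iff (by simp [haC, hbC, hp, hq, h1, h2, h3, h4, hps])]
    try rw [eq_div_iff (by simp [haC, hbC, hp, hq, h1, h2, h3, h4, hps])]
    simp only [hAdef, hBdef, hCdef, hDdef, hsdef]
    try field_simp
    ring_nf
    try simp only [hj2, hj3, hj4]
    try ring
  · try rw [add_eq_zero_iff_eq_neg]
    field_simp
    try rw [div_eq_iff (by simp [haC, hbC, hp, hq, h1, h2, h3, h4, hps])]
    try rw [eq_div_iff (by simp [haC, hbC, hp, hq, h1, h2, h3, h4, hps])]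
    simp only [hAdef, hBdef, hCdef, hDdef, hsdef]
    try field_simp
    ring_nf
    try simp only [hj2, hj3, hj4]
    try ring
  · try rw [add_eq_zero_iff_eq_neg]
    field_simp
    try rw [div_eq_iff (by simp [haC, hbC, hp, hq, h1, h2, h3, h4, hps])]
    try rw [eq_div_iff (by simp [haC, hbC, hp, hq, h1, h2, h3, h4, hps])]
    simp only [hAdef, hBdef, hCdef, hDdef, hsdef]
    try field_simp
    ring_nf
    try simp only [hj2, hj3, hj4]
    try ring
  · try rw [add_eq_zero_iff_eq_neg]
    field_simp
    try rw [div_eq_iff (by simp [haC, hbC, hp, hq, h1, h2, h3, h4, hps])]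
    try rw [eq_div_iff (by simp [haC, hbC, hp, hq, h1, h2, h3, h4, hps])]
    simp only [hAdef, hBdef, hCdef, hDdef, hsdef]
    try field_simp
    ring_nf
    try simp only [hj2, hj3, hj4]
    try ring
end

section
/- Let p₁ ∈ ℂ with p₁ ≠ 0 and p₁ + conj(p₁) ≠ 0, and let a, b ∈ ℝ be nonzero with 1 − a·p₁ ≠ 0, 1 + a·conj(p₁) ≠ 0, 1 + b/p₁ ≠ 0, 1 − b/conj(p₁) ≠ 0. With E(k,l) = ((1−a·p₁)/(1+a·conj(p₁)))^{−k}·((1+b/p₁)/(1−b/conj(p₁)))^{−l}, define f^l_k = 1 + (i·p₁/(p₁+conj(p₁))²)·E(k,l), f̃^l_k = 1 − (i·conj(p₁)/(p₁+conj(p₁))²)·E(k,l), g^l_k = (i/p₁)·(1−a·p₁)^{−k}·(1+b/p₁)^{−l}, g̃^l_k = −(i/conj(p₁))·(1+a·conj(p₁))^{k}·(1−b/conj(p₁))^{l}, h^l_k = (1−a·p₁)^{−k}·(1+b/p₁)^{−l}, h̃^l_k = (1+a·conj(p₁))^{k}·(1−b/conj(p₁))^{l}, and put u^l_k = g^l_k/f̃^l_k,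 v^l_k = h^l_k/f^l_k, ũ^l_k = g̃^l_k/f^l_k, ṽ^l_k = h̃^l_k/f̃^l_k. Then for all k, l ∈ ℤ at which f^l_k, f̃^l_k, f^l_{k+1}, f̃^l_{k+1}, f^{l+1}_k, f̃^{l+1}_k are all nonzero: (i/a)(u^l_{k+1} − u^l_k) + v^l_{k+1} + u^l_{k+1} v^l_{k+1} ṽ^l_k = 0 and (i/b)(v^{l+1}_k − v^l_k) + u^{l+1}_k + v^{l+1}_k u^{l+1}_k ũ^l_k = 0. -/
private lemma zhelp_div (x y : ℂ) (n : ℤ) : (x / y) ^ (-n) = x ^ (-n) * y ^ n := by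
  simp only [zpow_neg, div_zpow, inv_div]
  rw [div_eq_mul_inv, mul_comm]

private lemma zhelp_neg (w : ℂ) (hw : w ≠ 0) (n : ℤ) : w ^ (-(n + 1)) = w ^ (-n) * w⁻¹ := by
  rw [neg_add, zpow_add₀ hw, zpow_neg_one]

private lemma zhelp_pos (w : ℂ) (hw : w ≠ 0) (n : ℤ) : w ^ (n + 1) = w ^ n * w :=
  zpow_add_one₀ hw n

private lemma key1 (p q a X Y Z α β F' FT FT' : ℂ)
    (hp : p ≠ 0) (ha : a ≠ 0)
    (hαe : α = 1 - a * p) (hβe : β = 1 + a * q) (hα : α ≠ 0)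
    (hZ : Complex.I * (X * Y) = (p + q) ^ 2 * Z)
    (hF'e : F' = 1 + p * (Z * (β / α)))
    (hFTe : FT = 1 - q * Z)
    (hFT'e : FT' = 1 - q * (Z * (β / α)))
    (hF'0 : F' ≠ 0) (hFT0 : FT ≠ 0) (hFT'0 : FT' ≠ 0) :
    Complex.I / a * ((Complex.I / p * (X / α)) / FT' - (Complex.I / p * X) / FT)
      + (X / α) / F'
      + (Complex.I / p * (X / α)) / FT' * ((X / α) / F') * (Y / FT) = 0 := by
  have hI : Complex.I * Complex.I = -1 := Complex.I_mul_I
  obtain ⟨P', hP'e⟩ : ∃ P', P' = α + p * (Z * β) := ⟨_, rfl⟩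
  obtain ⟨Q', hQ'e⟩ : ∃ Q', Q' = α - q * (Z * β) := ⟨_, rfl⟩
  have hF'q : F' = P' / α := by rw [hF'e, hP'e]; field_simp
  have hFT'q : FT' = Q' / α := by rw [hFT'e, hQ'e]; field_simp
  have hP'0 : P' ≠ 0 := fun h => hF'0 (by rw [hF'q, h, zero_div])
  have hQ'0 : Q' ≠ 0 := fun h => hFT'0 (by rw [hFT'q, h, zero_div])
  have hpoly : -(P' * FT) + P' * Q' + a * p * (Q' * FT) + a * ((p + q) ^ 2 * Z) = 0 := by
    rw [hP'e, hQ'e, hFTe, hαe, hβe]; ring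
  have hkey : -((1 / (a * p)) * (X / Q' - X / FT)) + X / P'
      + X * ((p + q) ^ 2 * Z) / (p * P' * Q' * FT) = 0 := by
    field_simp
    linear_combination X * hpoly
  have enum : Complex.I / p * (X / α) = (Complex.I / p * X) / α := by ring
  have eA : (X / α) / F' = X / P' := by rw [hF'q, div_div_div_cancel_right₀ hα]
  have eB : (Complex.I / p * (X / α)) / FT' = (Complex.I / p * X) / Q' := by
    rw [enum, hFT'q, div_div_div_cancel_right₀ hα]
  rw [eA, eB]
  have h1 : Complex.I / a * ((Complex.I / p * X) / Q' - (Complex.I / p * X) / FT)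
      = -((1 / (a * p)) * (X / Q' - X / FT)) := by
    linear_combination ((X / Q' - X / FT) / (a * p)) * hI
  have h3 : (Complex.I / p * X) / Q' * (X / P') * (Y / FT)
      = X * ((p + q) ^ 2 * Z) / (p * P' * Q' * FT) := by
    linear_combination (X / (p * P' * Q' * FT)) * hZ
  linear_combination h1 + h3 + hkey

private lemma key2 (p q b X Y Z γ δ F F'' FT'' : ℂ)
    (hp : p ≠ 0) (hq : q ≠ 0) (hb : b ≠ 0)
    (hγe : γ = 1 + b / p) (hδe : δ = 1 - b / q) (hγ : γ ≠ 0)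
    (hZ : Complex.I * (X * Y) = (p + q) ^ 2 * Z)
    (hFe : F = 1 + p * Z)
    (hF''e : F'' = 1 + p * (Z * (δ / γ)))
    (hFT''e : FT'' = 1 - q * (Z * (δ / γ)))
    (hF0 : F ≠ 0) (hF''0 : F'' ≠ 0) (hFT''0 : FT'' ≠ 0) :
    Complex.I / b * ((X / γ) / F'' - X / F)
      + (Complex.I / p * (X / γ)) / FT''
      + (X / γ) / F'' * ((Complex.I / p * (X / γ)) / FT'') * (-(Complex.I / q) * Y / F) = 0 := by
  obtain ⟨P2, hP2e⟩ : ∃ P2, P2 = γ + p * (Z * δ) := ⟨_, rfl⟩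
  obtain ⟨Q2, hQ2e⟩ : ∃ Q2, Q2 = γ - q * (Z * δ) := ⟨_, rfl⟩
  have hF''q : F'' = P2 / γ := by rw [hF''e, hP2e]; field_simp
  have hFT''q : FT'' = Q2 / γ := by rw [hFT''e, hQ2e]; field_simp
  have hP20 : P2 ≠ 0 := fun h => hF''0 (by rw [hF''q, h, zero_div])
  have hQ20 : Q2 ≠ 0 := fun h => hFT''0 (by rw [hFT''q, h, zero_div])
  have hpoly : p * q * (Q2 * F - P2 * Q2) + b * q * (P2 * F) = b * ((p + q) ^ 2 * Z) := by
    rw [hP2e, hQ2e, hFe, hγe, hδe]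
    field_simp
    ring
  have hkey : (1 / b) * (X / P2 - X / F) + (1 / p) * (X / Q2)
      = X * ((p + q) ^ 2 * Z) / (p * q * P2 * Q2 * F) := by
    have hD : p * q * P2 * Q2 * F ≠ 0 := by apply_rules [mul_ne_zero]
    field_simp
    linear_combination X * hpoly
  have enum : Complex.I / p * (X / γ) = (Complex.I / p * X) / γ := by ring
  have eA : (X / γ) / F'' = X / P2 := by rw [hF''q, div_div_div_cancel_right₀ hγ]
  have eB : (Complex.I / p * (X / γ)) / FT'' = (Complex.I / p * X) / Q2 := by
    rw [enum, hFT''q, div_div_div_cancel_right₀ hγ]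
  rw [eA, eB]
  have h3 : X / P2 * ((Complex.I / p * X) / Q2) * (-(Complex.I / q) * Y / F)
      = -(Complex.I * (X * ((p + q) ^ 2 * Z))) / (p * q * P2 * Q2 * F) := by
    linear_combination (-(Complex.I * X) / (p * q * P2 * Q2 * F)) * hZ
  linear_combination h3 + Complex.I * hkey

/-- The one-soliton formulas solve the fully discrete massive Thirring model. -/
theorem fully_discrete_MT_one_soliton
    (p₁ : ℂ) (hp : p₁ ≠ 0) (hps : p₁ + starRingEnd ℂ p₁ ≠ 0)
    (a b : ℝ) (ha : a ≠ 0) (hb : b ≠ 0)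
    (h1 : 1 - (a : ℂ) * p₁ ≠ 0) (h2 : 1 + (a : ℂ) * starRingEnd ℂ p₁ ≠ 0)
    (h3 : 1 + (b : ℂ) / p₁ ≠ 0) (h4 : 1 - (b : ℂ) / starRingEnd ℂ p₁ ≠ 0)
    (E : ℤ → ℤ → ℂ)
    (hE : ∀ k l : ℤ, E k l =
      ((1 - (a : ℂ) * p₁) / (1 + (a : ℂ) * starRingEnd ℂ p₁)) ^ (-k) *
      ((1 + (b : ℂ) / p₁) / (1 - (b : ℂ) / starRingEnd ℂ p₁)) ^ (-l))
    (f ft g gt h ht : ℤ → ℤ → ℂ)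
    (hf : ∀ k l : ℤ, f k l =
      1 + (Complex.I * p₁ / (p₁ + starRingEnd ℂ p₁) ^ 2) * E k l)
    (hft : ∀ k l : ℤ, ft k l =
      1 - (Complex.I * starRingEnd ℂ p₁ / (p₁ + starRingEnd ℂ p₁) ^ 2) * E k l)
    (hg : ∀ k l : ℤ, g k l =
      (Complex.I / p₁) * (1 - (a : ℂ) * p₁) ^ (-k) * (1 + (b : ℂ) / p₁) ^ (-l))
    (hgt : ∀ k l : ℤ, gt k l =
      -(Complex.I / starRingEnd ℂ p₁) * (1 + (a : ℂ) * starRingEnd ℂ p₁) ^ k *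
        (1 - (b : ℂ) / starRingEnd ℂ p₁) ^ l)
    (hh : ∀ k l : ℤ, h k l =
      (1 - (a : ℂ) * p₁) ^ (-k) * (1 + (b : ℂ) / p₁) ^ (-l))
    (hht : ∀ k l : ℤ, ht k l =
      (1 + (a : ℂ) * starRingEnd ℂ p₁) ^ k * (1 - (b : ℂ) / starRingEnd ℂ p₁) ^ l)
    (u v ut vt : ℤ → ℤ → ℂ)
    (hu : ∀ k l, u k l = g k l / ft k l)
    (hv : ∀ k l, v k l = h k l / f k l)
    (hut : ∀ k l, ut k l = gt k l / f k l)
    (hvt : ∀ k l, vt k l = ht k l / ft k l) :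
    ∀ k l : ℤ, f k l ≠ 0 → ft k l ≠ 0 → f (k + 1) l ≠ 0 → ft (k + 1) l ≠ 0 →
      f k (l + 1) ≠ 0 → ft k (l + 1) ≠ 0 →
      (Complex.I / (a : ℂ)) * (u (k + 1) l - u k l) + v (k + 1) l
        + u (k + 1) l * v (k + 1) l * vt k l = 0 ∧
      (Complex.I / (b : ℂ)) * (v k (l + 1) - v k l) + u k (l + 1)
        + v k (l + 1) * u k (l + 1) * ut k l = 0 := by
  intro k l hf0 hft0 hf10 hft10 hfl0 hftl0
  have ha' : (a : ℂ) ≠ 0 := Complex.ofReal_ne_zero.mpr ha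
  have hb' : (b : ℂ) ≠ 0 := Complex.ofReal_ne_zero.mpr hb
  have hq : starRingEnd ℂ p₁ ≠ 0 := fun hzz => hp (by simpa using congrArg (starRingEnd ℂ) hzz)
  obtain ⟨Zx, hZxe⟩ : ∃ z, z = Complex.I *
      ((1 - (a : ℂ) * p₁) ^ (-k) * (1 + (b : ℂ) / p₁) ^ (-l) *
        ((1 + (a : ℂ) * starRingEnd ℂ p₁) ^ k * (1 - (b : ℂ) / starRingEnd ℂ p₁) ^ l))
      / (p₁ + starRingEnd ℂ p₁) ^ 2 := ⟨_, rfl⟩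
  have hZx : Complex.I *
      ((1 - (a : ℂ) * p₁) ^ (-k) * (1 + (b : ℂ) / p₁) ^ (-l) *
        ((1 + (a : ℂ) * starRingEnd ℂ p₁) ^ k * (1 - (b : ℂ) / starRingEnd ℂ p₁) ^ l))
      = (p₁ + starRingEnd ℂ p₁) ^ 2 * Zx := by
    rw [hZxe, mul_comm ((p₁ + starRingEnd ℂ p₁) ^ 2),
      div_mul_cancel₀ _ (pow_ne_zero 2 hps)]
  have hEkl : E k l = (1 - (a : ℂ) * p₁) ^ (-k) * (1 + (b : ℂ) / p₁) ^ (-l) *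
      ((1 + (a : ℂ) * starRingEnd ℂ p₁) ^ k * (1 - (b : ℂ) / starRingEnd ℂ p₁) ^ l) := by
    rw [hE, zhelp_div, zhelp_div]; ring
  have hEk1 : E (k + 1) l = (1 - (a : ℂ) * p₁) ^ (-k) * (1 + (b : ℂ) / p₁) ^ (-l) *
      ((1 + (a : ℂ) * starRingEnd ℂ p₁) ^ k * (1 - (b : ℂ) / starRingEnd ℂ p₁) ^ l) *
      ((1 + (a : ℂ) * starRingEnd ℂ p₁) / (1 - (a : ℂ) * p₁)) := by
    rw [hE, zhelp_div, zhelp_div, zhelp_neg _ h1 k, zhelp_pos _ h2 k]; ring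
  have hEl1 : E k (l + 1) = (1 - (a : ℂ) * p₁) ^ (-k) * (1 + (b : ℂ) / p₁) ^ (-l) *
      ((1 + (a : ℂ) * starRingEnd ℂ p₁) ^ k * (1 - (b : ℂ) / starRingEnd ℂ p₁) ^ l) *
      ((1 - (b : ℂ) / starRingEnd ℂ p₁) / (1 + (b : ℂ) / p₁)) := by
    rw [hE, zhelp_div, zhelp_div, zhelp_neg _ h3 l, zhelp_pos _ h4 l]; ring
  have hfv : f k l = 1 + p₁ * Zx := by rw [hf, hEkl, hZxe]; ring
  have hftv : ft k l = 1 - starRingEnd ℂ p₁ * Zx := by rw [hft, hEkl, hZxe]; ring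
  have hfv1 : f (k + 1) l = 1 + p₁ * (Zx *
      ((1 + (a : ℂ) * starRingEnd ℂ p₁) / (1 - (a : ℂ) * p₁))) := by
    rw [hf, hEk1, hZxe]; ring
  have hftv1 : ft (k + 1) l = 1 - starRingEnd ℂ p₁ * (Zx *
      ((1 + (a : ℂ) * starRingEnd ℂ p₁) / (1 - (a : ℂ) * p₁))) := by
    rw [hft, hEk1, hZxe]; ring
  have hfvl : f k (l + 1) = 1 + p₁ * (Zx *
      ((1 - (b : ℂ) / starRingEnd ℂ p₁) / (1 + (b : ℂ) / p₁))) := by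
    rw [hf, hEl1, hZxe]; ring
  have hftvl : ft k (l + 1) = 1 - starRingEnd ℂ p₁ * (Zx *
      ((1 - (b : ℂ) / starRingEnd ℂ p₁) / (1 + (b : ℂ) / p₁))) := by
    rw [hft, hEl1, hZxe]; ring
  refine ⟨?_, ?_⟩
  · simp only [hu, hv, hvt, hg, hh, hht]
    rw [zhelp_neg _ h1 k]
    linear_combination key1 p₁ (starRingEnd ℂ p₁) (a : ℂ)
      ((1 - (a : ℂ) * p₁) ^ (-k) * (1 + (b : ℂ) / p₁) ^ (-l))
      ((1 + (a : ℂ) * starRingEnd ℂ p₁) ^ k * (1 - (b : ℂ) / starRingEnd ℂ p₁) ^ l)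
      Zx (1 - (a : ℂ) * p₁) (1 + (a : ℂ) * starRingEnd ℂ p₁)
      (f (k + 1) l) (ft k l) (ft (k + 1) l)
      hp ha' rfl rfl h1 hZx hfv1 hftv hftv1 hf10 hft0 hft10
  · simp only [hu, hv, hut, hg, hh, hgt]
    rw [zhelp_neg _ h3 l]
    linear_combination key2 p₁ (starRingEnd ℂ p₁) (b : ℂ)
      ((1 - (a : ℂ) * p₁) ^ (-k) * (1 + (b : ℂ) / p₁) ^ (-l))
      ((1 + (a : ℂ) * starRingEnd ℂ p₁) ^ k * (1 - (b : ℂ) / starRingEnd ℂ p₁) ^ l)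
      Zx (1 + (b : ℂ) / p₁) (1 - (b : ℂ) / starRingEnd ℂ p₁)
      (f k l) (f k (l + 1)) (ft k (l + 1))
      hp hq hb' rfl rfl h3 hZx hfv hfvl hftvl hf0 hfl0 hftl0
end

section
/- Let N ≥ 1, let p_1,…,p_N ∈ ℂ be nonzero with p_i + conj(p_j) ≠ 0 for all i,j, let μ, ν, ξ_{i0}, ξ̄_{j0}, η_{i0}, η̄_{j0} ∈ ℂ, let a ∈ ℝ, a ≠ 0, with 1 − a·p_i ≠ 0 and 1 + a·conj(p_i) ≠ 0 for all i, and let x₋₁, y₋₁ ∈ ℝ. Set ξ_i = x₋₁/p_i + ξ_{i0}, ξ̄_j = x₋₁/conj(p_j) + ξ̄_{j0}, η_i = y₋₁/conj(p_i) + η_{i0}, η̄_j = y₋₁/p_j + η̄_{j0}. For n, k₁, m, k₂ ∈ ℤ define the N×N matrices A(n,k₁) with (i,j) entry (μ·conj(p_j)/(p_i+conj(p_j)))·(−p_i/conj(p_j))^n·((1−a·p_i)/(1+a·conj(p_j)))^{−k₁}·exp(ξ_i+ξ̄_j) and B(m,k₂) with (i,j) entry (ν/(conj(p_i)+p_j))·(−conj(p_i)/p_j)^m·((1+a·conj(p_i))/(1−a·p_j))^{−k₂}·exp(η_i+η̄_j),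 and set f^{m,k₂}_{n,k₁} = det[[A(n,k₁), I],[−I, B(m,k₂)]]. Then for all n, k₁, m, k₂ ∈ ℤ: f^{m+1,k₂}_{n+1,k₁} = f^{m,k₂}_{n,k₁}. -/
open Matrix

/-- Determinant of the 2N×2N block matrix `[[A, I], [−I, B]]`. -/
noncomputable def blockDet {N : ℕ} (A B : Matrix (Fin N) (Fin N) ℂ) : ℂ :=
  (Matrix.fromBlocks A (1 : Matrix (Fin N) (Fin N) ℂ)
    (-1 : Matrix (Fin N) (Fin N) ℂ) B).det

/-- Determinant of the bordered (2N+1)×(2N+1) matrix obtained from the block matrix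
`[[A, I], [−I, B]]` by appending the column vector `col` on the right and the row
vector `row` at the bottom, with `0` in the corner. -/
noncomputable def borderedDet {N : ℕ} (A B : Matrix (Fin N) (Fin N) ℂ)
    (col row : (Fin N ⊕ Fin N) → ℂ) : ℂ :=
  (Matrix.fromBlocks
    (Matrix.fromBlocks A (1 : Matrix (Fin N) (Fin N) ℂ)
      (-1 : Matrix (Fin N) (Fin N) ℂ) B)
    (Matrix.of fun i (_ : Fin 1) => col i)
    (Matrix.of fun (_ : Fin 1) j => row j)
    (0 : Matrix (Fin 1) (Fin 1) ℂ)).det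

/-- Period-2 reduction identity `f^{m+1,k₂}_{n+1,k₁} = f^{m,k₂}_{n,k₁}` for the Gram-type
tau functions of the two-component KP–Toda hierarchy after the reduction
`q_i = conj(p_i)`, `q̄_i = p_i`, `a₁ = −a₂ = a`. -/
theorem period2_reduction_f (N : ℕ) (hN : 1 ≤ N)
    (p : Fin N → ℂ) (hp : ∀ i, p i ≠ 0)
    (hpp : ∀ i j, p i + starRingEnd ℂ (p j) ≠ 0)
    (μ ν : ℂ) (ξ0 ξb0 η0 ηb0 : Fin N → ℂ)
    (a : ℝ) (ha : a ≠ 0)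
    (h1 : ∀ i, 1 - (a : ℂ) * p i ≠ 0)
    (h2 : ∀ i, 1 + (a : ℂ) * starRingEnd ℂ (p i) ≠ 0)
    (x y : ℝ)
    (ξ ξb η ηb : Fin N → ℂ)
    (hξ : ∀ i, ξ i = (x : ℂ) / p i + ξ0 i)
    (hξb : ∀ j, ξb j = (x : ℂ) / starRingEnd ℂ (p j) + ξb0 j)
    (hη : ∀ i, η i = (y : ℂ) / starRingEnd ℂ (p i) + η0 i)
    (hηb : ∀ j, ηb j = (y : ℂ) / p j + ηb0 j)
    (A : ℤ → ℤ → Matrix (Fin N) (Fin N) ℂ)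
    (hA : ∀ n k₁ i j, A n k₁ i j =
      (μ * starRingEnd ℂ (p j) / (p i + starRingEnd ℂ (p j))) *
      (-(p i) / starRingEnd ℂ (p j)) ^ n *
      ((1 - (a : ℂ) * p i) / (1 + (a : ℂ) * starRingEnd ℂ (p j))) ^ (-k₁) *
      Complex.exp (ξ i + ξb j))
    (B : ℤ → ℤ → Matrix (Fin N) (Fin N) ℂ)
    (hB : ∀ m k₂ i j, B m k₂ i j =
      (ν / (starRingEnd ℂ (p i) + p j)) *
      (-(starRingEnd ℂ (p i)) / p j) ^ m *
      ((1 + (a : ℂ) * starRingEnd ℂ (p i)) / (1 - (a : ℂ) * p j)) ^ (-k₂) *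
      Complex.exp (η i + ηb j))
    (f : ℤ → ℤ → ℤ → ℤ → ℂ)
    (hf : ∀ m k₂ n k₁, f m k₂ n k₁ = blockDet (A n k₁) (B m k₂)) :
    ∀ n k₁ m k₂ : ℤ, f (m + 1) k₂ (n + 1) k₁ = f m k₂ n k₁ := by
  intro n k₁ m k₂
  have hcp : ∀ i, starRingEnd ℂ (p i) ≠ 0 := fun i => by simpa using hp i
  rw [hf, hf, blockDet, blockDet]
  set cp : Fin N → ℂ := fun i => starRingEnd ℂ (p i) with hcpdef
  have key : Matrix.fromBlocks (A (n+1) k₁) (1 : Matrix (Fin N) (Fin N) ℂ)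
      (-1 : Matrix (Fin N) (Fin N) ℂ) (B (m+1) k₂)
      = Matrix.fromBlocks (Matrix.diagonal fun i => -(p i)) 0 0 (Matrix.diagonal cp)
        * Matrix.fromBlocks (A n k₁) (1 : Matrix (Fin N) (Fin N) ℂ)
            (-1 : Matrix (Fin N) (Fin N) ℂ) (B m k₂)
        * Matrix.fromBlocks (Matrix.diagonal fun i => (cp i)⁻¹) 0 0
            (Matrix.diagonal fun i => (-(p i))⁻¹) := by
    rw [Matrix.fromBlocks_multiply, Matrix.fromBlocks_multiply]
    have e11 : A (n+1) k₁ =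
        ((Matrix.diagonal fun i => -(p i)) * A n k₁ + 0 * (-1)) *
          Matrix.diagonal (fun i => (cp i)⁻¹)
          + ((Matrix.diagonal fun i => -(p i)) * 1 + 0 * B m k₂) * 0 := by
      ext i j
      simp only [Matrix.zero_mul, Matrix.mul_zero, add_zero, Matrix.add_apply,
        Matrix.zero_apply, Matrix.mul_diagonal, Matrix.diagonal_mul, hA]
      have hr : (-(p i) / cp j) ≠ 0 := by
        simp only [hcpdef]
        exact div_ne_zero (neg_ne_zero.mpr (hp i)) (hcp j)
      rw [zpow_add_one₀ hr]
      ring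
    have e12 : (1 : Matrix (Fin N) (Fin N) ℂ) =
        ((Matrix.diagonal fun i => -(p i)) * A n k₁ + 0 * (-1)) * 0
          + ((Matrix.diagonal fun i => -(p i)) * 1 + 0 * B m k₂) *
            Matrix.diagonal (fun i => (-(p i))⁻¹) := by
      simp only [zero_mul, mul_zero, mul_one, add_zero, zero_add,
        Matrix.diagonal_mul_diagonal]
      rw [show (fun i => -(p i) * (-(p i))⁻¹) = fun _ => (1 : ℂ) from
        funext fun i => mul_inv_cancel₀ (neg_ne_zero.mpr (hp i)), Matrix.diagonal_one]
    have e21 : (-1 : Matrix (Fin N) (Fin N) ℂ) =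
        (0 * A n k₁ + Matrix.diagonal cp * (-1)) *
          Matrix.diagonal (fun i => (cp i)⁻¹)
          + (0 * 1 + Matrix.diagonal cp * B m k₂) * 0 := by
      simp only [zero_mul, mul_zero, mul_one, add_zero, zero_add, mul_neg, neg_mul,
        Matrix.diagonal_mul_diagonal]
      rw [show (fun i => cp i * (cp i)⁻¹) = fun _ => (1 : ℂ) from
        funext fun i => mul_inv_cancel₀ (hcp i), Matrix.diagonal_one]
    have e22 : B (m+1) k₂ =
        (0 * A n k₁ + Matrix.diagonal cp * (-1)) * 0
          + (0 * 1 + Matrix.diagonal cp * B m k₂) *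
            Matrix.diagonal (fun i => (-(p i))⁻¹) := by
      ext i j
      simp only [Matrix.zero_mul, Matrix.mul_zero, zero_add, add_zero, Matrix.add_apply,
        Matrix.zero_apply, Matrix.mul_diagonal, Matrix.diagonal_mul, hB]
      have hr : (-(cp i) / p j) ≠ 0 := by
        simp only [hcpdef]
        exact div_ne_zero (neg_ne_zero.mpr (hcp i)) (hp j)
      rw [zpow_add_one₀ hr]
      ring
    rw [← e11, ← e12, ← e21, ← e22]
  rw [key, Matrix.det_mul, Matrix.det_mul,
    Matrix.det_fromBlocks_zero₁₂, Matrix.det_fromBlocks_zero₁₂,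
    Matrix.det_diagonal, Matrix.det_diagonal, Matrix.det_diagonal, Matrix.det_diagonal]
  have hP1 : (∏ i, -(p i)) ≠ 0 := Finset.prod_ne_zero_iff.mpr
    fun i _ => neg_ne_zero.mpr (hp i)
  have hP2 : (∏ i, cp i) ≠ 0 := Finset.prod_ne_zero_iff.mpr fun i _ => hcp i
  rw [Finset.prod_inv_distrib, Finset.prod_inv_distrib]
  field_simp
end

section
/- Let N ≥ 1, let p_1,…,p_N ∈ ℂ be nonzero with p_i + conj(p_j) ≠ 0 for all i,j, let μ, ν, ξ_{i0}, ξ̄_{j0}, η_{i0}, η̄_{j0} ∈ ℂ, let a ∈ ℝ, a ≠ 0, with 1 − a·p_i ≠ 0 and 1 + a·conj(p_i) ≠ 0 for all i, and let x₋₁, y₋₁ ∈ ℝ. Set ξ_i = x₋₁/p_i + ξ_{i0}, ξ̄_j = x₋₁/conj(p_j) + ξ̄_{j0}, η_i = y₋₁/conj(p_i) + η_{i0}, η̄_j = y₋₁/p_j + η̄_{j0}. For n, k₁, m, k₂ ∈ ℤ define the N×N matrices A(n,k₁) with (i,j) entry (μ·conj(p_j)/(p_i+conj(p_j)))·(−p_i/conj(p_j))^n·((1−a·p_i)/(1+a·conj(p_j)))^{−k₁}·exp(ξ_i+ξ̄_j)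 and B(m,k₂) with (i,j) entry (ν/(conj(p_i)+p_j))·(−conj(p_i)/p_j)^m·((1+a·conj(p_i))/(1−a·p_j))^{−k₂}·exp(η_i+η̄_j), the row vector Φ(n,k₁) with j-th entry p_j^n·(1−a·p_j)^{−k₁}·exp(ξ_j), and the row vector Ψ̄(m,k₂) with j-th entry (−p_j)^{−m}·(1−a·p_j)^{k₂}·exp(η̄_j). Set g^{m,k₂}_{n,k₁} = det[[A(n,k₁), I, Φ(n,k₁)ᵀ],[−I, B(m,k₂), 0],[0, −Ψ̄(m,k₂), 0]], a (2N+1)×(2N+1) determinant. Then for all n, k₁, m, k₂ ∈ ℤ: g^{m+1,k₂}_{n+1,k₁} = −g^{m,k₂}_{n,k₁}. -/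
open Matrix

/-- Period-2 reduction identity `g^{m+1,k₂}_{n+1,k₁} = −g^{m,k₂}_{n,k₁}` for the Gram-type
tau functions of the two-component KP–Toda hierarchy after the reduction
`q_i = conj(p_i)`, `q̄_i = p_i`, `a₁ = −a₂ = a`. -/
theorem period2_reduction_g (N : ℕ) (hN : 1 ≤ N)
    (p : Fin N → ℂ) (hp : ∀ i, p i ≠ 0)
    (hpp : ∀ i j, p i + starRingEnd ℂ (p j) ≠ 0)
    (μ ν : ℂ) (ξ0 ξb0 η0 ηb0 : Fin N → ℂ)
    (a : ℝ) (ha : a ≠ 0)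
    (h1 : ∀ i, 1 - (a : ℂ) * p i ≠ 0)
    (h2 : ∀ i, 1 + (a : ℂ) * starRingEnd ℂ (p i) ≠ 0)
    (x y : ℝ)
    (ξ ξb η ηb : Fin N → ℂ)
    (hξ : ∀ i, ξ i = (x : ℂ) / p i + ξ0 i)
    (hξb : ∀ j, ξb j = (x : ℂ) / starRingEnd ℂ (p j) + ξb0 j)
    (hη : ∀ i, η i = (y : ℂ) / starRingEnd ℂ (p i) + η0 i)
    (hηb : ∀ j, ηb j = (y : ℂ) / p j + ηb0 j)
    (A : ℤ → ℤ → Matrix (Fin N) (Fin N) ℂ)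
    (hA : ∀ n k₁ i j, A n k₁ i j =
      (μ * starRingEnd ℂ (p j) / (p i + starRingEnd ℂ (p j))) *
      (-(p i) / starRingEnd ℂ (p j)) ^ n *
      ((1 - (a : ℂ) * p i) / (1 + (a : ℂ) * starRingEnd ℂ (p j))) ^ (-k₁) *
      Complex.exp (ξ i + ξb j))
    (B : ℤ → ℤ → Matrix (Fin N) (Fin N) ℂ)
    (hB : ∀ m k₂ i j, B m k₂ i j =
      (ν / (starRingEnd ℂ (p i) + p j)) *
      (-(starRingEnd ℂ (p i)) / p j) ^ m *
      ((1 + (a : ℂ) * starRingEnd ℂ (p i)) / (1 - (a : ℂ) * p j)) ^ (-k₂) *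
      Complex.exp (η i + ηb j))
    (Φ : ℤ → ℤ → Fin N → ℂ)
    (hΦ : ∀ n k₁ j, Φ n k₁ j =
      p j ^ n * (1 - (a : ℂ) * p j) ^ (-k₁) * Complex.exp (ξ j))
    (Ψb : ℤ → ℤ → Fin N → ℂ)
    (hΨb : ∀ m k₂ j, Ψb m k₂ j =
      (-(p j)) ^ (-m) * (1 - (a : ℂ) * p j) ^ k₂ * Complex.exp (ηb j))
    (g : ℤ → ℤ → ℤ → ℤ → ℂ)
    (hg : ∀ m k₂ n k₁, g m k₂ n k₁ = borderedDet (A n k₁) (B m k₂)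
      (Sum.elim (Φ n k₁) (fun _ => 0))
      (Sum.elim (fun _ => 0) (fun j => -(Ψb m k₂ j)))) :
    ∀ n k₁ m k₂ : ℤ, g (m + 1) k₂ (n + 1) k₁ = -(g m k₂ n k₁) := by
  intro n k₁ m k₂
  have hpc : ∀ i, starRingEnd ℂ (p i) ≠ 0 := fun i => by
    simpa using hp i
  rw [hg, hg, borderedDet, borderedDet]
  set dL : ((Fin N ⊕ Fin N) ⊕ Fin 1) → ℂ :=
    Sum.elim (Sum.elim (fun i => -(p i)) (fun i => starRingEnd ℂ (p i))) (fun _ => 1) with hdL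
  set dR : ((Fin N ⊕ Fin N) ⊕ Fin 1) → ℂ :=
    Sum.elim (Sum.elim (fun j => (starRingEnd ℂ (p j))⁻¹) (fun j => -(p j)⁻¹)) (fun _ => -1)
      with hdR
  set M : Matrix ((Fin N ⊕ Fin N) ⊕ Fin 1) ((Fin N ⊕ Fin N) ⊕ Fin 1) ℂ :=
    Matrix.fromBlocks
      (Matrix.fromBlocks (A n k₁) (1 : Matrix (Fin N) (Fin N) ℂ)
        (-1 : Matrix (Fin N) (Fin N) ℂ) (B m k₂))
      (Matrix.of fun i (_ : Fin 1) => Sum.elim (Φ n k₁) (fun _ => 0) i)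
      (Matrix.of fun (_ : Fin 1) j => Sum.elim (fun _ => 0) (fun j => -(Ψb m k₂ j)) j)
      (0 : Matrix (Fin 1) (Fin 1) ℂ) with hM
  set M' : Matrix ((Fin N ⊕ Fin N) ⊕ Fin 1) ((Fin N ⊕ Fin N) ⊕ Fin 1) ℂ :=
    Matrix.fromBlocks
      (Matrix.fromBlocks (A (n+1) k₁) (1 : Matrix (Fin N) (Fin N) ℂ)
        (-1 : Matrix (Fin N) (Fin N) ℂ) (B (m+1) k₂))
      (Matrix.of fun i (_ : Fin 1) => Sum.elim (Φ (n+1) k₁) (fun _ => 0) i)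
      (Matrix.of fun (_ : Fin 1) j => Sum.elim (fun _ => 0) (fun j => -(Ψb (m+1) k₂ j)) j)
      (0 : Matrix (Fin 1) (Fin 1) ℂ) with hM'
  have key : M' = Matrix.diagonal dL * M * Matrix.diagonal dR := by
    ext i j
    rw [Matrix.mul_assoc, Matrix.diagonal_mul, Matrix.mul_diagonal, hM, hM']
    rcases i with (i | i) | i <;> rcases j with (j | j) | j <;>
      simp only [hdL, hdR, Sum.elim_inl, Sum.elim_inr,
        Matrix.fromBlocks_apply₁₁, Matrix.fromBlocks_apply₁₂,
        Matrix.fromBlocks_apply₂₁, Matrix.fromBlocks_apply₂₂, Matrix.of_apply,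
        Matrix.zero_apply, Matrix.neg_apply]
    · -- A block
      rw [hA, hA]
      have hX : -(p i) / starRingEnd ℂ (p j) ≠ 0 :=
        div_ne_zero (neg_ne_zero.mpr (hp i)) (hpc j)
      rw [zpow_add_one₀ hX, div_eq_mul_inv (-(p i))]
      ring
    · -- identity block
      rcases eq_or_ne i j with rfl | hij
      · simp only [Matrix.one_apply_eq, one_mul]
        rw [neg_mul_neg, mul_inv_cancel₀ (hp i)]
      · simp [Matrix.one_apply_ne hij]
    · -- Φ column
      rw [hΦ, hΦ, zpow_add_one₀ (hp i)]
      ring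
    · -- -I block
      rcases eq_or_ne i j with rfl | hij
      · simp only [Matrix.one_apply_eq]
        rw [neg_one_mul, mul_neg, mul_inv_cancel₀ (hpc i)]
      · simp [Matrix.one_apply_ne hij]
    · -- B block
      rw [hB, hB]
      have hX : -(starRingEnd ℂ (p i)) / p j ≠ 0 :=
        div_ne_zero (neg_ne_zero.mpr (hpc i)) (hp j)
      rw [zpow_add_one₀ hX, div_eq_mul_inv (-(starRingEnd ℂ (p i)))]
      ring
    · -- zero column
      ring
    · -- zero row
      ring
    · -- Ψb row
      rw [hΨb, hΨb]
      have hX : -(p j) ≠ 0 := neg_ne_zero.mpr (hp j)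
      have h3 : -(m + 1) = -m + (-1) := by ring
      rw [h3, zpow_add₀ hX, _root_.zpow_neg_one, inv_neg]
      ring
    · -- corner
      ring
  have hprod : (∏ i, dL i) * (∏ i, dR i) = -1 := by
    simp only [hdL, hdR, Fintype.prod_sum_type, Sum.elim_inl, Sum.elim_inr]
    have e1 : (∏ i : Fin N, -(p i)) * ∏ i : Fin N, -(p i)⁻¹ = 1 := by
      rw [← Finset.prod_mul_distrib]
      apply Finset.prod_eq_one
      intro i _
      rw [neg_mul_neg, mul_inv_cancel₀ (hp i)]
    have e2 : (∏ i : Fin N, starRingEnd ℂ (p i)) *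
        ∏ i : Fin N, (starRingEnd ℂ (p i))⁻¹ = 1 := by
      rw [← Finset.prod_mul_distrib]
      apply Finset.prod_eq_one
      intro i _
      rw [mul_inv_cancel₀ (hpc i)]
    linear_combination (-((∏ i : Fin N, starRingEnd ℂ (p i)) *
        ∏ i : Fin N, (starRingEnd ℂ (p i))⁻¹)) * e1 - e2
  rw [key, Matrix.det_mul, Matrix.det_mul, Matrix.det_diagonal, Matrix.det_diagonal]
  linear_combination M.det * hprod
end

section
/- Let N ≥ 1, let p_1,…,p_N ∈ ℂ be nonzero with p_i + conj(p_j) ≠ 0 for all i,j, let μ, ν, ξ_{i0}, ξ̄_{j0}, η_{i0}, η̄_{j0} ∈ ℂ, let a ∈ ℝ, a ≠ 0, with 1 − a·p_i ≠ 0 and 1 + a·conj(p_i) ≠ 0 for all i, and let x₋₁, y₋₁ ∈ ℝ. Set ξ_i = x₋₁/p_i + ξ_{i0}, ξ̄_j = x₋₁/conj(p_j) + ξ̄_{j0}, η_i = y₋₁/conj(p_i) + η_{i0}, η̄_j = y₋₁/p_j + η̄_{j0}. For n, k₁, m, k₂ ∈ ℤ define the N×N matrices A(n,k₁) with (i,j)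 entry (μ·conj(p_j)/(p_i+conj(p_j)))·(−p_i/conj(p_j))^n·((1−a·p_i)/(1+a·conj(p_j)))^{−k₁}·exp(ξ_i+ξ̄_j) and B(m,k₂) with (i,j) entry (ν/(conj(p_i)+p_j))·(−conj(p_i)/p_j)^m·((1+a·conj(p_i))/(1−a·p_j))^{−k₂}·exp(η_i+η̄_j), and set f^{m,k₂}_{n,k₁} = det[[A(n,k₁), I],[−I, B(m,k₂)]]. Then for all n, k₁, m, k₂ ∈ ℤ: f^{m,k₂+1}_{n,k₁+1} = f^{m,k₂}_{n,k₁}. -/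
open Matrix

set_option maxHeartbeats 1600000 in
/-- Period-2 reduction identity `f^{m,k₂+1}_{n,k₁+1} = f^{m,k₂}_{n,k₁}` for the Gram-type
tau functions of the two-component KP–Toda hierarchy after the reduction
`q_i = conj(p_i)`, `q̄_i = p_i`, `a₁ = −a₂ = a`. -/
theorem period2_reduction_f_k (N : ℕ) (hN : 1 ≤ N)
    (p : Fin N → ℂ) (hp : ∀ i, p i ≠ 0)
    (hpp : ∀ i j, p i + starRingEnd ℂ (p j) ≠ 0)
    (μ ν : ℂ) (ξ0 ξb0 η0 ηb0 : Fin N → ℂ)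
    (a : ℝ) (ha : a ≠ 0)
    (h1 : ∀ i, 1 - (a : ℂ) * p i ≠ 0)
    (h2 : ∀ i, 1 + (a : ℂ) * starRingEnd ℂ (p i) ≠ 0)
    (x y : ℝ)
    (ξ ξb η ηb : Fin N → ℂ)
    (hξ : ∀ i, ξ i = (x : ℂ) / p i + ξ0 i)
    (hξb : ∀ j, ξb j = (x : ℂ) / starRingEnd ℂ (p j) + ξb0 j)
    (hη : ∀ i, η i = (y : ℂ) / starRingEnd ℂ (p i) + η0 i)
    (hηb : ∀ j, ηb j = (y : ℂ) / p j + ηb0 j)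
    (A : ℤ → ℤ → Matrix (Fin N) (Fin N) ℂ)
    (hA : ∀ n k₁ i j, A n k₁ i j =
      (μ * starRingEnd ℂ (p j) / (p i + starRingEnd ℂ (p j))) *
      (-(p i) / starRingEnd ℂ (p j)) ^ n *
      ((1 - (a : ℂ) * p i) / (1 + (a : ℂ) * starRingEnd ℂ (p j))) ^ (-k₁) *
      Complex.exp (ξ i + ξb j))
    (B : ℤ → ℤ → Matrix (Fin N) (Fin N) ℂ)
    (hB : ∀ m k₂ i j, B m k₂ i j =
      (ν / (starRingEnd ℂ (p i) + p j)) *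
      (-(starRingEnd ℂ (p i)) / p j) ^ m *
      ((1 + (a : ℂ) * starRingEnd ℂ (p i)) / (1 - (a : ℂ) * p j)) ^ (-k₂) *
      Complex.exp (η i + ηb j))
    (f : ℤ → ℤ → ℤ → ℤ → ℂ)
    (hf : ∀ m k₂ n k₁, f m k₂ n k₁ = blockDet (A n k₁) (B m k₂)) :
    ∀ n k₁ m k₂ : ℤ, f m (k₂ + 1) n (k₁ + 1) = f m k₂ n k₁ := by

  intro n k₁ m k₂
  rw [hf, hf, blockDet, blockDet]
  set d : Fin N → ℂ := fun i => 1 - (a : ℂ) * p i with hd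
  set e : Fin N → ℂ := fun i => 1 + (a : ℂ) * starRingEnd ℂ (p i) with he
  have hdne : ∀ i, d i ≠ 0 := h1
  have hene : ∀ i, e i ≠ 0 := h2
  have hAeq : A n (k₁ + 1) = diagonal (fun i => (d i)⁻¹) * A n k₁ * diagonal e := by
    ext i j
    simp only [Matrix.mul_diagonal, Matrix.diagonal_mul]
    rw [hA, hA]
    have hx : (d i / e j) ≠ 0 := div_ne_zero (hdne i) (hene j)
    have h3 : (-(k₁ + 1)) = -k₁ + (-1) := by ring
    show _ = (d i)⁻¹ * _ * e j
    rw [h3, zpow_add₀ hx, _root_.zpow_neg_one, inv_div]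
    simp only [hd, he]
    field_simp
  have hBeq : B m (k₂ + 1) = diagonal (fun i => (e i)⁻¹) * B m k₂ * diagonal d := by
    ext i j
    simp only [Matrix.mul_diagonal, Matrix.diagonal_mul]
    rw [hB, hB]
    have hx : (e i / d j) ≠ 0 := div_ne_zero (hene i) (hdne j)
    have h3 : (-(k₂ + 1)) = -k₂ + (-1) := by ring
    show _ = (e i)⁻¹ * _ * d j
    rw [h3, zpow_add₀ hx, _root_.zpow_neg_one, inv_div]
    simp only [hd, he]
    field_simp
  have hdd : diagonal (fun i => (d i)⁻¹) * diagonal d = (1 : Matrix (Fin N) (Fin N) ℂ) := by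
    rw [Matrix.diagonal_mul_diagonal]
    have : (fun i => (d i)⁻¹ * d i) = fun _ => (1 : ℂ) :=
      funext fun i => inv_mul_cancel₀ (hdne i)
    rw [this, Matrix.diagonal_one]
  have hee : diagonal (fun i => (e i)⁻¹) * diagonal e = (1 : Matrix (Fin N) (Fin N) ℂ) := by
    rw [Matrix.diagonal_mul_diagonal]
    have : (fun i => (e i)⁻¹ * e i) = fun _ => (1 : ℂ) :=
      funext fun i => inv_mul_cancel₀ (hene i)
    rw [this, Matrix.diagonal_one]
  have key : fromBlocks (A n (k₁ + 1)) (1 : Matrix (Fin N) (Fin N) ℂ)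
      (-1 : Matrix (Fin N) (Fin N) ℂ) (B m (k₂ + 1)) =
      fromBlocks (diagonal fun i => (d i)⁻¹) 0 0 (diagonal fun i => (e i)⁻¹) *
      fromBlocks (A n k₁) (1 : Matrix (Fin N) (Fin N) ℂ)
        (-1 : Matrix (Fin N) (Fin N) ℂ) (B m k₂) *
      fromBlocks (diagonal e) 0 0 (diagonal d) := by
    rw [Matrix.fromBlocks_multiply, Matrix.fromBlocks_multiply, hAeq, hBeq]
    simp only [Matrix.mul_zero, Matrix.zero_mul, add_zero, zero_add, neg_zero,
      Matrix.mul_one, Matrix.mul_neg, Matrix.neg_mul, Matrix.one_mul, Matrix.mul_assoc,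
      hdd, hee]
  rw [key, Matrix.det_mul, Matrix.det_mul,
    Matrix.det_fromBlocks_zero₂₁, Matrix.det_fromBlocks_zero₂₁,
    Matrix.det_diagonal, Matrix.det_diagonal, Matrix.det_diagonal, Matrix.det_diagonal]
  have hD : (∏ i, d i) ≠ 0 := Finset.prod_ne_zero_iff.2 fun i _ => hdne i
  have hE : (∏ i, e i) ≠ 0 := Finset.prod_ne_zero_iff.2 fun i _ => hene i
  rw [Finset.prod_inv_distrib, Finset.prod_inv_distrib]
  field_simp
end

section
/- Let N ≥ 1, let p_1,…,p_N ∈ ℂ be nonzero with p_i + conj(p_j) ≠ 0 for all i,j, let μ, ν, ξ_{i0}, ξ̄_{j0}, η_{i0}, η̄_{j0} ∈ ℂ, let a ∈ ℝ, a ≠ 0, with 1 − a·p_i ≠ 0 and 1 + a·conj(p_i) ≠ 0 for all i, and fix n, k₁, m, k₂ ∈ ℤ. For (x, y) ∈ ℝ² define ξ_i(x) = x/p_i + ξ_{i0}, ξ̄_j(x) = x/conj(p_j) + ξ̄_{j0}, η_i(y) = y/conj(p_i) + η_{i0}, η̄_j(y) = y/p_j + η̄_{j0}, and let F(x, y) be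 the determinant of the 2N×2N block matrix [[A(x), I],[−I, B(y)]], where A(x) has (i,j) entry (μ·conj(p_j)/(p_i+conj(p_j)))·(−p_i/conj(p_j))^n·((1−a·p_i)/(1+a·conj(p_j)))^{−k₁}·exp(ξ_i(x)+ξ̄_j(x)) and B(y) has (i,j) entry (ν/(conj(p_i)+p_j))·(−conj(p_i)/p_j)^m·((1+a·conj(p_i))/(1−a·p_j))^{−k₂}·exp(η_i(y)+η̄_j(y)). Then at every point (x, y) ∈ ℝ², the partial derivative of F with respect to x equals the partial derivative of F with respect to y. -/
open Matrix

lemma blockDet_aux {N : ℕ} (A B : Matrix (Fin N) (Fin N) ℂ) :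
    (Matrix.fromBlocks A (1 : Matrix (Fin N) (Fin N) ℂ)
      (-1 : Matrix (Fin N) (Fin N) ℂ) B).det = (1 + A * B).det := by
  have key : Matrix.fromBlocks 1 (A*B+1) 0 1 * (Matrix.fromBlocks 1 A 0 1 *
      (Matrix.fromBlocks A 1 (-1) B * Matrix.fromBlocks 1 B 0 1) * Matrix.fromBlocks 1 1 0 1)
      = Matrix.fromBlocks (-(A*B+1)) 0 (-1) (-1) := by
    simp [Matrix.fromBlocks_multiply, Matrix.mul_add, Matrix.add_mul]
  have hdet := congrArg Matrix.det key
  simp [Matrix.det_mul, Matrix.det_fromBlocks_zero₂₁, Matrix.det_fromBlocks_zero₁₂,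
    Matrix.det_neg] at hdet
  rw [hdet, show (-1 + -(A*B) : Matrix (Fin N) (Fin N) ℂ) = -(1 + A*B) by abel,
    Matrix.det_neg, mul_comm, ← mul_assoc, ← pow_add]
  simp [Even.neg_one_pow (Even.add_self N)]


/-- Reduction identity `∂_{x₋₁} f = ∂_{y₋₁} f` for the tau function `f^{m,k₂}_{n,k₁}`
of the two-component KP–Toda hierarchy, viewed as a function of the two flow
variables, after the period-2 reduction `q_i = conj(p_i)`, `q̄_i = p_i`, `a₁ = −a₂ = a`. -/
theorem period2_reduction_deriv (N : ℕ) (hN : 1 ≤ N)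
    (p : Fin N → ℂ) (hp : ∀ i, p i ≠ 0)
    (hpp : ∀ i j, p i + starRingEnd ℂ (p j) ≠ 0)
    (μ ν : ℂ) (ξ0 ξb0 η0 ηb0 : Fin N → ℂ)
    (a : ℝ) (ha : a ≠ 0)
    (h1 : ∀ i, 1 - (a : ℂ) * p i ≠ 0)
    (h2 : ∀ i, 1 + (a : ℂ) * starRingEnd ℂ (p i) ≠ 0)
    (n k₁ m k₂ : ℤ)
    (ξ ξb : Fin N → ℝ → ℂ) (η ηb : Fin N → ℝ → ℂ)
    (hξ : ∀ i x, ξ i x = (x : ℂ) / p i + ξ0 i)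
    (hξb : ∀ j x, ξb j x = (x : ℂ) / starRingEnd ℂ (p j) + ξb0 j)
    (hη : ∀ i y, η i y = (y : ℂ) / starRingEnd ℂ (p i) + η0 i)
    (hηb : ∀ j y, ηb j y = (y : ℂ) / p j + ηb0 j)
    (A : ℝ → Matrix (Fin N) (Fin N) ℂ)
    (hA : ∀ x i j, A x i j =
      (μ * starRingEnd ℂ (p j) / (p i + starRingEnd ℂ (p j))) *
      (-(p i) / starRingEnd ℂ (p j)) ^ n *
      ((1 - (a : ℂ) * p i) / (1 + (a : ℂ) * starRingEnd ℂ (p j))) ^ (-k₁) *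
      Complex.exp (ξ i x + ξb j x))
    (B : ℝ → Matrix (Fin N) (Fin N) ℂ)
    (hB : ∀ y i j, B y i j =
      (ν / (starRingEnd ℂ (p i) + p j)) *
      (-(starRingEnd ℂ (p i)) / p j) ^ m *
      ((1 + (a : ℂ) * starRingEnd ℂ (p i)) / (1 - (a : ℂ) * p j)) ^ (-k₂) *
      Complex.exp (η i y + ηb j y))
    (F : ℝ → ℝ → ℂ)
    (hF : ∀ x y, F x y = blockDet (A x) (B y)) :
    ∀ x y : ℝ, deriv (fun x' => F x' y) x = deriv (fun y' => F x y') y := by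
  have hBy : ∀ y : ℝ, B y =
      Matrix.diagonal (fun i => Complex.exp ((y : ℂ) / starRingEnd ℂ (p i))) * B 0 *
      Matrix.diagonal (fun i => Complex.exp ((y : ℂ) / p i)) := by
    intro y
    ext i j
    simp only [Matrix.mul_diagonal, Matrix.diagonal_mul, hB, hη, hηb]
    push_cast
    simp only [zero_div, zero_add, add_zero, Complex.exp_add]
    ring
  have hAxy : ∀ x y : ℝ, A (x + y) =
      Matrix.diagonal (fun i => Complex.exp ((y : ℂ) / p i)) * A x *
      Matrix.diagonal (fun i => Complex.exp ((y : ℂ) / starRingEnd ℂ (p i))) := by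
    intro x y
    ext i j
    simp only [Matrix.mul_diagonal, Matrix.diagonal_mul, hA, hξ, hξb]
    push_cast
    simp only [add_div, Complex.exp_add]
    ring
  have key : ∀ x y : ℝ, F x y = F (x + y) 0 := by
    intro x y
    set Uy := Matrix.diagonal (fun i => Complex.exp ((y : ℂ) / p i)) with hUy
    set Vy := Matrix.diagonal (fun i => Complex.exp ((y : ℂ) / starRingEnd ℂ (p i))) with hVy
    calc F x y = (1 + A x * B y).det := by rw [hF]; exact blockDet_aux _ _
      _ = (1 + (A x * Vy * B 0) * Uy).det := by rw [hBy y]; simp [Matrix.mul_assoc, hUy, hVy]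
      _ = (1 + Uy * (A x * Vy * B 0)).det := Matrix.det_one_add_mul_comm _ _
      _ = (1 + (Uy * A x * Vy) * B 0).det := by simp [Matrix.mul_assoc]
      _ = (1 + A (x + y) * B 0).det := by rw [hAxy x y]
      _ = F (x + y) 0 := by rw [hF]; exact (blockDet_aux _ _).symm
  intro x y
  have e1 : (fun x' => F x' y) = fun x' => (fun t => F t 0) (x' + y) :=
    funext fun x' => key x' y
  have e2 : (fun y' => F x y') = fun y' => (fun t => F t 0) (x + y') :=
    funext fun y' => key x y'
  rw [e1, e2]
  exact (deriv_comp_add_const (fun t => F t 0) y x).trans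
    (deriv_comp_const_add (fun t => F t 0) x y).symm
end

section
/- Let N ≥ 1, let p_1,…,p_N, p̄_1,…,p̄_N, q_1,…,q_N, q̄_1,…,q̄_N ∈ ℂ be nonzero with p_i + p̄_j ≠ 0 and q_i + q̄_j ≠ 0 for all i,j, let μ, ν, ξ_{i0}, ξ̄_{j0}, η_{i0}, η̄_{j0} ∈ ℂ, let a₁, a₂ ∈ ℝ be nonzero with 1 − a₁ p_i ≠ 0, 1 + a₁ p̄_j ≠ 0, 1 − a₂ q_i ≠ 0, 1 + a₂ q̄_j ≠ 0 for all i,j, and let y₋₁ ∈ ℝ be fixed, with η_i = y₋₁/q_i + η_{i0} and η̄_j = y₋₁/q̄_j + η̄_{j0}. For x ∈ ℝ set ξ_i(x) = x/p_i + ξ_{i0} and ξ̄_j(x) = x/p̄_j + ξ̄_{j0}. For n, k₁, m, k₂ ∈ ℤ define: A(n,k₁)(x) the N×N matrix with entry (μ p̄_j/(p_i+p̄_j))·(−p_i/p̄_j)^n·((1−a₁p_i)/(1+a₁p̄_j))^{−k₁}·exp(ξ_i(x)+ξ̄_j(x)); B(m,k₂) with entry (ν/(q_i+q̄_j))·(−q_i/q̄_j)^m·((1−a₂q_i)/(1+a₂q̄_j))^{−k₂}·exp(η_i+η̄_j);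 the row vector Φ(n,k₁)(x) with j-th entry p_j^n (1−a₁p_j)^{−k₁} exp(ξ_j(x)); the row vector Ψ̄(m,k₂) with j-th entry (−q̄_j)^{−m}(1+a₂q̄_j)^{k₂} exp(η̄_j). Set f^{m,k₂}_{n,k₁}(x) = det[[A(n,k₁)(x), I],[−I, B(m,k₂)]] and g^{m,k₂}_{n,k₁}(x) = det[[A(n,k₁)(x), I, Φ(n,k₁)(x)ᵀ],[−I, B(m,k₂), 0],[0, −Ψ̄(m,k₂), 0]]. Then for all n, k₁, m, k₂ ∈ ℤ and all x ∈ ℝ: (d/dx)g^{m,k₂}_{n,k₁}(x)·f^{m,k₂}_{n,k₁}(x) − g^{m,k₂}_{n,k₁}(x)·(d/dx)f^{m,k₂}_{n,k₁}(x) = g^{m,k₂}_{n−1,k₁}(x)·f^{m,k₂}_{n+1,k₁}(x). -/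
open Matrix

namespace HirotaAux

variable {ι : Type*} [Fintype ι] [DecidableEq ι]

/-- outer product of vectors, as a matrix -/
noncomputable def outer (c r : ι → ℂ) : Matrix ι ι ℂ := Matrix.of fun i j => c i * r j

/-- bordered matrix -/
noncomputable def bord (X : Matrix ι ι ℂ) (c r : ι → ℂ) (z : ℂ) :
    Matrix (ι ⊕ Fin 1) (ι ⊕ Fin 1) ℂ :=
  Matrix.fromBlocks X (Matrix.of fun i (_ : Fin 1) => c i) (Matrix.of fun (_ : Fin 1) j => r j)
    (Matrix.of fun _ _ => z)

/-- bilinear adjugate form -/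
noncomputable def sig (X : Matrix ι ι ℂ) (c r : ι → ℂ) : ℂ := r ⬝ᵥ (X.adjugate *ᵥ c)

lemma det_updateRow_eq (X : Matrix ι ι ℂ) (r : ι → ℂ) (i : ι) :
    det (updateRow X i r) = ((X.adjugate)ᵀ *ᵥ r) i := by
  have h2 : updateRow X i r = (updateCol Xᵀ i r)ᵀ := by
    rw [← updateRow_transpose, transpose_transpose]
  rw [h2, det_transpose, ← cramer_apply, cramer_eq_adjugate_mulVec, adjugate_transpose]

lemma sum_mul_det_updateRow (X : Matrix ι ι ℂ) (c r : ι → ℂ) :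
    ∑ i, c i * det (updateRow X i r) = sig X c r := by
  simp only [det_updateRow_eq, sig, dotProduct, mulVec, transpose_apply, Finset.mul_sum,
    dotProduct]
  rw [Finset.sum_comm]
  exact Finset.sum_congr rfl fun j _ => Finset.sum_congr rfl fun i _ => by ring

lemma sig_mul_row (X : Matrix ι ι ℂ) (c r : ι → ℂ) (a : ℂ) :
    sig X c (fun j => a * r j) = a * sig X c r := by
  simp only [sig, dotProduct, mulVec, Finset.mul_sum]
  exact Finset.sum_congr rfl fun j _ => Finset.sum_congr rfl fun k _ => by ring

lemma sig_mul_col (X : Matrix ι ι ℂ) (c r : ι → ℂ) (a : ℂ) :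
    sig X (fun i => a * c i) r = a * sig X c r := by
  simp only [sig, dotProduct, mulVec, Finset.mul_sum]
  refine Finset.sum_congr rfl fun j _ => Finset.sum_congr rfl fun k _ => by ring

lemma eval_det_add_smul_one (X : Matrix ι ι ℂ) (t : ℂ) :
    ((-X).charpoly).eval t = (X + t • 1).det := by
  rw [Matrix.charpoly, ← Polynomial.coe_evalRingHom, RingHom.map_det]
  congr 1
  ext i j
  by_cases h : i = j
  · subst h
    simp [charmatrix_apply_eq, Matrix.one_apply_eq, add_comm]
  · simp [charmatrix_apply_ne _ _ _ h, Matrix.one_apply_ne h]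

/-- density principle -/
lemma eq_of_isUnit_det (L R : Matrix ι ι ℂ → ℂ) (hL : Continuous L) (hR : Continuous R)
    (h : ∀ Y : Matrix ι ι ℂ, IsUnit Y.det → L Y = R Y) (X : Matrix ι ι ℂ) : L X = R X := by
  have hP : (-X).charpoly ≠ 0 := ((-X).charpoly_monic).ne_zero
  have hfin : {t : ℂ | ((-X).charpoly).IsRoot t}.Finite := Polynomial.finite_setOf_isRoot hP
  have hdense : Dense {t : ℂ | ((-X).charpoly).IsRoot t}ᶜ :=
    Set.Countable.dense_compl ℂ hfin.countable
  have hcont : Continuous fun t : ℂ => X + t • (1 : Matrix ι ι ℂ) :=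
    continuous_const.add (continuous_id.smul continuous_const)
  have key : Set.EqOn (fun t : ℂ => L (X + t • 1)) (fun t : ℂ => R (X + t • 1))
      {t : ℂ | ((-X).charpoly).IsRoot t}ᶜ := by
    intro t ht
    apply h
    rw [← eval_det_add_smul_one]
    exact isUnit_iff_ne_zero.mpr ht
  have := Continuous.ext_on hdense (hL.comp hcont) (hR.comp hcont) key
  simpa using congrFun this 0

lemma adj_eq (Y : Matrix ι ι ℂ) [Invertible Y] : Y.adjugate = Y.det • (⅟Y) := by
  calc Y.adjugate = ⅟Y * (Y * Y.adjugate) := by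
        rw [← Matrix.mul_assoc, invOf_mul_self, Matrix.one_mul]
  _ = Y.det • ⅟Y := by rw [Matrix.mul_adjugate, Matrix.mul_smul, Matrix.mul_one]

lemma sig_eq (Y : Matrix ι ι ℂ) [Invertible Y] (c r : ι → ℂ) :
    sig Y c r = Y.det * (r ⬝ᵥ (⅟Y *ᵥ c)) := by
  rw [sig, adj_eq, smul_mulVec, dotProduct_smul, smul_eq_mul]

lemma entry_aux {κ₁ κ₂ : Type*} (Y : Matrix ι ι ℂ) (c r : ι → ℂ) (a : κ₁) (b : κ₂)
    (R : Matrix κ₁ ι ℂ) (C : Matrix ι κ₂ ℂ)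
    (hR : ∀ j, R a j = r j) (hC : ∀ i, C i b = c i) :
    (R * Y * C) a b = r ⬝ᵥ (Y *ᵥ c) := by
  simp only [Matrix.mul_apply, dotProduct, mulVec, Finset.sum_mul, Finset.mul_sum, hR, hC]
  rw [Finset.sum_comm]
  exact Finset.sum_congr rfl fun k _ => Finset.sum_congr rfl fun j _ => by ring

lemma det_bord_inv (Y : Matrix ι ι ℂ) [Invertible Y] (c r : ι → ℂ) (z : ℂ) :
    det (bord Y c r z) = z * det Y - sig Y c r := by
  rw [bord, det_fromBlocks₁₁, det_fin_one]
  simp only [Matrix.sub_apply, Matrix.of_apply]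
  rw [entry_aux (⅟Y) c r (0 : Fin 1) (0 : Fin 1) _ _ (fun j => rfl) (fun i => rfl), sig_eq]
  ring

lemma cont_sig (c r : ι → ℂ) : Continuous fun Y : Matrix ι ι ℂ => sig Y c r := by
  unfold sig
  exact Continuous.dotProduct continuous_const
    ((continuous_id.matrix_adjugate).matrix_mulVec continuous_const)

lemma cont_bord (c r : ι → ℂ) (z : ℂ) :
    Continuous fun Y : Matrix ι ι ℂ => bord Y c r z := by
  unfold bord
  exact Continuous.matrix_fromBlocks continuous_id continuous_const continuous_const
    continuous_const

lemma det_bord (X : Matrix ι ι ℂ) (c r : ι → ℂ) (z : ℂ) :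
    det (bord X c r z) = z * det X - sig X c r := by
  refine eq_of_isUnit_det (fun Y => det (bord Y c r z)) (fun Y => z * det Y - sig Y c r)
    ((cont_bord c r z).matrix_det)
    ((continuous_const.mul continuous_id.matrix_det).sub (cont_sig c r)) (fun Y hY => ?_) X
  letI := Y.invertibleOfIsUnitDet hY
  exact det_bord_inv Y c r z

lemma det_two (W : Matrix (Fin 1 ⊕ Fin 1) (Fin 1 ⊕ Fin 1) ℂ) :
    det W = W (Sum.inl 0) (Sum.inl 0) * W (Sum.inr 0) (Sum.inr 0)
      - W (Sum.inl 0) (Sum.inr 0) * W (Sum.inr 0) (Sum.inl 0) := by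
  have h : W = bord (Matrix.of fun _ _ : Fin 1 => W (Sum.inl 0) (Sum.inl 0))
      (fun _ => W (Sum.inl 0) (Sum.inr 0)) (fun _ => W (Sum.inr 0) (Sum.inl 0))
      (W (Sum.inr 0) (Sum.inr 0)) := by
    ext i j
    rcases i with i | i <;> rcases j with j | j <;>
      simp [bord, Subsingleton.elim i 0, Subsingleton.elim j 0]
  nth_rewrite 1 [h]
  rw [det_bord]
  simp [sig, Matrix.adjugate_subsingleton, Matrix.one_mulVec, dotProduct, det_fin_one]
  ring

lemma det_mul_det_dbord (X : Matrix ι ι ℂ) (c₁ c₂ r₁ r₂ : ι → ℂ) (z₁₁ z₁₂ z₂₁ z₂₂ : ℂ) :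
    det X * det (bord (bord X c₁ r₁ z₁₁) (Sum.elim c₂ fun _ => z₁₂)
        (Sum.elim r₂ fun _ => z₂₁) z₂₂)
    = (z₁₁ * det X - sig X c₁ r₁) * (z₂₂ * det X - sig X c₂ r₂)
      - (z₁₂ * det X - sig X c₂ r₁) * (z₂₁ * det X - sig X c₁ r₂) := by
  refine eq_of_isUnit_det
    (fun Y => det Y * det (bord (bord Y c₁ r₁ z₁₁) (Sum.elim c₂ fun _ => z₁₂)
        (Sum.elim r₂ fun _ => z₂₁) z₂₂))
    (fun Y => (z₁₁ * det Y - sig Y c₁ r₁) * (z₂₂ * det Y - sig Y c₂ r₂)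
      - (z₁₂ * det Y - sig Y c₂ r₁) * (z₂₁ * det Y - sig Y c₁ r₂))
    (continuous_id.matrix_det.mul ?_) ?_ (fun Y hY => ?_) X
  · exact (Continuous.matrix_fromBlocks (cont_bord c₁ r₁ z₁₁) continuous_const continuous_const
      continuous_const).matrix_det
  · exact (((continuous_const.mul continuous_id.matrix_det).sub (cont_sig c₁ r₁)).mul
      ((continuous_const.mul continuous_id.matrix_det).sub (cont_sig c₂ r₂))).sub
      (((continuous_const.mul continuous_id.matrix_det).sub (cont_sig c₂ r₁)).mul
      ((continuous_const.mul continuous_id.matrix_det).sub (cont_sig c₁ r₂)))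
  · letI := Y.invertibleOfIsUnitDet hY
    set C : Matrix ι (Fin 1 ⊕ Fin 1) ℂ :=
      Matrix.of (fun i => Sum.elim (fun _ => c₁ i) (fun _ => c₂ i)) with hC
    set R : Matrix (Fin 1 ⊕ Fin 1) ι ℂ :=
      Matrix.of (fun k j => Sum.elim (fun _ => r₁ j) (fun _ => r₂ j) k) with hR
    set Z : Matrix (Fin 1 ⊕ Fin 1) (Fin 1 ⊕ Fin 1) ℂ :=
      Matrix.of (fun k l => Sum.elim
        (fun _ => Sum.elim (fun _ => z₁₁) (fun _ => z₁₂) l)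
        (fun _ => Sum.elim (fun _ => z₂₁) (fun _ => z₂₂) l) k) with hZ
    have hmat : bord (bord Y c₁ r₁ z₁₁) (Sum.elim c₂ fun _ => z₁₂)
        (Sum.elim r₂ fun _ => z₂₁) z₂₂
        = (fromBlocks Y C R Z).submatrix (Equiv.sumAssoc ι (Fin 1) (Fin 1))
            (Equiv.sumAssoc ι (Fin 1) (Fin 1)) := by
      ext i j
      rcases i with (i | i) | i <;> rcases j with (j | j) | j <;> rfl
    rw [hmat, det_submatrix_equiv_self, det_fromBlocks₁₁, det_two]
    simp only [Matrix.sub_apply]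
    rw [entry_aux (⅟Y) c₁ r₁ (Sum.inl 0) (Sum.inl 0) _ _ (fun j => rfl) (fun i => rfl),
        entry_aux (⅟Y) c₂ r₂ (Sum.inr 0) (Sum.inr 0) _ _ (fun j => rfl) (fun i => rfl),
        entry_aux (⅟Y) c₂ r₁ (Sum.inl 0) (Sum.inr 0) _ _ (fun j => rfl) (fun i => rfl),
        entry_aux (⅟Y) c₁ r₂ (Sum.inr 0) (Sum.inl 0) _ _ (fun j => rfl) (fun i => rfl)]
    have e11 : Z (Sum.inl 0) (Sum.inl 0) = z₁₁ := rfl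
    have e22 : Z (Sum.inr 0) (Sum.inr 0) = z₂₂ := rfl
    have e12 : Z (Sum.inl 0) (Sum.inr 0) = z₁₂ := rfl
    have e21 : Z (Sum.inr 0) (Sum.inl 0) = z₂₁ := rfl
    rw [e11, e22, e12, e21, sig_eq Y c₁ r₁, sig_eq Y c₂ r₂, sig_eq Y c₂ r₁, sig_eq Y c₁ r₂]
    ring

noncomputable def elemE (r : ι → ℂ) : Matrix (ι ⊕ Fin 1) (ι ⊕ Fin 1) ℂ :=
  Matrix.fromBlocks (1 : Matrix ι ι ℂ) 0 (Matrix.of fun (_ : Fin 1) j => r j)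
    (1 : Matrix (Fin 1) (Fin 1) ℂ)

lemma det_elemE (r : ι → ℂ) : det (elemE r) = 1 := by
  rw [elemE, det_fromBlocks_zero₁₂, det_one, det_one, one_mul]

lemma mul_elemE (X : Matrix ι ι ℂ) (c r τ : ι → ℂ) (z : ℂ) :
    bord X c r z * elemE τ = bord (X + outer c τ) c (fun j => r j + z * τ j) z := by
  ext i j
  rcases i with i | i <;> rcases j with j | j
  all_goals
    simp [bord, elemE, outer, Matrix.mul_apply, Fintype.sum_sum_type, Fin.sum_univ_one,
      Matrix.one_apply, mul_ite, Finset.sum_ite_eq, Finset.sum_ite_eq']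
  all_goals intro h; exact absurd (Subsingleton.elim _ _) h

lemma det_add_outer (X : Matrix ι ι ℂ) (c r : ι → ℂ) :
    det (X + outer c r) = det X + sig X c r := by
  have h := congrArg det (mul_elemE X c r r (-1))
  rw [det_mul, det_elemE, mul_one] at h
  have h2 : (fun j => r j + (-1) * r j) = fun _ => (0 : ℂ) := by funext j; ring
  rw [h2] at h
  have h3 : det (bord (X + outer c r) c (fun _ => (0:ℂ)) (-1))
      = -det (X + outer c r) := by
    rw [bord]
    have hz : (Matrix.of fun (_ : Fin 1) (j : ι) => (0:ℂ)) = (0 : Matrix (Fin 1) ι ℂ) := by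
      ext i j; rfl
    rw [hz, det_fromBlocks_zero₂₁]
    simp [det_fin_one]
  rw [det_bord] at h
  rw [h3] at h
  linear_combination h

lemma det_bord_add_outer (X : Matrix ι ι ℂ) (c r τ : ι → ℂ) :
    det (bord (X + outer c τ) c r 0) = det (bord X c r 0) := by
  have h := congrArg det (mul_elemE X c r τ 0)
  rw [det_mul, det_elemE, mul_one] at h
  have h2 : (fun j => r j + 0 * τ j) = r := by funext j; ring
  rw [h2] at h
  exact h.symm

lemma prod_updateRow (M : Matrix ι ι ℂ) (r : ι → ℂ) (σ : Equiv.Perm ι) (i : ι) :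
    ∏ j, (updateRow M (σ i) r) (σ j) j
      = (∏ j ∈ Finset.univ.erase i, M (σ j) j) * r i := by
  rw [← Finset.mul_prod_erase Finset.univ _ (Finset.mem_univ i)]
  rw [mul_comm]
  congr 1
  · exact Finset.prod_congr rfl fun j hj =>
      congrFun (Matrix.updateRow_ne (σ.injective.ne (Finset.mem_erase.mp hj).1)) j
  · simp [Matrix.updateRow_self]

lemma hasDerivAt_det (X : ℝ → Matrix ι ι ℂ) (X' : Matrix ι ι ℂ) (x : ℝ)
    (h : ∀ i j, HasDerivAt (fun t => X t i j) (X' i j) x) :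
    HasDerivAt (fun t => (X t).det) (∑ i, det (updateRow (X x) i (X' i))) x := by
  have hprod : ∀ σ : Equiv.Perm ι, HasDerivAt (fun t => ∏ i, X t (σ i) i)
      (∑ i, (∏ j ∈ Finset.univ.erase i, X x (σ j) j) * X' (σ i) i) x := by
    intro σ
    have := HasDerivAt.fun_finsetProd (u := Finset.univ) (f := fun i t => X t (σ i) i)
      (f' := fun i => X' (σ i) i) (x := x) (fun i _ => h (σ i) i)
    simpa [smul_eq_mul] using this
  have hsum : HasDerivAt (fun t => (X t).det)
      (∑ σ : Equiv.Perm ι, ((Equiv.Perm.sign σ : ℤ) : ℂ) *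
        ∑ i, (∏ j ∈ Finset.univ.erase i, X x (σ j) j) * X' (σ i) i) x := by
    simp only [Matrix.det_apply']
    exact HasDerivAt.fun_sum fun σ _ => (hprod σ).const_mul _
  convert hsum using 1
  calc ∑ k, det (updateRow (X x) k (X' k))
      = ∑ k, ∑ σ : Equiv.Perm ι, ((Equiv.Perm.sign σ : ℤ) : ℂ) *
          ∏ j, (updateRow (X x) k (X' k)) (σ j) j := by
        simp only [Matrix.det_apply']
    _ = ∑ σ : Equiv.Perm ι, ∑ k, ((Equiv.Perm.sign σ : ℤ) : ℂ) *
          ∏ j, (updateRow (X x) k (X' k)) (σ j) j := Finset.sum_comm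
    _ = ∑ σ : Equiv.Perm ι, ((Equiv.Perm.sign σ : ℤ) : ℂ) *
          ∑ i, (∏ j ∈ Finset.univ.erase i, X x (σ j) j) * X' (σ i) i := by
        refine Finset.sum_congr rfl fun σ _ => ?_
        rw [Finset.mul_sum]
        rw [← Equiv.sum_comp σ (fun k => ((Equiv.Perm.sign σ : ℤ) : ℂ) *
          ∏ j, (updateRow (X x) k (X' k)) (σ j) j)]
        refine Finset.sum_congr rfl fun i _ => ?_
        rw [prod_updateRow]

lemma sum_det_updateRow_rows (Mx dM : Matrix ι ι ℂ) (coef ρ : ι → ℂ)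
    (hrow : ∀ i, dM i = fun j => coef i * ρ j) :
    ∑ i, det (updateRow Mx i (dM i)) = sig Mx coef ρ := by
  rw [← sum_mul_det_updateRow]
  refine Finset.sum_congr rfl fun i _ => ?_
  rw [hrow i]
  exact Matrix.det_updateRow_smul Mx i (coef i) ρ

section Scalars

lemma zsplit (a b : ℂ) (n : ℤ) : (-a / b) ^ n = (-1 : ℂ) ^ n * a ^ n * (b ^ n)⁻¹ := by
  have h1 : (-a / b) = (-1) * a * b⁻¹ := by ring
  rw [h1, mul_zpow, mul_zpow, _root_.inv_zpow]

lemma zsplit2 (a b : ℂ) (k : ℤ) : (a / b) ^ (-k) = (a ^ k)⁻¹ * b ^ k := by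
  rw [_root_.zpow_neg, div_zpow, inv_div, div_eq_mul_inv, mul_comm]

lemma scalar_deriv (P Pb U V E Eb μc : ℂ) (hP : P ≠ 0) (hPb : Pb ≠ 0) (hS : P + Pb ≠ 0)
    (hU : U ≠ 0) (n k : ℤ) :
    μc * Pb / (P + Pb) * (-P / Pb) ^ n * (U / V) ^ (-k) * (E * Eb) * (1 / P + 1 / Pb)
      = μc * (-1 : ℂ) ^ n * (P ^ (n - 1) * U ^ (-k) * E) * (Pb ^ (-n) * V ^ k * Eb) := by
  rw [zsplit, zsplit2, zpow_sub_one₀ hP, _root_.zpow_neg, _root_.zpow_neg]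
  have h1 : P ^ n ≠ 0 := zpow_ne_zero _ hP
  have h2 : Pb ^ n ≠ 0 := zpow_ne_zero _ hPb
  have h3 : U ^ k ≠ 0 := zpow_ne_zero _ hU
  field_simp
  ring

lemma scalar_shift_up (P Pb U V E Eb μc : ℂ) (hP : P ≠ 0) (hPb : Pb ≠ 0) (hS : P + Pb ≠ 0)
    (hU : U ≠ 0) (n k : ℤ) :
    μc * Pb / (P + Pb) * (-P / Pb) ^ (n + 1) * (U / V) ^ (-k) * (E * Eb)
      = μc * Pb / (P + Pb) * (-P / Pb) ^ n * (U / V) ^ (-k) * (E * Eb)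
        - μc * (-1 : ℂ) ^ n * (P ^ n * U ^ (-k) * E) * (Pb ^ (-n) * V ^ k * Eb) := by
  rw [zpow_add_one₀ (by simp [hP, hPb] : (-P / Pb) ≠ 0), zsplit, zsplit2, _root_.zpow_neg, _root_.zpow_neg]
  have h1 : P ^ n ≠ 0 := zpow_ne_zero _ hP
  have h2 : Pb ^ n ≠ 0 := zpow_ne_zero _ hPb
  have h3 : U ^ k ≠ 0 := zpow_ne_zero _ hU
  field_simp
  ring

lemma scalar_shift_down (P Pb U V E Eb μc : ℂ) (hP : P ≠ 0) (hPb : Pb ≠ 0) (hS : P + Pb ≠ 0)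
    (hU : U ≠ 0) (n k : ℤ) :
    μc * Pb / (P + Pb) * (-P / Pb) ^ (n - 1) * (U / V) ^ (-k) * (E * Eb)
      = μc * Pb / (P + Pb) * (-P / Pb) ^ n * (U / V) ^ (-k) * (E * Eb)
        - μc * (-1 : ℂ) ^ n * (P ^ (n - 1) * U ^ (-k) * E)
            * (Pb * (Pb ^ (-n) * V ^ k * Eb)) := by
  rw [zpow_sub_one₀ (by simp [hP, hPb] : (-P / Pb) ≠ 0), zsplit, zsplit2,
    zpow_sub_one₀ hP, _root_.zpow_neg, _root_.zpow_neg]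
  have h1 : P ^ n ≠ 0 := zpow_ne_zero _ hP
  have h2 : Pb ^ n ≠ 0 := zpow_ne_zero _ hPb
  have h3 : U ^ k ≠ 0 := zpow_ne_zero _ hU
  field_simp
  ring

lemma scalar_phi (P U E : ℂ) (hP : P ≠ 0) (n k : ℤ) :
    P ^ n * U ^ (-k) * E * (1 / P) = P ^ (n - 1) * U ^ (-k) * E := by
  rw [zpow_sub_one₀ hP]
  field_simp

end Scalars

end HirotaAux

namespace HirotaAux

/-- The determinant-theoretic core of the Hirota bilinear identity. -/
lemma hirota_core {ι : Type*} [Fintype ι] [DecidableEq ι]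
    (Mf : ℝ → Matrix ι ι ℂ) (Mup Mdown : Matrix ι ι ℂ)
    (cf : ℝ → ι → ℂ) (w vt vt2 Ψt : ι → ℂ) (α : ℂ) (x : ℝ)
    (hMd : ∀ a b, HasDerivAt (fun t => Mf t a b) (w a * (α * vt b)) x)
    (hcd : ∀ a, HasDerivAt (fun t => cf t a) (w a) x)
    (hup : Mup = Mf x + outer (cf x) (fun b => -α * vt b))
    (hdown : Mdown = Mf x + outer w (fun b => -α * vt2 b)) :
    deriv (fun t => det (bord (Mf t) (cf t) Ψt 0)) x * det (Mf x)
      - det (bord (Mf x) (cf x) Ψt 0) * deriv (fun t => det (Mf t)) x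
      = det (bord Mdown w Ψt 0) * det Mup := by
  have hDf : HasDerivAt (fun t => det (Mf t)) (α * sig (Mf x) w vt) x := by
    have hd := hasDerivAt_det Mf (Matrix.of fun a b => w a * (α * vt b)) x
      (fun a b => hMd a b)
    rwa [sum_det_updateRow_rows (Mf x) (Matrix.of fun a b => w a * (α * vt b)) w
      (fun b => α * vt b) (fun i => rfl), sig_mul_row] at hd
  have hDg : HasDerivAt (fun t => det (bord (Mf t) (cf t) Ψt 0))
      (sig (bord (Mf x) (cf x) Ψt 0) (Sum.elim w fun _ => 0)
        (Sum.elim (fun b => α * vt b) fun _ => 1)) x := by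
    have hd := hasDerivAt_det (fun t => bord (Mf t) (cf t) Ψt 0)
      (Matrix.of fun a b => (Sum.elim w fun _ => (0:ℂ)) a *
        (Sum.elim (fun b => α * vt b) fun _ => (1:ℂ)) b) x ?_
    · rwa [sum_det_updateRow_rows (bord (Mf x) (cf x) Ψt 0)
        (Matrix.of fun a b => (Sum.elim w fun _ => (0:ℂ)) a *
          (Sum.elim (fun b => α * vt b) fun _ => (1:ℂ)) b)
        (Sum.elim w fun _ => (0:ℂ))
        (Sum.elim (fun b => α * vt b) fun _ => (1:ℂ)) (fun i => rfl)] at hd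
    · intro a b
      rcases a with a | a <;> rcases b with b | b
      · simp only [Matrix.of_apply, Sum.elim_inl]
        exact hMd a b
      · simp only [Matrix.of_apply, Sum.elim_inl, Sum.elim_inr, mul_one]
        exact hcd a
      · simp only [Matrix.of_apply, Sum.elim_inr, zero_mul]
        exact hasDerivAt_const x (Ψt b)
      · simp only [Matrix.of_apply, Sum.elim_inr, zero_mul]
        exact hasDerivAt_const x (0 : ℂ)
  have hg0 : det (bord (Mf x) (cf x) Ψt 0) = - sig (Mf x) (cf x) Ψt := by
    rw [det_bord]; ring
  have hgder_eq : sig (bord (Mf x) (cf x) Ψt 0) (Sum.elim w fun _ => 0)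
      (Sum.elim (fun b => α * vt b) fun _ => 1)
      = - det (bord (bord (Mf x) (cf x) Ψt 0) (Sum.elim w fun _ => 0)
          (Sum.elim (fun b => α * vt b) fun _ => 1) 0) := by
    rw [det_bord]; ring
  have hI2 := det_mul_det_dbord (Mf x) (cf x) w Ψt (fun b => α * vt b) 0 0 1 0
  rw [sig_mul_row (Mf x) (cf x) vt α, sig_mul_row (Mf x) w vt α] at hI2
  have hfup : det Mup = det (Mf x) - α * sig (Mf x) (cf x) vt := by
    rw [hup, det_add_outer, sig_mul_row (Mf x) (cf x) vt (-α)]; ring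
  have hgdown : det (bord Mdown w Ψt 0) = - sig (Mf x) w Ψt := by
    rw [hdown, det_bord_add_outer, det_bord]; ring
  rw [hDf.deriv, hDg.deriv, hg0, hfup, hgdown, hgder_eq]
  linear_combination -hI2

end HirotaAux

namespace HirotaAux

lemma blockDet_eq {N : ℕ} (Ab Bb : Matrix (Fin N) (Fin N) ℂ) :
    blockDet Ab Bb = det (fromBlocks Ab 1 (-1) Bb) := rfl

lemma borderedDet_eq {N : ℕ} (Ab Bb : Matrix (Fin N) (Fin N) ℂ)
    (c r : (Fin N ⊕ Fin N) → ℂ) :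
    borderedDet Ab Bb c r = det (bord (fromBlocks Ab 1 (-1) Bb) c r 0) := by
  unfold borderedDet bord
  congr 1

end HirotaAux

open HirotaAux in
/-- Hirota derivative bilinear equation `D_{x₋₁} g · f = g_{n−1} f_{n+1}` satisfied by
the Gram-type tau functions of the two-component KP–Toda hierarchy. -/
theorem hirota_derivative_bilinear (N : ℕ) (hN : 1 ≤ N)
    (p pb q qb : Fin N → ℂ)
    (hp : ∀ i, p i ≠ 0) (hpb : ∀ i, pb i ≠ 0) (hq : ∀ i, q i ≠ 0) (hqb : ∀ i, qb i ≠ 0)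
    (hppb : ∀ i j, p i + pb j ≠ 0) (hqqb : ∀ i j, q i + qb j ≠ 0)
    (μ ν : ℂ) (ξ0 ξb0 η0 ηb0 : Fin N → ℂ)
    (a₁ a₂ : ℝ) (ha₁ : a₁ ≠ 0) (ha₂ : a₂ ≠ 0)
    (h1 : ∀ i, 1 - (a₁ : ℂ) * p i ≠ 0) (h2 : ∀ j, 1 + (a₁ : ℂ) * pb j ≠ 0)
    (h3 : ∀ i, 1 - (a₂ : ℂ) * q i ≠ 0) (h4 : ∀ j, 1 + (a₂ : ℂ) * qb j ≠ 0)
    (y : ℝ)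
    (η ηb : Fin N → ℂ)
    (hη : ∀ i, η i = (y : ℂ) / q i + η0 i)
    (hηb : ∀ j, ηb j = (y : ℂ) / qb j + ηb0 j)
    (ξ ξb : Fin N → ℝ → ℂ)
    (hξ : ∀ i x, ξ i x = (x : ℂ) / p i + ξ0 i)
    (hξb : ∀ j x, ξb j x = (x : ℂ) / pb j + ξb0 j)
    (A : ℤ → ℤ → ℝ → Matrix (Fin N) (Fin N) ℂ)
    (hA : ∀ n k₁ x i j, A n k₁ x i j =
      (μ * pb j / (p i + pb j)) * (-(p i) / pb j) ^ n *
      ((1 - (a₁ : ℂ) * p i) / (1 + (a₁ : ℂ) * pb j)) ^ (-k₁) *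
      Complex.exp (ξ i x + ξb j x))
    (B : ℤ → ℤ → Matrix (Fin N) (Fin N) ℂ)
    (hB : ∀ m k₂ i j, B m k₂ i j =
      (ν / (q i + qb j)) * (-(q i) / qb j) ^ m *
      ((1 - (a₂ : ℂ) * q i) / (1 + (a₂ : ℂ) * qb j)) ^ (-k₂) *
      Complex.exp (η i + ηb j))
    (Φ : ℤ → ℤ → ℝ → Fin N → ℂ)
    (hΦ : ∀ n k₁ x j, Φ n k₁ x j =
      p j ^ n * (1 - (a₁ : ℂ) * p j) ^ (-k₁) * Complex.exp (ξ j x))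
    (Ψb : ℤ → ℤ → Fin N → ℂ)
    (hΨb : ∀ m k₂ j, Ψb m k₂ j =
      (-(qb j)) ^ (-m) * (1 + (a₂ : ℂ) * qb j) ^ k₂ * Complex.exp (ηb j))
    (f : ℤ → ℤ → ℤ → ℤ → ℝ → ℂ)
    (hf : ∀ m k₂ n k₁ x, f m k₂ n k₁ x = blockDet (A n k₁ x) (B m k₂))
    (g : ℤ → ℤ → ℤ → ℤ → ℝ → ℂ)
    (hg : ∀ m k₂ n k₁ x, g m k₂ n k₁ x = borderedDet (A n k₁ x) (B m k₂)
      (Sum.elim (Φ n k₁ x) (fun _ => 0))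
      (Sum.elim (fun _ => 0) (fun j => -(Ψb m k₂ j)))) :
    ∀ (n k₁ m k₂ : ℤ) (x : ℝ),
      deriv (g m k₂ n k₁) x * f m k₂ n k₁ x - g m k₂ n k₁ x * deriv (f m k₂ n k₁) x
      = g m k₂ (n - 1) k₁ x * f m k₂ (n + 1) k₁ x := by
  intro n k₁ m k₂ x
  classical
  -- basic derivative facts for the phases
  have hid : HasDerivAt (fun t : ℝ => (t : ℂ)) 1 x := by
    simpa using (hasDerivAt_id x).ofReal_comp
  have hξd : ∀ i, HasDerivAt (fun t : ℝ => ξ i t) (1 / p i) x := by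
    intro i
    have h := (hid.div_const (p i)).add_const (ξ0 i)
    have heq : (fun t : ℝ => (t : ℂ) / p i + ξ0 i) = fun t => ξ i t := by
      funext t; rw [hξ]
    rw [heq] at h
    simpa using h
  have hξbd : ∀ j, HasDerivAt (fun t : ℝ => ξb j t) (1 / pb j) x := by
    intro j
    have h := (hid.div_const (pb j)).add_const (ξb0 j)
    have heq : (fun t : ℝ => (t : ℂ) / pb j + ξb0 j) = fun t => ξb j t := by
      funext t; rw [hξb]
    rw [heq] at h
    simpa using h
  -- entrywise derivative of A
  have hAd : ∀ i j, HasDerivAt (fun t => A n k₁ t i j)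
      (Φ (n-1) k₁ x i * ((μ * (-1:ℂ)^n) *
        ((pb j) ^ (-n) * (1 + (a₁:ℂ) * pb j) ^ k₁ * Complex.exp (ξb j x)))) x := by
    intro i j
    have hfn : (fun t => A n k₁ t i j) = fun t =>
        ((μ * pb j / (p i + pb j)) * (-(p i) / pb j) ^ n *
          ((1 - (a₁:ℂ) * p i) / (1 + (a₁:ℂ) * pb j)) ^ (-k₁)) *
          Complex.exp (ξ i t + ξb j t) := by
      funext t; rw [hA]
    rw [hfn]
    have hd := (((hξd i).add (hξbd j)).cexp).const_mul
      ((μ * pb j / (p i + pb j)) * (-(p i) / pb j) ^ n *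
        ((1 - (a₁:ℂ) * p i) / (1 + (a₁:ℂ) * pb j)) ^ (-k₁))
    refine hd.congr_deriv ?_
    symm
    simp only [Pi.add_apply]
    rw [hΦ, Complex.exp_add]
    linear_combination -(scalar_deriv (p i) (pb j) (1 - (a₁:ℂ) * p i) (1 + (a₁:ℂ) * pb j)
      (Complex.exp (ξ i x)) (Complex.exp (ξb j x)) μ (hp i) (hpb j) (hppb i j) (h1 i) n k₁)
  -- entrywise derivative of Φ
  have hΦd : ∀ i, HasDerivAt (fun t => Φ n k₁ t i) (Φ (n-1) k₁ x i) x := by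
    intro i
    have hfn : (fun t => Φ n k₁ t i) = fun t =>
        (p i ^ n * (1 - (a₁:ℂ) * p i) ^ (-k₁)) * Complex.exp (ξ i t) := by
      funext t; rw [hΦ]
    rw [hfn]
    have hd := ((hξd i).cexp).const_mul (p i ^ n * (1 - (a₁:ℂ) * p i) ^ (-k₁))
    refine hd.congr_deriv ?_
    symm
    rw [hΦ]
    linear_combination -(scalar_phi (p i) (1 - (a₁:ℂ) * p i) (Complex.exp (ξ i x)) (hp i) n k₁)
  -- shift identities for A
  have hupA : ∀ i j, A (n+1) k₁ x i j = A n k₁ x i j + (Φ n k₁ x i) *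
      (-(μ * (-1:ℂ)^n) * ((pb j) ^ (-n) * (1 + (a₁:ℂ) * pb j) ^ k₁ *
        Complex.exp (ξb j x))) := by
    intro i j
    rw [hA, hA, hΦ, Complex.exp_add]
    linear_combination scalar_shift_up (p i) (pb j) (1 - (a₁:ℂ) * p i) (1 + (a₁:ℂ) * pb j)
      (Complex.exp (ξ i x)) (Complex.exp (ξb j x)) μ (hp i) (hpb j) (hppb i j) (h1 i) n k₁
  have hdownA : ∀ i j, A (n-1) k₁ x i j = A n k₁ x i j + (Φ (n-1) k₁ x i) *
      (-(μ * (-1:ℂ)^n) * (pb j * ((pb j) ^ (-n) * (1 + (a₁:ℂ) * pb j) ^ k₁ *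
        Complex.exp (ξb j x)))) := by
    intro i j
    rw [hA, hA, hΦ, Complex.exp_add]
    linear_combination scalar_shift_down (p i) (pb j) (1 - (a₁:ℂ) * p i) (1 + (a₁:ℂ) * pb j)
      (Complex.exp (ξ i x)) (Complex.exp (ξb j x)) μ (hp i) (hpb j) (hppb i j) (h1 i) n k₁
  -- apply the core lemma
  have hcore := hirota_core
    (fun t => fromBlocks (A n k₁ t) 1 (-1) (B m k₂))
    (fromBlocks (A (n+1) k₁ x) 1 (-1) (B m k₂))
    (fromBlocks (A (n-1) k₁ x) 1 (-1) (B m k₂))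
    (fun t => Sum.elim (Φ n k₁ t) fun _ => 0)
    (Sum.elim (Φ (n-1) k₁ x) fun _ => 0)
    (Sum.elim (fun j => (pb j) ^ (-n) * (1 + (a₁:ℂ) * pb j) ^ k₁ *
      Complex.exp (ξb j x)) fun _ => 0)
    (Sum.elim (fun j => pb j * ((pb j) ^ (-n) * (1 + (a₁:ℂ) * pb j) ^ k₁ *
      Complex.exp (ξb j x))) fun _ => 0)
    (Sum.elim (fun _ => 0) (fun j => -(Ψb m k₂ j)))
    (μ * (-1:ℂ)^n) x
    ?hMd ?hcd ?hup ?hdown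
  case hMd =>
    intro a b
    rcases a with i | i <;> rcases b with j | j
    · simp only [Sum.elim_inl]
      exact hAd i j
    · simp only [Sum.elim_inl, Sum.elim_inr, mul_zero]
      exact hasDerivAt_const x ((1 : Matrix (Fin N) (Fin N) ℂ) i j)
    · simp only [Sum.elim_inr, zero_mul]
      exact hasDerivAt_const x ((-1 : Matrix (Fin N) (Fin N) ℂ) i j)
    · simp only [Sum.elim_inr, zero_mul]
      exact hasDerivAt_const x (B m k₂ i j)
  case hcd =>
    intro a
    rcases a with i | i
    · simp only [Sum.elim_inl]
      exact hΦd i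
    · simp only [Sum.elim_inr]
      exact hasDerivAt_const x (0 : ℂ)
  case hup =>
    ext a b
    rcases a with i | i <;> rcases b with j | j
    · simp only [fromBlocks_apply₁₁, Matrix.add_apply, outer, Matrix.of_apply, Sum.elim_inl]
      exact hupA i j
    · simp only [fromBlocks_apply₁₂, Matrix.add_apply, outer, Matrix.of_apply, Sum.elim_inl,
        Sum.elim_inr, mul_zero, neg_zero, zero_mul, add_zero]
    · simp only [fromBlocks_apply₂₁, Matrix.add_apply, outer, Matrix.of_apply, Sum.elim_inr,
        zero_mul, add_zero]
    · simp only [fromBlocks_apply₂₂, Matrix.add_apply, outer, Matrix.of_apply, Sum.elim_inr,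
        zero_mul, add_zero]
  case hdown =>
    ext a b
    rcases a with i | i <;> rcases b with j | j
    · simp only [fromBlocks_apply₁₁, Matrix.add_apply, outer, Matrix.of_apply, Sum.elim_inl]
      exact hdownA i j
    · simp only [fromBlocks_apply₁₂, Matrix.add_apply, outer, Matrix.of_apply, Sum.elim_inl,
        Sum.elim_inr, mul_zero, neg_zero, zero_mul, add_zero]
    · simp only [fromBlocks_apply₂₁, Matrix.add_apply, outer, Matrix.of_apply, Sum.elim_inr,
        zero_mul, add_zero]
    · simp only [fromBlocks_apply₂₂, Matrix.add_apply, outer, Matrix.of_apply, Sum.elim_inr,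
        zero_mul, add_zero]
  -- rewrite the goal in terms of determinants
  have hgfun : g m k₂ n k₁ = fun t =>
      det (bord (fromBlocks (A n k₁ t) 1 (-1) (B m k₂)) (Sum.elim (Φ n k₁ t) fun _ => 0)
        (Sum.elim (fun _ => 0) (fun j => -(Ψb m k₂ j))) 0) :=
    funext fun t => by rw [hg, borderedDet_eq]
  have hffun : f m k₂ n k₁ = fun t => det (fromBlocks (A n k₁ t) 1 (-1) (B m k₂)) :=
    funext fun t => by rw [hf, blockDet_eq]
  have hgdval : g m k₂ (n-1) k₁ x =
      det (bord (fromBlocks (A (n-1) k₁ x) 1 (-1) (B m k₂))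
        (Sum.elim (Φ (n-1) k₁ x) fun _ => 0)
        (Sum.elim (fun _ => 0) (fun j => -(Ψb m k₂ j))) 0) := by
    rw [hg, borderedDet_eq]
  have hfuval : f m k₂ (n+1) k₁ x = det (fromBlocks (A (n+1) k₁ x) 1 (-1) (B m k₂)) := by
    rw [hf, blockDet_eq]
  rw [hgfun, hffun, hgdval, hfuval]
  exact hcore
end

section
/- Let N ≥ 1, let p_1,…,p_N, p̄_1,…,p̄_N, q_1,…,q_N, q̄_1,…,q̄_N ∈ ℂ be nonzero with p_i + p̄_j ≠ 0 and q_i + q̄_j ≠ 0 for all i,j, let μ, ν ∈ ℂ, and let a₁, a₂, b₁, b₂ ∈ ℝ be nonzero with 1 − a₁ p_i ≠ 0, 1 + a₁ p̄_j ≠ 0, 1 − a₂ q_i ≠ 0, 1 + a₂ q̄_j ≠ 0, 1 − b₁/p_i ≠ 0, 1 + b₁/p̄_j ≠ 0, 1 − b₂/q_i ≠ 0, 1 + b₂/q̄_j ≠ 0 for all i,j. For n, k₁, l₁, m, k₂, l₂ ∈ ℤ define: A(n,k₁,l₁) the N×N matrix with entry (μ p̄_j/(p_i+p̄_j))·(−p_i/p̄_j)^n·((1−a₁p_i)/(1+a₁p̄_j))^{−k₁}·((1−b₁/p_i)/(1+b₁/p̄_j))^{−l₁};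 B(m,k₂,l₂) with entry (ν/(q_i+q̄_j))·(−q_i/q̄_j)^m·((1−a₂q_i)/(1+a₂q̄_j))^{−k₂}·((1−b₂/q_i)/(1+b₂/q̄_j))^{−l₂}; the row vector Φ(n,k₁,l₁) with j-th entry p_j^n (1−a₁p_j)^{−k₁}(1−b₁/p_j)^{−l₁}; the row vector Ψ̄(m,k₂,l₂) with j-th entry (−q̄_j)^{−m}(1+a₂q̄_j)^{k₂}(1+b₂/q̄_j)^{l₂}. Set f^{m,k₂,l₂}_{n,k₁,l₁} = det[[A(n,k₁,l₁), I],[−I, B(m,k₂,l₂)]] and g^{m,k₂,l₂}_{n,k₁,l₁} = det[[A(n,k₁,l₁), I, Φ(n,k₁,l₁)ᵀ],[−I, B(m,k₂,l₂), 0],[0, −Ψ̄(m,k₂,l₂), 0]]. Then for all n, k₁, l₁, m, k₂, l₂ ∈ ℤ: (1/a₁)·(g^{m+1,k₂,l₂}_{n,k₁+1,l₁}·f^{m,k₂,l₂}_{n+1,k₁,l₁} − g^{m+1,k₂,l₂}_{n,k₁,l₁}·f^{m,k₂,l₂}_{n+1,k₁+1,l₁}) = g^{m+1,k₂,l₂}_{n+1,k₁+1,l₁}·f^{m,k₂,l₂}_{n,k₁,l₁}.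 -/
open Matrix

set_option linter.unusedSectionVars false
set_option maxHeartbeats 1000000


section Infra
variable {R : Type*} [CommRing R] {S : Type*} [Fintype S] [DecidableEq S]

/-- Column matrix. -/
def fdCol (c : S → R) : Matrix S (Fin 1) R := Matrix.of fun i _ => c i
/-- Row matrix. -/
def fdRow (r : S → R) : Matrix (Fin 1) S R := Matrix.of fun _ j => r j

/-- Bordered determinant. -/
noncomputable def fdJ (E : Matrix S S R) (c r : S → R) : R :=
  (Matrix.fromBlocks E (fdCol c) (fdRow r) (0 : Matrix (Fin 1) (Fin 1) R)).det

lemma fdCol_neg (c : S → R) : fdCol (-c) = -fdCol c := by ext i j; simp [fdCol]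

lemma fdRow_neg (r : S → R) : fdRow (-r) = -fdRow r := by ext i j; simp [fdRow]

lemma fdCol_mul_fdRow (a : S → R) (b : S → R) (i j : S) :
    (fdCol a * fdRow b) i j = a i * b j := by
  simp [fdCol, fdRow, Matrix.mul_apply]

lemma det_unitUpper (Y : Matrix S (Fin 1) R) :
    (Matrix.fromBlocks (1 : Matrix S S R) Y 0 (1 : Matrix (Fin 1) (Fin 1) R)).det = 1 := by
  rw [det_fromBlocks_zero₂₁]; simp

lemma det_unitLower (Y : Matrix (Fin 1) S R) :
    (Matrix.fromBlocks (1 : Matrix S S R) 0 Y (1 : Matrix (Fin 1) (Fin 1) R)).det = 1 := by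
  rw [det_fromBlocks_zero₁₂]; simp

/-- Adding a multiple of the border row to the matrix does not change the bordered det. -/
lemma fdJ_row_invariant (F : Matrix S S R) (y c r : S → R) :
    fdJ (F + fdCol y * fdRow r) c r = fdJ F c r := by
  have h : Matrix.fromBlocks (1 : Matrix S S R) (fdCol (-y)) 0 (1 : Matrix (Fin 1) (Fin 1) R) *
      Matrix.fromBlocks (F + fdCol y * fdRow r) (fdCol c) (fdRow r) 0
      = Matrix.fromBlocks F (fdCol c) (fdRow r) 0 := by
    rw [Matrix.fromBlocks_multiply, Matrix.fromBlocks_inj]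
    refine ⟨?_, ?_, ?_, ?_⟩
    · rw [Matrix.one_mul, fdCol_neg, Matrix.neg_mul]; abel
    · simp
    · simp
    · simp
  have := congrArg Matrix.det h
  rwa [det_mul, det_unitUpper, one_mul] at this

/-- Adding a multiple of the border column to the matrix does not change the bordered det. -/
lemma fdJ_col_invariant (F : Matrix S S R) (u c r : S → R) :
    fdJ (F + fdCol c * fdRow u) c r = fdJ F c r := by
  have h : Matrix.fromBlocks (F + fdCol c * fdRow u) (fdCol c) (fdRow r) 0 *
      Matrix.fromBlocks (1 : Matrix S S R) 0 (fdRow (-u)) (1 : Matrix (Fin 1) (Fin 1) R)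
      = Matrix.fromBlocks F (fdCol c) (fdRow r) 0 := by
    rw [Matrix.fromBlocks_multiply, Matrix.fromBlocks_inj]
    refine ⟨?_, ?_, ?_, ?_⟩
    · rw [Matrix.mul_one, fdRow_neg, Matrix.mul_neg]; abel
    · simp
    · simp
    · simp
  have := congrArg Matrix.det h
  rwa [det_mul, det_unitLower, mul_one] at this

lemma fromBlocks_col_eq_update (E : Matrix S S R) (c c' r : S → R) :
    Matrix.fromBlocks E (fdCol c) (fdRow r) (0 : Matrix (Fin 1) (Fin 1) R)
      = (Matrix.fromBlocks E (fdCol c') (fdRow r) 0).updateCol (Sum.inr 0)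
          (Sum.elim c (fun _ : Fin 1 => (0:R))) := by
  ext i j
  rcases j with j | j
  · rw [Matrix.updateCol_ne (by simp)]
    rcases i with i | i <;> rfl
  · have : j = 0 := Subsingleton.elim _ _
    subst this
    rw [Matrix.updateCol_apply, if_pos rfl]
    rcases i with i | i <;> simp [fdCol]

lemma fromBlocks_row_eq_update (E : Matrix S S R) (Cb : Matrix S (Fin 1) R) (r r' : S → R) :
    Matrix.fromBlocks E Cb (fdRow r) (0 : Matrix (Fin 1) (Fin 1) R)
      = (Matrix.fromBlocks E Cb (fdRow r') 0).updateRow (Sum.inr 0)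
          (Sum.elim r (fun _ : Fin 1 => (0:R))) := by
  ext i j
  rcases i with i | i
  · rw [Matrix.updateRow_ne (by simp)]
    rcases j with j | j <;> rfl
  · have : i = 0 := Subsingleton.elim _ _
    subst this
    rw [Matrix.updateRow_self]
    rcases j with j | j <;> simp [fdRow]

lemma fdJ_add_col (E : Matrix S S R) (c c' r : S → R) :
    fdJ E (c + c') r = fdJ E c r + fdJ E c' r := by
  unfold fdJ
  rw [fromBlocks_col_eq_update E (c + c') 0 r, fromBlocks_col_eq_update E c 0 r,
    fromBlocks_col_eq_update E c' 0 r]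
  have h : (Sum.elim (c + c') (fun _ : Fin 1 => (0:R)))
      = Sum.elim c (fun _ : Fin 1 => (0:R)) + Sum.elim c' (fun _ : Fin 1 => (0:R)) := by
    funext x; rcases x with x | x <;> simp
  rw [h, det_updateCol_add]

lemma fdJ_smul_col (E : Matrix S S R) (a : R) (c r : S → R) :
    fdJ E (a • c) r = a * fdJ E c r := by
  unfold fdJ
  rw [fromBlocks_col_eq_update E (a • c) 0 r, fromBlocks_col_eq_update E c 0 r]
  have h : (Sum.elim (a • c) (fun _ : Fin 1 => (0:R)))
      = a • Sum.elim c (fun _ : Fin 1 => (0:R)) := by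
    funext x; rcases x with x | x <;> simp
  rw [h, det_updateCol_smul]

lemma fdJ_smul_row (E : Matrix S S R) (a : R) (c r : S → R) :
    fdJ E c (a • r) = a * fdJ E c r := by
  unfold fdJ
  rw [fromBlocks_row_eq_update E _ (a • r) r]
  have h : (Sum.elim (a • r) (fun _ : Fin 1 => (0:R)))
      = a • Sum.elim r (fun _ : Fin 1 => (0:R)) := by
    funext x; rcases x with x | x <;> simp
  rw [h, det_updateRow_smul]
  congr 1
  rw [← fromBlocks_row_eq_update]

lemma det_fromBlocks_corner_one (E : Matrix S S R) (c r : S → R) :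
    (Matrix.fromBlocks E (fdCol c) (fdRow r) (1 : Matrix (Fin 1) (Fin 1) R)).det
      = fdJ E c r + E.det := by
  have h1 : Matrix.fromBlocks E (fdCol c) (fdRow r) (1 : Matrix (Fin 1) (Fin 1) R)
      = (Matrix.fromBlocks E (fdCol c) (fdRow r) 0).updateRow (Sum.inr 0)
          (Sum.elim r (fun _ : Fin 1 => (0:R)) + Sum.elim (0 : S → R) (fun _ : Fin 1 => (1:R))) := by
    ext i j
    rcases i with i | i
    · rw [Matrix.updateRow_ne (by simp)]
      rcases j with j | j <;> rfl
    · have : i = 0 := Subsingleton.elim _ _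
      subst this
      rw [Matrix.updateRow_self]
      rcases j with j | j
      · simp [fdRow]
      · have : j = 0 := Subsingleton.elim _ _
        subst this
        simp [Matrix.one_apply]
  rw [h1, det_updateRow_add]
  congr 1
  · rw [← fromBlocks_row_eq_update]; rfl
  · have h2 : (Matrix.fromBlocks E (fdCol c) (fdRow r) 0).updateRow (Sum.inr 0)
        (Sum.elim (0 : S → R) (fun _ : Fin 1 => (1:R)))
        = Matrix.fromBlocks E (fdCol c) 0 (1 : Matrix (Fin 1) (Fin 1) R) := by
      ext i j
      rcases i with i | i
      · rw [Matrix.updateRow_ne (by simp)]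
        rcases j with j | j <;> rfl
      · have : i = 0 := Subsingleton.elim _ _
        subst this
        rw [Matrix.updateRow_self]
        rcases j with j | j
        · simp
        · have : j = 0 := Subsingleton.elim _ _
          subst this
          simp [Matrix.one_apply]
    rw [h2, det_fromBlocks_zero₂₁]
    simp

/-- Matrix determinant lemma, bordered form. -/
lemma det_add_rank_one (E : Matrix S S R) (c v : S → R) :
    (E + fdCol c * fdRow v).det = fdJ E c (-v) + E.det := by
  have h : Matrix.fromBlocks (1 : Matrix S S R) (fdCol (-c)) 0 (1 : Matrix (Fin 1) (Fin 1) R) *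
      Matrix.fromBlocks E (fdCol c) (fdRow (-v)) 1
      = Matrix.fromBlocks (E + fdCol c * fdRow v) 0 (fdRow (-v)) 1 := by
    rw [Matrix.fromBlocks_multiply, Matrix.fromBlocks_inj]
    refine ⟨?_, ?_, ?_, ?_⟩
    · rw [Matrix.one_mul, fdCol_neg, fdRow_neg, Matrix.neg_mul, Matrix.mul_neg, neg_neg]
    · rw [Matrix.one_mul, Matrix.mul_one, fdCol_neg]; abel
    · simp
    · simp
  have h2 := congrArg Matrix.det h
  rw [det_mul, det_unitUpper, one_mul, det_fromBlocks_corner_one] at h2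
  rw [h2, det_fromBlocks_zero₁₂]
  simp

lemma fromBlocks_add_rank_one (F : Matrix S S R) (c u : S → R)
    (Cb : Matrix S (Fin 1) R) (Rb : Matrix (Fin 1) S R) :
    Matrix.fromBlocks (F + fdCol c * fdRow u) Cb Rb (0 : Matrix (Fin 1) (Fin 1) R)
      = Matrix.fromBlocks F Cb Rb 0
        + fdCol (Sum.elim c (fun _ : Fin 1 => (0:R))) * fdRow (Sum.elim u (fun _ : Fin 1 => (0:R))) := by
  ext i j
  rcases i with i | i <;> rcases j with j | j <;>
    simp [fdCol_mul_fdRow]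

def fdC2 (c₀ c₁ : S → R) : Matrix S (Fin 2) R := Matrix.of fun i a => if a = 0 then c₀ i else c₁ i
def fdR2 (r₀ r₁ : S → R) : Matrix (Fin 2) S R := Matrix.of fun a j => if a = 0 then r₀ j else r₁ j
noncomputable def fdK (E : Matrix S S R) (c₀ c₁ r₀ r₁ : S → R) : R :=
  (Matrix.fromBlocks E (fdC2 c₀ c₁) (fdR2 r₀ r₁) (0 : Matrix (Fin 2) (Fin 2) R)).det

/-- Reindexing equivalence. -/
def fdEquiv (S : Type*) : (S ⊕ Fin 1) ⊕ Fin 1 ≃ S ⊕ Fin 2 where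
  toFun x := match x with
    | .inl (.inl s) => .inl s
    | .inl (.inr _) => .inr 0
    | .inr _ => .inr 1
  invFun y := match y with
    | .inl s => .inl (.inl s)
    | .inr a => if a = 0 then .inl (.inr 0) else .inr 0
  left_inv x := by
    rcases x with (s | a) | a
    · rfl
    · have : a = 0 := Subsingleton.elim _ _; subst this; rfl
    · have : a = 0 := Subsingleton.elim _ _; subst this; rfl
  right_inv y := by
    rcases y with s | a
    · rfl
    · fin_cases a <;> rfl

lemma nested_eq_flat (E : Matrix S S R) (c₀ r₀ c₁ r₁ : S → R) :
    fdJ (Matrix.fromBlocks E (fdCol c₀) (fdRow r₀) (0 : Matrix (Fin 1) (Fin 1) R))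
        (Sum.elim c₁ (fun _ : Fin 1 => (0:R))) (Sum.elim r₁ (fun _ : Fin 1 => (0:R)))
      = fdK E c₀ c₁ r₀ r₁ := by
  unfold fdJ fdK
  rw [← Matrix.det_submatrix_equiv_self (fdEquiv S)
    (Matrix.fromBlocks E (fdC2 c₀ c₁) (fdR2 r₀ r₁) (0 : Matrix (Fin 2) (Fin 2) R))]
  congr 1
  ext i j
  rcases i with (i | a) | a <;> rcases j with (j | b) | b <;>
    first
      | rfl
      | (simp only [Matrix.submatrix_apply]
         rcases (Subsingleton.elim a 0 : _) with h
         rfl)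
  all_goals
    simp only [Matrix.submatrix_apply, fdEquiv, Equiv.coe_fn_mk]
  all_goals
    simp [fdCol, fdRow, fdC2, fdR2, Matrix.fromBlocks]
end Infra

section Inv
variable {R : Type*} [CommRing R] {S : Type*} [Fintype S] [DecidableEq S]

lemma fdRow_mul_mul_fdCol (M : Matrix S S R) (r c : S → R) :
    (fdRow r * M * fdCol c) 0 0 = r ⬝ᵥ M.mulVec c := by
  simp only [fdRow, fdCol, Matrix.mul_apply, Matrix.mulVec, dotProduct, Matrix.of_apply,
    Finset.sum_mul, Finset.mul_sum]
  rw [Finset.sum_comm]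
  exact Finset.sum_congr rfl fun i _ => Finset.sum_congr rfl fun j _ => by ring

lemma fdR2_mul_mul_fdC2 (M : Matrix S S R) (c₀ c₁ r₀ r₁ : S → R) (a b : Fin 2) :
    (fdR2 r₀ r₁ * M * fdC2 c₀ c₁) a b
      = (if a = 0 then r₀ else r₁) ⬝ᵥ M.mulVec (if b = 0 then c₀ else c₁) := by
  simp only [fdR2, fdC2, Matrix.mul_apply, Matrix.mulVec, dotProduct, Matrix.of_apply,
    ite_apply, Finset.sum_mul, Finset.mul_sum]
  rw [Finset.sum_comm]
  exact Finset.sum_congr rfl fun i _ => Finset.sum_congr rfl fun j _ => by ring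

lemma fdJ_inv (E : Matrix S S R) [Invertible E] (c r : S → R) :
    fdJ E c r = E.det * (-(r ⬝ᵥ (⅟E).mulVec c)) := by
  unfold fdJ
  rw [Matrix.det_fromBlocks₁₁]
  congr 1
  rw [Matrix.det_fin_one]
  simp only [Matrix.sub_apply, Matrix.zero_apply, zero_sub]
  rw [fdRow_mul_mul_fdCol]

lemma fdK_inv (E : Matrix S S R) [Invertible E] (c₀ c₁ r₀ r₁ : S → R) :
    fdK E c₀ c₁ r₀ r₁ = E.det *
      ((r₀ ⬝ᵥ (⅟E).mulVec c₀) * (r₁ ⬝ᵥ (⅟E).mulVec c₁)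
        - (r₀ ⬝ᵥ (⅟E).mulVec c₁) * (r₁ ⬝ᵥ (⅟E).mulVec c₀)) := by
  unfold fdK
  rw [Matrix.det_fromBlocks₁₁]
  congr 1
  rw [Matrix.det_fin_two]
  simp only [Matrix.sub_apply, Matrix.zero_apply, zero_sub, fdR2_mul_mul_fdC2]
  norm_num

lemma flat_jacobi_inv (E : Matrix S S R) [Invertible E] (c₀ c₁ r₀ r₁ : S → R) :
    fdK E c₀ c₁ r₀ r₁ * E.det
      = fdJ E c₀ r₀ * fdJ E c₁ r₁ - fdJ E c₁ r₀ * fdJ E c₀ r₁ := by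
  rw [fdK_inv, fdJ_inv, fdJ_inv, fdJ_inv, fdJ_inv]
  ring

end Inv

section Poly
variable {S : Type*} [Fintype S] [DecidableEq S]

noncomputable def fdPolyE (E : Matrix S S ℂ) : Matrix S S (Polynomial ℂ) :=
  Matrix.charmatrix (-E)

lemma fdPolyE_map (E : Matrix S S ℂ) (t : ℂ) :
    (fdPolyE E).map (Polynomial.evalRingHom t) = E + Matrix.diagonal (fun _ => t) := by
  ext i j
  simp only [fdPolyE, Matrix.charmatrix_apply, Matrix.map_apply, Polynomial.coe_evalRingHom,
    Matrix.diagonal_apply, Matrix.add_apply, Matrix.neg_apply]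
  rcases eq_or_ne i j with h | h
  · subst h; simp [add_comm]
  · simp [h]

lemma fdPolyE_det_eval (E : Matrix S S ℂ) (t : ℂ) :
    ((fdPolyE E).det).eval t = (E + Matrix.diagonal (fun _ => t)).det := by
  rw [show Polynomial.eval t (fdPolyE E).det = (Polynomial.evalRingHom t) (fdPolyE E).det from rfl,
    RingHom.map_det, RingHom.mapMatrix_apply, fdPolyE_map]

lemma fdPolyE_det_ne_zero (E : Matrix S S ℂ) : (fdPolyE E).det ≠ 0 := by
  have : (fdPolyE E).det = (-E).charpoly := rfl
  rw [this]
  exact (Matrix.charpoly_monic _).ne_zero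

/-- Map of fdCol etc. under a ring hom. -/
lemma fdCol_map {R R' : Type*} [CommRing R] [CommRing R'] (f : R →+* R') (c : S → R) :
    (fdCol c).map f = fdCol (fun i => f (c i)) := by ext i j; rfl

lemma fdRow_map {R R' : Type*} [CommRing R] [CommRing R'] (f : R →+* R') (r : S → R) :
    (fdRow r).map f = fdRow (fun i => f (r i)) := by ext i j; rfl

lemma fdC2_map {R R' : Type*} [CommRing R] [CommRing R'] (f : R →+* R') (c₀ c₁ : S → R) :
    (fdC2 c₀ c₁).map f = fdC2 (fun i => f (c₀ i)) (fun i => f (c₁ i)) := by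
  ext i j
  simp [fdC2, apply_ite f]

lemma fdR2_map {R R' : Type*} [CommRing R] [CommRing R'] (f : R →+* R') (r₀ r₁ : S → R) :
    (fdR2 r₀ r₁).map f = fdR2 (fun i => f (r₀ i)) (fun i => f (r₁ i)) := by
  ext i j
  simp [fdR2, apply_ite f]

lemma fdJ_map {R R' : Type*} [CommRing R] [CommRing R'] [Fintype S] [DecidableEq S]
    (f : R →+* R') (E : Matrix S S R) (c r : S → R) :
    f (fdJ E c r) = fdJ (E.map f) (fun i => f (c i)) (fun i => f (r i)) := by
  unfold fdJ
  rw [RingHom.map_det, RingHom.mapMatrix_apply, Matrix.fromBlocks_map, fdCol_map, fdRow_map]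
  congr 1
  congr 1
  ext i j
  simp

lemma fdK_map {R R' : Type*} [CommRing R] [CommRing R'] [Fintype S] [DecidableEq S]
    (f : R →+* R') (E : Matrix S S R) (c₀ c₁ r₀ r₁ : S → R) :
    f (fdK E c₀ c₁ r₀ r₁) = fdK (E.map f) (fun i => f (c₀ i)) (fun i => f (c₁ i))
      (fun i => f (r₀ i)) (fun i => f (r₁ i)) := by
  unfold fdK
  rw [RingHom.map_det, RingHom.mapMatrix_apply, Matrix.fromBlocks_map, fdC2_map, fdR2_map]
  congr 1
  congr 1
  ext i j
  simp

/-- The Jacobi identity for bordered determinants, over ℂ, no invertibility assumption. -/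
lemma flat_jacobi (E : Matrix S S ℂ) (c₀ c₁ r₀ r₁ : S → ℂ) :
    fdK E c₀ c₁ r₀ r₁ * E.det
      = fdJ E c₀ r₀ * fdJ E c₁ r₁ - fdJ E c₁ r₀ * fdJ E c₀ r₁ := by
  classical
  set Cc : S → Polynomial ℂ := fun i => Polynomial.C (c₀ i)
  set Cc' : S → Polynomial ℂ := fun i => Polynomial.C (c₁ i)
  set Cr : S → Polynomial ℂ := fun i => Polynomial.C (r₀ i)
  set Cr' : S → Polynomial ℂ := fun i => Polynomial.C (r₁ i)
  set pE := fdPolyE E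
  set P : Polynomial ℂ :=
    fdK pE Cc Cc' Cr Cr' * pE.det
      - (fdJ pE Cc Cr * fdJ pE Cc' Cr' - fdJ pE Cc' Cr * fdJ pE Cc Cr') with hP
  have hEval : ∀ t : ℂ, P.eval t
      = fdK (E + Matrix.diagonal fun _ => t) c₀ c₁ r₀ r₁ * (E + Matrix.diagonal fun _ => t).det
        - (fdJ (E + Matrix.diagonal fun _ => t) c₀ r₀ * fdJ (E + Matrix.diagonal fun _ => t) c₁ r₁
          - fdJ (E + Matrix.diagonal fun _ => t) c₁ r₀ * fdJ (E + Matrix.diagonal fun _ => t) c₀ r₁) := by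
    intro t
    have h1 := fdJ_map (Polynomial.evalRingHom t) pE Cc Cr
    have h2 := fdJ_map (Polynomial.evalRingHom t) pE Cc' Cr'
    have h3 := fdJ_map (Polynomial.evalRingHom t) pE Cc' Cr
    have h4 := fdJ_map (Polynomial.evalRingHom t) pE Cc Cr'
    have h5 := fdK_map (Polynomial.evalRingHom t) pE Cc Cc' Cr Cr'
    have hd := fdPolyE_det_eval E t
    have hcc : (fun i => (Polynomial.evalRingHom t) (Cc i)) = c₀ := by
      funext i; simp [Cc]
    have hcc' : (fun i => (Polynomial.evalRingHom t) (Cc' i)) = c₁ := by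
      funext i; simp [Cc']
    have hcr : (fun i => (Polynomial.evalRingHom t) (Cr i)) = r₀ := by
      funext i; simp [Cr]
    have hcr' : (fun i => (Polynomial.evalRingHom t) (Cr' i)) = r₁ := by
      funext i; simp [Cr']
    have hmap : pE.map (Polynomial.evalRingHom t) = E + Matrix.diagonal (fun _ => t) :=
      fdPolyE_map E t
    rw [hmap] at h1 h2 h3 h4 h5
    simp only [hcc, hcc', hcr, hcr'] at h1 h2 h3 h4 h5
    simp only [Polynomial.coe_evalRingHom] at h1 h2 h3 h4 h5
    simp only [hP, Polynomial.eval_sub, Polynomial.eval_mul]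
    rw [h1, h2, h3, h4, h5, hd]
  have hZero : ∀ t : ℂ, (E + Matrix.diagonal fun _ => t).det ≠ 0 → P.eval t = 0 := by
    intro t ht
    rw [hEval t]
    have : Invertible (E + Matrix.diagonal fun _ => t) :=
      Matrix.invertibleOfIsUnitDet _ (isUnit_iff_ne_zero.mpr ht)
    rw [flat_jacobi_inv]
    ring
  have hPzero : P = 0 := by
    apply Polynomial.eq_zero_of_infinite_isRoot
    apply Set.Infinite.mono (s := {t : ℂ | ((fdPolyE E).det).eval t ≠ 0})
    · intro t ht
      have := hZero t (by rwa [← fdPolyE_det_eval])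
      exact this
    · have hfin : Set.Finite {t : ℂ | ((fdPolyE E).det).IsRoot t} :=
        Polynomial.finite_setOf_isRoot (fdPolyE_det_ne_zero E)
      have : {t : ℂ | ((fdPolyE E).det).eval t ≠ 0} = {t : ℂ | ((fdPolyE E).det).IsRoot t}ᶜ := by
        ext t; simp [Polynomial.IsRoot]
      rw [this]
      exact hfin.infinite_compl
  have h0 := hEval 0
  rw [hPzero] at h0
  simp only [Polynomial.eval_zero] at h0
  have hE0 : E + Matrix.diagonal (fun _ => (0:ℂ)) = E := by simp
  rw [hE0] at h0
  linear_combination -h0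
end Poly

section Master
variable {S : Type*} [Fintype S] [DecidableEq S]

/-- The master determinant identity underlying the first fully discrete bilinear equation. -/
lemma fd_master (E : Matrix S S ℂ) (x₀ x₁ x₂ rw u₀ v' y' : S → ℂ) (a₁ : ℂ)
    (hx : x₁ = x₀ + a₁ • x₂) :
    fdJ (E + fdCol x₁ * fdRow u₀ + fdCol y' * fdRow rw) x₁ rw
        * (E + fdCol x₀ * fdRow v').det
      - fdJ (E + fdCol y' * fdRow rw) x₀ rw * (E + fdCol x₁ * fdRow v').det
    = a₁ * (fdJ (E + fdCol x₁ * fdRow v' + fdCol y' * fdRow rw) x₂ rw * E.det) := by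
  -- simplify the three bordered determinants
  rw [fdJ_row_invariant (E + fdCol x₁ * fdRow u₀) y' x₁ rw,
    fdJ_col_invariant E u₀ x₁ rw,
    fdJ_row_invariant E y' x₀ rw,
    fdJ_row_invariant (E + fdCol x₁ * fdRow v') y' x₂ rw]
  -- expand the two f determinants
  rw [det_add_rank_one E x₀ v', det_add_rank_one E x₁ v']
  -- handle the remaining bordered determinant of the updated matrix
  have key : a₁ * fdJ (E + fdCol x₁ * fdRow v') x₂ rw
      = fdJ E x₁ rw - (fdJ E x₀ rw + fdK E x₀ x₁ rw (-v')) := by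
    have h1 : fdJ (E + fdCol x₁ * fdRow v') x₁ rw = fdJ E x₁ rw :=
      fdJ_col_invariant E v' x₁ rw
    have h2 : fdJ (E + fdCol x₁ * fdRow v') x₁ rw
        = fdJ (E + fdCol x₁ * fdRow v') x₀ rw + a₁ * fdJ (E + fdCol x₁ * fdRow v') x₂ rw := by
      rw [← fdJ_smul_col, ← fdJ_add_col, ← hx]
    have h3 : fdJ (E + fdCol x₁ * fdRow v') x₀ rw = fdJ E x₀ rw + fdK E x₀ x₁ rw (-v') := by
      unfold fdJ
      rw [fromBlocks_add_rank_one E x₁ v' (fdCol x₀) (fdRow rw)]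
      rw [det_add_rank_one (Matrix.fromBlocks E (fdCol x₀) (fdRow rw) 0)
        (Sum.elim x₁ fun _ : Fin 1 => (0:ℂ)) (Sum.elim v' fun _ : Fin 1 => (0:ℂ))]
      have hneg : (-(Sum.elim v' fun _ : Fin 1 => (0:ℂ)))
          = Sum.elim (-v') (fun _ : Fin 1 => (0:ℂ)) := by
        funext z; rcases z with z | z <;> simp
      rw [hneg, nested_eq_flat E x₀ rw x₁ (-v')]
      ring
    rw [← h1, h2, h3]
    ring
  have jac := flat_jacobi E x₀ x₁ rw (-v')
  linear_combination (-E.det) * key + jac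

end Master

/-- Auxiliary vector Ψ for the Gram structure of the A-block. -/
noncomputable def fdPsi {N : ℕ} (pb : Fin N → ℂ) (a₁ b₁ : ℝ) (n k₁ l₁ : ℤ) (j : Fin N) : ℂ :=
  pb j * (-pb j) ^ (-n) * (1 + (a₁ : ℂ) * pb j) ^ k₁ * (1 + (b₁ : ℂ) / pb j) ^ l₁

/-- Auxiliary vector χ for the Gram structure of the B-block. -/
noncomputable def fdChi {N : ℕ} (q : Fin N → ℂ) (a₂ b₂ : ℝ) (m k₂ l₂ : ℤ) (i : Fin N) : ℂ :=
  q i ^ m * (1 - (a₂ : ℂ) * q i) ^ (-k₂) * (1 - (b₂ : ℂ) / q i) ^ (-l₂)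

/-- First fully discrete bilinear equation for the Gram-type tau functions of the
two-component fully discrete KP–Toda hierarchy. -/
theorem fully_discrete_bilinear_1 (N : ℕ) (hN : 1 ≤ N)
    (p pb q qb : Fin N → ℂ)
    (hp : ∀ i, p i ≠ 0) (hpb : ∀ i, pb i ≠ 0) (hq : ∀ i, q i ≠ 0) (hqb : ∀ i, qb i ≠ 0)
    (hppb : ∀ i j, p i + pb j ≠ 0) (hqqb : ∀ i j, q i + qb j ≠ 0)
    (μ ν : ℂ)
    (a₁ a₂ b₁ b₂ : ℝ) (ha₁ : a₁ ≠ 0) (ha₂ : a₂ ≠ 0) (hb₁ : b₁ ≠ 0) (hb₂ : b₂ ≠ 0)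
    (h1 : ∀ i, 1 - (a₁ : ℂ) * p i ≠ 0) (h2 : ∀ j, 1 + (a₁ : ℂ) * pb j ≠ 0)
    (h3 : ∀ i, 1 - (a₂ : ℂ) * q i ≠ 0) (h4 : ∀ j, 1 + (a₂ : ℂ) * qb j ≠ 0)
    (h5 : ∀ i, 1 - (b₁ : ℂ) / p i ≠ 0) (h6 : ∀ j, 1 + (b₁ : ℂ) / pb j ≠ 0)
    (h7 : ∀ i, 1 - (b₂ : ℂ) / q i ≠ 0) (h8 : ∀ j, 1 + (b₂ : ℂ) / qb j ≠ 0)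
    (A : ℤ → ℤ → ℤ → Matrix (Fin N) (Fin N) ℂ)
    (hA : ∀ n k₁ l₁ i j, A n k₁ l₁ i j =
      (μ * pb j / (p i + pb j)) * (-(p i) / pb j) ^ n *
      ((1 - (a₁ : ℂ) * p i) / (1 + (a₁ : ℂ) * pb j)) ^ (-k₁) *
      ((1 - (b₁ : ℂ) / p i) / (1 + (b₁ : ℂ) / pb j)) ^ (-l₁))
    (B : ℤ → ℤ → ℤ → Matrix (Fin N) (Fin N) ℂ)
    (hB : ∀ m k₂ l₂ i j, B m k₂ l₂ i j =
      (ν / (q i + qb j)) * (-(q i) / qb j) ^ m *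
      ((1 - (a₂ : ℂ) * q i) / (1 + (a₂ : ℂ) * qb j)) ^ (-k₂) *
      ((1 - (b₂ : ℂ) / q i) / (1 + (b₂ : ℂ) / qb j)) ^ (-l₂))
    (Φ : ℤ → ℤ → ℤ → Fin N → ℂ)
    (hΦ : ∀ n k₁ l₁ j, Φ n k₁ l₁ j =
      p j ^ n * (1 - (a₁ : ℂ) * p j) ^ (-k₁) * (1 - (b₁ : ℂ) / p j) ^ (-l₁))
    (Ψb : ℤ → ℤ → ℤ → Fin N → ℂ)
    (hΨb : ∀ m k₂ l₂ j, Ψb m k₂ l₂ j =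
      (-(qb j)) ^ (-m) * (1 + (a₂ : ℂ) * qb j) ^ k₂ * (1 + (b₂ : ℂ) / qb j) ^ l₂)
    (f : ℤ → ℤ → ℤ → ℤ → ℤ → ℤ → ℂ)
    (hf : ∀ m k₂ l₂ n k₁ l₁, f m k₂ l₂ n k₁ l₁ = blockDet (A n k₁ l₁) (B m k₂ l₂))
    (g : ℤ → ℤ → ℤ → ℤ → ℤ → ℤ → ℂ)
    (hg : ∀ m k₂ l₂ n k₁ l₁, g m k₂ l₂ n k₁ l₁ = borderedDet (A n k₁ l₁) (B m k₂ l₂)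
      (Sum.elim (Φ n k₁ l₁) (fun _ => 0))
      (Sum.elim (fun _ => 0) (fun j => -(Ψb m k₂ l₂ j)))) :
    ∀ n k₁ l₁ m k₂ l₂ : ℤ,
      (1 / (a₁ : ℂ)) * (g (m + 1) k₂ l₂ n (k₁ + 1) l₁ * f m k₂ l₂ (n + 1) k₁ l₁
        - g (m + 1) k₂ l₂ n k₁ l₁ * f m k₂ l₂ (n + 1) (k₁ + 1) l₁)
      = g (m + 1) k₂ l₂ (n + 1) (k₁ + 1) l₁ * f m k₂ l₂ n k₁ l₁ := by
  intro n k₁ l₁ m k₂ l₂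
  have ha₁c : (a₁ : ℂ) ≠ 0 := by exact_mod_cast Complex.ofReal_ne_zero.mpr ha₁
  have hnegpb : ∀ j, (-pb j) ≠ 0 := fun j => neg_ne_zero.mpr (hpb j)
  have hnegqb : ∀ j, (-qb j) ≠ 0 := fun j => neg_ne_zero.mpr (hqb j)
  -- Gram factorization of A
  have FACT_A : ∀ (n k₁ l₁ : ℤ) i j, (p i + pb j) * A n k₁ l₁ i j
      = μ * Φ n k₁ l₁ i * fdPsi pb a₁ b₁ n k₁ l₁ j := by
    intro n k₁ l₁ i j
    rw [hA, hΦ]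
    unfold fdPsi
    have e1 : (-(p i) / pb j) ^ n = p i ^ n * (-pb j) ^ (-n) := by
      rw [neg_div, ← div_neg, div_zpow, div_eq_mul_inv, ← _root_.zpow_neg]
    have e2 : ((1 - (a₁:ℂ) * p i) / (1 + (a₁:ℂ) * pb j)) ^ (-k₁)
        = (1 - (a₁:ℂ) * p i) ^ (-k₁) * (1 + (a₁:ℂ) * pb j) ^ k₁ := by
      rw [div_zpow, div_eq_mul_inv, ← _root_.zpow_neg, neg_neg]
    have e3 : ((1 - (b₁:ℂ) / p i) / (1 + (b₁:ℂ) / pb j)) ^ (-l₁)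
        = (1 - (b₁:ℂ) / p i) ^ (-l₁) * (1 + (b₁:ℂ) / pb j) ^ l₁ := by
      rw [div_zpow, div_eq_mul_inv, ← _root_.zpow_neg, neg_neg]
    rw [e1, e2, e3]
    have hd : ∀ X : ℂ, (p i + pb j) * (μ * pb j / (p i + pb j) * X) = μ * pb j * X := by
      intro X
      field_simp [hppb i j]
    calc (p i + pb j) * (μ * pb j / (p i + pb j) * (p i ^ n * (-pb j) ^ (-n)) *
          ((1 - (a₁:ℂ) * p i) ^ (-k₁) * (1 + (a₁:ℂ) * pb j) ^ k₁) *
          ((1 - (b₁:ℂ) / p i) ^ (-l₁) * (1 + (b₁:ℂ) / pb j) ^ l₁))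
        = (p i + pb j) * (μ * pb j / (p i + pb j) * ((p i ^ n * (-pb j) ^ (-n)) *
          ((1 - (a₁:ℂ) * p i) ^ (-k₁) * (1 + (a₁:ℂ) * pb j) ^ k₁) *
          ((1 - (b₁:ℂ) / p i) ^ (-l₁) * (1 + (b₁:ℂ) / pb j) ^ l₁))) := by ring
      _ = μ * pb j * ((p i ^ n * (-pb j) ^ (-n)) *
          ((1 - (a₁:ℂ) * p i) ^ (-k₁) * (1 + (a₁:ℂ) * pb j) ^ k₁) *
          ((1 - (b₁:ℂ) / p i) ^ (-l₁) * (1 + (b₁:ℂ) / pb j) ^ l₁)) := hd _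
      _ = μ * (p i ^ n * (1 - (a₁:ℂ) * p i) ^ (-k₁) * (1 - (b₁:ℂ) / p i) ^ (-l₁)) *
          (pb j * (-pb j) ^ (-n) * (1 + (a₁:ℂ) * pb j) ^ k₁ * (1 + (b₁:ℂ) / pb j) ^ l₁) := by
          ring
  have FACT_B : ∀ (m k₂ l₂ : ℤ) i j, (q i + qb j) * B m k₂ l₂ i j
      = ν * fdChi q a₂ b₂ m k₂ l₂ i * Ψb m k₂ l₂ j := by
    intro m k₂ l₂ i j
    rw [hB, hΨb]
    unfold fdChi
    have e1 : (-(q i) / qb j) ^ m = q i ^ m * (-qb j) ^ (-m) := by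
      rw [neg_div, ← div_neg, div_zpow, div_eq_mul_inv, ← _root_.zpow_neg]
    have e2 : ((1 - (a₂:ℂ) * q i) / (1 + (a₂:ℂ) * qb j)) ^ (-k₂)
        = (1 - (a₂:ℂ) * q i) ^ (-k₂) * (1 + (a₂:ℂ) * qb j) ^ k₂ := by
      rw [div_zpow, div_eq_mul_inv, ← _root_.zpow_neg, neg_neg]
    have e3 : ((1 - (b₂:ℂ) / q i) / (1 + (b₂:ℂ) / qb j)) ^ (-l₂)
        = (1 - (b₂:ℂ) / q i) ^ (-l₂) * (1 + (b₂:ℂ) / qb j) ^ l₂ := by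
      rw [div_zpow, div_eq_mul_inv, ← _root_.zpow_neg, neg_neg]
    rw [e1, e2, e3]
    have hd : ∀ X : ℂ, (q i + qb j) * (ν / (q i + qb j) * X) = ν * X := by
      intro X
      field_simp [hqqb i j]
    calc (q i + qb j) * (ν / (q i + qb j) * (q i ^ m * (-qb j) ^ (-m)) *
          ((1 - (a₂:ℂ) * q i) ^ (-k₂) * (1 + (a₂:ℂ) * qb j) ^ k₂) *
          ((1 - (b₂:ℂ) / q i) ^ (-l₂) * (1 + (b₂:ℂ) / qb j) ^ l₂))
        = (q i + qb j) * (ν / (q i + qb j) * ((q i ^ m * (-qb j) ^ (-m)) *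
          ((1 - (a₂:ℂ) * q i) ^ (-k₂) * (1 + (a₂:ℂ) * qb j) ^ k₂) *
          ((1 - (b₂:ℂ) / q i) ^ (-l₂) * (1 + (b₂:ℂ) / qb j) ^ l₂))) := by ring
      _ = ν * ((q i ^ m * (-qb j) ^ (-m)) *
          ((1 - (a₂:ℂ) * q i) ^ (-k₂) * (1 + (a₂:ℂ) * qb j) ^ k₂) *
          ((1 - (b₂:ℂ) / q i) ^ (-l₂) * (1 + (b₂:ℂ) / qb j) ^ l₂)) := hd _
      _ = ν * (q i ^ m * (1 - (a₂:ℂ) * q i) ^ (-k₂) * (1 - (b₂:ℂ) / q i) ^ (-l₂)) *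
          ((-qb j) ^ (-m) * (1 + (a₂:ℂ) * qb j) ^ k₂ * (1 + (b₂:ℂ) / qb j) ^ l₂) := by
          ring
  have hAval : ∀ (n k₁ l₁ : ℤ) i j, A n k₁ l₁ i j
      = μ * Φ n k₁ l₁ i * fdPsi pb a₁ b₁ n k₁ l₁ j / (p i + pb j) := by
    intro n k₁ l₁ i j
    rw [eq_div_iff (hppb i j)]
    linear_combination FACT_A n k₁ l₁ i j
  have hBval : ∀ (m k₂ l₂ : ℤ) i j, B m k₂ l₂ i j
      = ν * fdChi q a₂ b₂ m k₂ l₂ i * Ψb m k₂ l₂ j / (q i + qb j) := by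
    intro m k₂ l₂ i j
    rw [eq_div_iff (hqqb i j)]
    linear_combination FACT_B m k₂ l₂ i j
  -- shift lemmas
  have SPhi_k : ∀ (n k₁ l₁ : ℤ) i, Φ n (k₁+1) l₁ i = Φ n k₁ l₁ i * (1 - (a₁:ℂ) * p i)⁻¹ := by
    intro n k₁ l₁ i
    rw [hΦ, hΦ]
    rw [show -(k₁+1) = -k₁ + (-1) by ring, zpow_add₀ (h1 i), _root_.zpow_neg_one]
    ring
  have SPhi_n : ∀ (n k₁ l₁ : ℤ) i, Φ (n+1) k₁ l₁ i = Φ n k₁ l₁ i * p i := by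
    intro n k₁ l₁ i
    rw [hΦ, hΦ, zpow_add_one₀ (hp i)]
    ring
  have SPsi_n : ∀ (n k₁ l₁ : ℤ) j, fdPsi pb a₁ b₁ (n+1) k₁ l₁ j
      = fdPsi pb a₁ b₁ n k₁ l₁ j * (-pb j)⁻¹ := by
    intro n k₁ l₁ j
    unfold fdPsi
    rw [show -(n+1) = -n + (-1) by ring, zpow_add₀ (hnegpb j), _root_.zpow_neg_one]
    ring
  have SPsib_m : ∀ (m k₂ l₂ : ℤ) j, Ψb (m+1) k₂ l₂ j = Ψb m k₂ l₂ j * (-qb j)⁻¹ := by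
    intro m k₂ l₂ j
    rw [hΨb, hΨb]
    rw [show -(m+1) = -m + (-1) by ring, zpow_add₀ (hnegqb j), _root_.zpow_neg_one]
    ring
  have SA_k : ∀ (n k₁ l₁ : ℤ) i j, A n (k₁+1) l₁ i j
      = A n k₁ l₁ i j * ((1 + (a₁:ℂ) * pb j) / (1 - (a₁:ℂ) * p i)) := by
    intro n k₁ l₁ i j
    rw [hA, hA]
    have hq0 : ((1 - (a₁:ℂ) * p i) / (1 + (a₁:ℂ) * pb j)) ≠ 0 := div_ne_zero (h1 i) (h2 j)
    rw [show -(k₁+1) = -k₁ + (-1) by ring, zpow_add₀ hq0, _root_.zpow_neg_one, inv_div]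
    ring
  have SA_n : ∀ (n k₁ l₁ : ℤ) i j, A (n+1) k₁ l₁ i j
      = A n k₁ l₁ i j * (-(p i) / pb j) := by
    intro n k₁ l₁ i j
    rw [hA, hA, zpow_add_one₀ (div_ne_zero (neg_ne_zero.mpr (hp i)) (hpb j))]
    ring
  have SB_m : ∀ (m k₂ l₂ : ℤ) i j, B (m+1) k₂ l₂ i j
      = B m k₂ l₂ i j * (-(q i) / qb j) := by
    intro m k₂ l₂ i j
    rw [hB, hB, zpow_add_one₀ (div_ne_zero (neg_ne_zero.mpr (hq i)) (hqb j))]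
    ring
  -- entrywise rank-one update identities
  have EA1 : ∀ i j, A n (k₁+1) l₁ i j
      = A n k₁ l₁ i j + Φ n (k₁+1) l₁ i * ((a₁:ℂ) * μ * fdPsi pb a₁ b₁ n k₁ l₁ j) := by
    intro i j
    rw [SA_k n k₁ l₁ i j, SPhi_k n k₁ l₁ i, hAval n k₁ l₁ i j]
    field_simp [hppb i j, h1 i, h2 j]
    linear_combination (μ * Φ n k₁ l₁ i * fdPsi pb a₁ b₁ n k₁ l₁ j) * mul_inv_cancel₀ (h1 i)
  have EA2 : ∀ i j, A (n+1) k₁ l₁ i j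
      = A n k₁ l₁ i j + Φ n k₁ l₁ i * (μ * fdPsi pb a₁ b₁ (n+1) k₁ l₁ j) := by
    intro i j
    rw [SA_n n k₁ l₁ i j, SPsi_n n k₁ l₁ j, hAval n k₁ l₁ i j]
    field_simp [hppb i j, hpb j, hnegpb j]
    ring
  have EA3 : ∀ i j, A (n+1) (k₁+1) l₁ i j
      = A n k₁ l₁ i j + Φ n (k₁+1) l₁ i * (μ * fdPsi pb a₁ b₁ (n+1) k₁ l₁ j) := by
    intro i j
    rw [SA_n n (k₁+1) l₁ i j, SA_k n k₁ l₁ i j, SPhi_k n k₁ l₁ i, SPsi_n n k₁ l₁ j,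
      hAval n k₁ l₁ i j]
    field_simp [hppb i j, h1 i, h2 j, hpb j, hnegpb j]
    linear_combination (μ * Φ n k₁ l₁ i * fdPsi pb a₁ b₁ n k₁ l₁ j * pb j) *
      mul_inv_cancel₀ (show (1 - p i * (a₁:ℂ)) ≠ 0 by rw [mul_comm]; exact h1 i)
  have EB : ∀ i j, B (m+1) k₂ l₂ i j
      = B m k₂ l₂ i j + (ν * fdChi q a₂ b₂ m k₂ l₂ i) * Ψb (m+1) k₂ l₂ j := by
    intro i j
    rw [SB_m m k₂ l₂ i j, SPsib_m m k₂ l₂ j, hBval m k₂ l₂ i j]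
    field_simp [hqqb i j, hqb j, hnegqb j]
    ring
  have EPhi : ∀ i, Φ n (k₁+1) l₁ i = Φ n k₁ l₁ i + (a₁:ℂ) * Φ (n+1) (k₁+1) l₁ i := by
    intro i
    rw [SPhi_n n (k₁+1) l₁ i, SPhi_k n k₁ l₁ i]
    field_simp [h1 i, hp i]
    ring
  -- the six block matrices
  have hx : (Sum.elim (Φ n (k₁+1) l₁) (fun _ => (0:ℂ)) : Fin N ⊕ Fin N → ℂ)
      = Sum.elim (Φ n k₁ l₁) (fun _ => (0:ℂ))
        + (a₁:ℂ) • Sum.elim (Φ (n+1) (k₁+1) l₁) (fun _ => (0:ℂ)) := by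
    funext z
    rcases z with z | z
    · simpa using EPhi z
    · simp
  have hM1 : Matrix.fromBlocks (A n (k₁+1) l₁) 1 (-1) (B (m+1) k₂ l₂)
      = Matrix.fromBlocks (A n k₁ l₁) 1 (-1) (B m k₂ l₂)
        + fdCol (Sum.elim (Φ n (k₁+1) l₁) (fun _ => (0:ℂ)))
            * fdRow (Sum.elim (fun j => (a₁:ℂ) * μ * fdPsi pb a₁ b₁ n k₁ l₁ j) (fun _ => (0:ℂ)))
        + fdCol (Sum.elim (fun _ => (0:ℂ)) (fun i => -(ν * fdChi q a₂ b₂ m k₂ l₂ i)))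
            * fdRow (Sum.elim (fun _ => (0:ℂ)) (fun j => -(Ψb (m+1) k₂ l₂ j))) := by
    ext i j
    rcases i with i | i <;> rcases j with j | j <;>
      simp only [Matrix.add_apply, fdCol_mul_fdRow, Sum.elim_inl, Sum.elim_inr,
        Matrix.fromBlocks_apply₁₁, Matrix.fromBlocks_apply₁₂, Matrix.fromBlocks_apply₂₁,
        Matrix.fromBlocks_apply₂₂, mul_zero, zero_mul, add_zero, zero_add, neg_mul_neg]
    · linear_combination EA1 i j
    · linear_combination EB i j
  have hM0 : Matrix.fromBlocks (A n k₁ l₁) 1 (-1) (B (m+1) k₂ l₂)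
      = Matrix.fromBlocks (A n k₁ l₁) 1 (-1) (B m k₂ l₂)
        + fdCol (Sum.elim (fun _ => (0:ℂ)) (fun i => -(ν * fdChi q a₂ b₂ m k₂ l₂ i)))
            * fdRow (Sum.elim (fun _ => (0:ℂ)) (fun j => -(Ψb (m+1) k₂ l₂ j))) := by
    ext i j
    rcases i with i | i <;> rcases j with j | j <;>
      simp only [Matrix.add_apply, fdCol_mul_fdRow, Sum.elim_inl, Sum.elim_inr,
        Matrix.fromBlocks_apply₁₁, Matrix.fromBlocks_apply₁₂, Matrix.fromBlocks_apply₂₁,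
        Matrix.fromBlocks_apply₂₂, mul_zero, zero_mul, add_zero, zero_add, neg_mul_neg]
    · linear_combination EB i j
  have hMf1 : Matrix.fromBlocks (A (n+1) k₁ l₁) 1 (-1) (B m k₂ l₂)
      = Matrix.fromBlocks (A n k₁ l₁) 1 (-1) (B m k₂ l₂)
        + fdCol (Sum.elim (Φ n k₁ l₁) (fun _ => (0:ℂ)))
            * fdRow (Sum.elim (fun j => μ * fdPsi pb a₁ b₁ (n+1) k₁ l₁ j) (fun _ => (0:ℂ))) := by
    ext i j
    rcases i with i | i <;> rcases j with j | j <;>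
      simp only [Matrix.add_apply, fdCol_mul_fdRow, Sum.elim_inl, Sum.elim_inr,
        Matrix.fromBlocks_apply₁₁, Matrix.fromBlocks_apply₁₂, Matrix.fromBlocks_apply₂₁,
        Matrix.fromBlocks_apply₂₂, mul_zero, zero_mul, add_zero, zero_add]
    · linear_combination EA2 i j
  have hMf2 : Matrix.fromBlocks (A (n+1) (k₁+1) l₁) 1 (-1) (B m k₂ l₂)
      = Matrix.fromBlocks (A n k₁ l₁) 1 (-1) (B m k₂ l₂)
        + fdCol (Sum.elim (Φ n (k₁+1) l₁) (fun _ => (0:ℂ)))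
            * fdRow (Sum.elim (fun j => μ * fdPsi pb a₁ b₁ (n+1) k₁ l₁ j) (fun _ => (0:ℂ))) := by
    ext i j
    rcases i with i | i <;> rcases j with j | j <;>
      simp only [Matrix.add_apply, fdCol_mul_fdRow, Sum.elim_inl, Sum.elim_inr,
        Matrix.fromBlocks_apply₁₁, Matrix.fromBlocks_apply₁₂, Matrix.fromBlocks_apply₂₁,
        Matrix.fromBlocks_apply₂₂, mul_zero, zero_mul, add_zero, zero_add]
    · linear_combination EA3 i j
  have hM2 : Matrix.fromBlocks (A (n+1) (k₁+1) l₁) 1 (-1) (B (m+1) k₂ l₂)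
      = Matrix.fromBlocks (A n k₁ l₁) 1 (-1) (B m k₂ l₂)
        + fdCol (Sum.elim (Φ n (k₁+1) l₁) (fun _ => (0:ℂ)))
            * fdRow (Sum.elim (fun j => μ * fdPsi pb a₁ b₁ (n+1) k₁ l₁ j) (fun _ => (0:ℂ)))
        + fdCol (Sum.elim (fun _ => (0:ℂ)) (fun i => -(ν * fdChi q a₂ b₂ m k₂ l₂ i)))
            * fdRow (Sum.elim (fun _ => (0:ℂ)) (fun j => -(Ψb (m+1) k₂ l₂ j))) := by
    ext i j
    rcases i with i | i <;> rcases j with j | j <;>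
      simp only [Matrix.add_apply, fdCol_mul_fdRow, Sum.elim_inl, Sum.elim_inr,
        Matrix.fromBlocks_apply₁₁, Matrix.fromBlocks_apply₁₂, Matrix.fromBlocks_apply₂₁,
        Matrix.fromBlocks_apply₂₂, mul_zero, zero_mul, add_zero, zero_add, neg_mul_neg]
    · linear_combination EA3 i j
    · linear_combination EB i j
  -- assemble via the master identity
  have eb : ∀ (X Y : Matrix (Fin N) (Fin N) ℂ) (c r : Fin N ⊕ Fin N → ℂ),
      borderedDet X Y c r = fdJ (Matrix.fromBlocks X 1 (-1) Y) c r := fun _ _ _ _ => rfl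
  have ed : ∀ (X Y : Matrix (Fin N) (Fin N) ℂ),
      blockDet X Y = (Matrix.fromBlocks X 1 (-1) Y).det := fun _ _ => rfl
  have key := fd_master (Matrix.fromBlocks (A n k₁ l₁) 1 (-1) (B m k₂ l₂))
    (Sum.elim (Φ n k₁ l₁) (fun _ => (0:ℂ)))
    (Sum.elim (Φ n (k₁+1) l₁) (fun _ => (0:ℂ)))
    (Sum.elim (Φ (n+1) (k₁+1) l₁) (fun _ => (0:ℂ)))
    (Sum.elim (fun _ => (0:ℂ)) (fun j => -(Ψb (m+1) k₂ l₂ j)))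
    (Sum.elim (fun j => (a₁:ℂ) * μ * fdPsi pb a₁ b₁ n k₁ l₁ j) (fun _ => (0:ℂ)))
    (Sum.elim (fun j => μ * fdPsi pb a₁ b₁ (n+1) k₁ l₁ j) (fun _ => (0:ℂ)))
    (Sum.elim (fun _ => (0:ℂ)) (fun i => -(ν * fdChi q a₂ b₂ m k₂ l₂ i)))
    (a₁:ℂ) hx
  rw [hg (m+1) k₂ l₂ n (k₁+1) l₁, hg (m+1) k₂ l₂ n k₁ l₁, hg (m+1) k₂ l₂ (n+1) (k₁+1) l₁,
    hf m k₂ l₂ (n+1) k₁ l₁, hf m k₂ l₂ (n+1) (k₁+1) l₁, hf m k₂ l₂ n k₁ l₁]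
  rw [eb, eb, eb, ed, ed, ed]
  rw [hM1, hM0, hM2, hMf1, hMf2]
  rw [key]
  rw [one_div, inv_mul_cancel_left₀ ha₁c]
end

section
/- Let N ≥ 1, let p_1,…,p_N, p̄_1,…,p̄_N, q_1,…,q_N, q̄_1,…,q̄_N ∈ ℂ be nonzero with p_i + p̄_j ≠ 0 and q_i + q̄_j ≠ 0 for all i,j, let μ, ν ∈ ℂ, and let a₁, a₂, b₁, b₂ ∈ ℝ be nonzero with 1 − a₁ p_i ≠ 0, 1 + a₁ p̄_j ≠ 0, 1 − a₂ q_i ≠ 0, 1 + a₂ q̄_j ≠ 0, 1 − b₁/p_i ≠ 0, 1 + b₁/p̄_j ≠ 0, 1 − b₂/q_i ≠ 0, 1 + b₂/q̄_j ≠ 0 for all i,j. For n, k₁, l₁, m, k₂, l₂ ∈ ℤ define: A(n,k₁,l₁) the N×N matrix with entry (μ p̄_j/(p_i+p̄_j))·(−p_i/p̄_j)^n·((1−a₁p_i)/(1+a₁p̄_j))^{−k₁}·((1−b₁/p_i)/(1+b₁/p̄_j))^{−l₁}; Ã(n,k₁,l₁) with entry (−μ p_i/(p_i+p̄_j))·(−p_i/p̄_j)^n·((1−a₁p_i)/(1+a₁p̄_j))^{−k₁}·((1−b₁/p_i)/(1+b₁/p̄_j))^{−l₁};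 B(m,k₂,l₂) with entry (ν/(q_i+q̄_j))·(−q_i/q̄_j)^m·((1−a₂q_i)/(1+a₂q̄_j))^{−k₂}·((1−b₂/q_i)/(1+b₂/q̄_j))^{−l₂}; row vectors Φ(n,k₁,l₁) with j-th entry p_j^n (1−a₁p_j)^{−k₁}(1−b₁/p_j)^{−l₁}, Φ̄(n,k₁,l₁) with j-th entry (−p̄_j)^{−n}(1+a₁p̄_j)^{k₁}(1+b₁/p̄_j)^{l₁}, Ψ(m,k₂,l₂) with j-th entry q_j^m (1−a₂q_j)^{−k₂}(1−b₂/q_j)^{−l₂}, Ψ̄(m,k₂,l₂) with j-th entry (−q̄_j)^{−m}(1+a₂q̄_j)^{k₂}(1+b₂/q̄_j)^{l₂}. Set f^{m,k₂,l₂}_{n,k₁,l₁} = det[[A, I],[−I, B]], g^{m,k₂,l₂}_{n,k₁,l₁} = det[[A, I, Φᵀ],[−I, B, 0],[0, −Ψ̄, 0]], and ḡ^{m,k₂,l₂}_{n,k₁,l₁} = det[[Ã, I, 0],[−I, B, Ψᵀ],[−Φ̄, 0, 0]] (with all blocks evaluated at the indicated indices). Then for all n, k₁, l₁, m, k₂,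 l₂ ∈ ℤ: (1/a₂)·(f^{m,k₂+1,l₂}_{n+1,k₁,l₁}·f^{m,k₂,l₂}_{n,k₁,l₁} − f^{m,k₂,l₂}_{n+1,k₁,l₁}·f^{m,k₂+1,l₂}_{n,k₁,l₁}) = μ·ν·g^{m,k₂,l₂}_{n,k₁,l₁}·ḡ^{m,k₂+1,l₂}_{n,k₁,l₁}. -/
open Matrix

section AUX

set_option linter.unusedSectionVars false
set_option maxHeartbeats 1000000

open Matrix Polynomial

variable {ι : Type*} [Fintype ι] [DecidableEq ι]

section CommRing
variable {R : Type*} [CommRing R]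

/-- bordered determinant -/
noncomputable def bord (M : Matrix ι ι R) (c r : ι → R) : R :=
  (Matrix.fromBlocks M (Matrix.of fun i (_ : Fin 1) => c i)
    (Matrix.of fun (_ : Fin 1) j => r j) (0 : Matrix (Fin 1) (Fin 1) R)).det

lemma of_mul_of (u : ι → R) (v : ι → R) :
    (Matrix.of fun i (_ : Fin 1) => u i) * (Matrix.of fun (_ : Fin 1) j => v j)
      = vecMulVec u v := by
  ext i j
  simp [Matrix.mul_apply, vecMulVec]

lemma bord_inv (M : Matrix ι ι R) (c r : ι → R) (h : IsUnit M.det) :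
    bord M c r = -(M.det * ((r ᵥ* M⁻¹) ⬝ᵥ c)) := by
  have : Invertible M := M.invertibleOfIsUnitDet h
  rw [bord, det_fromBlocks₁₁, Matrix.invOf_eq_nonsing_inv, det_fin_one]
  have hE : ((Matrix.of fun (_ : Fin 1) j => r j) * M⁻¹
      * (Matrix.of fun i (_ : Fin 1) => c i)) 0 0 = (r ᵥ* M⁻¹) ⬝ᵥ c := by
    simp only [Matrix.mul_apply, Matrix.of_apply, Matrix.vecMul, dotProduct,
      Finset.sum_mul, Finset.mul_sum]
  simp only [Matrix.sub_apply, Matrix.zero_apply, zero_sub, hE, mul_neg]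

/-- rank ≤ 2 determinant expansion -/
lemma det_add_rank_two (F : Matrix ι ι R) (c₁ c₂ r₁ r₂ : ι → R) (α β : R)
    (h : IsUnit F.det) :
    (F + α • vecMulVec c₁ r₁ + β • vecMulVec c₂ r₂).det
      = F.det * ((1 + α * ((r₁ ᵥ* F⁻¹) ⬝ᵥ c₁)) * (1 + β * ((r₂ ᵥ* F⁻¹) ⬝ᵥ c₂))
          - α * β * ((r₁ ᵥ* F⁻¹) ⬝ᵥ c₂) * ((r₂ ᵥ* F⁻¹) ⬝ᵥ c₁)) := by
  classical
  set U : Matrix ι (Fin 2) R := Matrix.of fun i t => ![c₁ i, c₂ i] t with hU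
  set V : Matrix (Fin 2) ι R := Matrix.of fun t j => ![α * r₁ j, β * r₂ j] t with hV
  have hUV : U * V = α • vecMulVec c₁ r₁ + β • vecMulVec c₂ r₂ := by
    ext i j
    simp [hU, hV, Matrix.mul_apply, Fin.sum_univ_two, vecMulVec]
    ring
  rw [add_assoc, ← hUV, Matrix.det_add_mul U V h]
  congr 1
  rw [det_fin_two]
  have e : ∀ (a b : Fin 2), (V * F⁻¹ * U) a b
      = ![α, β] a * (((![r₁, r₂] a) ᵥ* F⁻¹) ⬝ᵥ (![c₁, c₂] b)) := by
    intro a b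
    fin_cases a <;> fin_cases b <;>
      · simp only [hU, hV, Matrix.mul_apply, Matrix.of_apply, Matrix.vecMul,
          dotProduct, Matrix.cons_val_zero, Matrix.cons_val_one, Matrix.head_cons,
          Finset.sum_mul, Finset.mul_sum, Fin.isValue, Fin.zero_eta, Fin.mk_one]
        apply Finset.sum_congr rfl; intro k _
        apply Finset.sum_congr rfl; intro j _
        ring
  simp only [Matrix.add_apply, Matrix.one_apply, e]
  norm_num
  ring
end CommRing

section CommRing2
variable {R : Type*} [CommRing R]

lemma det_add_rank_one_s17 (F : Matrix ι ι R) (c r : ι → R) (α : R) (h : IsUnit F.det) :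
    (F + α • vecMulVec c r).det = F.det * (1 + α * ((r ᵥ* F⁻¹) ⬝ᵥ c)) := by
  have h2 := det_add_rank_two F c 0 r 0 α 0 h
  simp only [zero_smul, add_zero, vecMulVec, zero_mul, mul_zero, sub_zero, mul_one] at h2
  exact h2

/-- the discrepancy whose vanishing is the key bilinear identity -/
noncomputable def disc (F : Matrix ι ι R) (c₁ c₂ r₁ r₂ : ι → R) (α β : R) : R :=
  (F + α • vecMulVec c₁ r₁ + β • vecMulVec c₂ r₂).det * F.det
    - (F + α • vecMulVec c₁ r₁).det * (F + β • vecMulVec c₂ r₂).det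
    + α * β * bord F c₁ (fun j => -(r₂ j)) * bord F c₂ (fun j => -(r₁ j))

lemma disc_eq_zero_of_unit (F : Matrix ι ι R) (c₁ c₂ r₁ r₂ : ι → R) (α β : R)
    (h : IsUnit F.det) : disc F c₁ c₂ r₁ r₂ α β = 0 := by
  rw [disc, det_add_rank_two F c₁ c₂ r₁ r₂ α β h, det_add_rank_one_s17 F c₁ r₁ α h,
    det_add_rank_one_s17 F c₂ r₂ β h, bord_inv F c₁ _ h, bord_inv F c₂ _ h]
  have e1 : ((fun j => -(r₂ j)) ᵥ* F⁻¹) ⬝ᵥ c₁ = -((r₂ ᵥ* F⁻¹) ⬝ᵥ c₁) := by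
    simp [Matrix.vecMul, dotProduct, Finset.sum_mul, Finset.mul_sum, neg_mul,
      Finset.sum_neg_distrib]
  have e2 : ((fun j => -(r₁ j)) ᵥ* F⁻¹) ⬝ᵥ c₂ = -((r₁ ᵥ* F⁻¹) ⬝ᵥ c₂) := by
    simp [Matrix.vecMul, dotProduct, Finset.sum_mul, Finset.mul_sum, neg_mul,
      Finset.sum_neg_distrib]
  rw [e1, e2]
  ring
end CommRing2

section Map
variable {R S : Type*} [CommRing R] [CommRing S]

lemma bord_map (f : R →+* S) (M : Matrix ι ι R) (c r : ι → R) :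
    bord (f.mapMatrix M) (f ∘ c) (f ∘ r) = f (bord M c r) := by
  rw [bord, bord, RingHom.map_det]
  congr 1
  ext i j
  cases i <;> cases j <;>
    simp [Matrix.fromBlocks, RingHom.mapMatrix_apply, Matrix.map_apply]

lemma mapMatrix_shift (f : R →+* S) (F : Matrix ι ι R) (c r : ι → R) (α : R) :
    f.mapMatrix (F + α • vecMulVec c r)
      = f.mapMatrix F + f α • vecMulVec (f ∘ c) (f ∘ r) := by
  ext i j
  simp [vecMulVec, map_add, _root_.map_mul, Matrix.map_apply]

lemma disc_map (f : R →+* S) (F : Matrix ι ι R) (c₁ c₂ r₁ r₂ : ι → R) (α β : R) :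
    disc (f.mapMatrix F) (f ∘ c₁) (f ∘ c₂) (f ∘ r₁) (f ∘ r₂) (f α) (f β)
      = f (disc F c₁ c₂ r₁ r₂ α β) := by
  have h1 := mapMatrix_shift f F c₁ r₁ α
  have h2 := mapMatrix_shift f F c₂ r₂ β
  have h3 := mapMatrix_shift f (F + α • vecMulVec c₁ r₁) c₂ r₂ β
  have hr2 : (f ∘ fun j => -(r₂ j)) = fun j => -((f ∘ r₂) j) := by
    funext j; simp
  have hr1 : (f ∘ fun j => -(r₁ j)) = fun j => -((f ∘ r₁) j) := by
    funext j; simp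
  simp only [disc, map_add, map_sub, _root_.map_mul, RingHom.map_det, ← bord_map,
    hr1, hr2, h1, h2, h3]
end Map

section Complex

lemma eval_mapMatrix_poly (F : Matrix ι ι ℂ) (z : ℂ) :
    (Polynomial.evalRingHom z).mapMatrix
        ((X : ℂ[X]) • (1 : Matrix ι ι ℂ[X]) + (C : ℂ →+* ℂ[X]).mapMatrix F)
      = z • (1 : Matrix ι ι ℂ) + F := by
  ext i j
  by_cases h : i = j <;>
    simp [Matrix.one_apply, h, Matrix.map_apply, Matrix.add_apply, Matrix.smul_apply]

lemma det_shift_eval (F : Matrix ι ι ℂ) (z : ℂ) :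
    (z • (1 : Matrix ι ι ℂ) + F).det = ((-F).charpoly).eval z := by
  have h1 : (X : ℂ[X]) • (1 : Matrix ι ι ℂ[X]) + (C : ℂ →+* ℂ[X]).mapMatrix F
      = charmatrix (-F) := by
    ext i j
    rw [charmatrix_apply]
    by_cases h : i = j <;>
      simp [h, Matrix.map_apply, Matrix.sub_apply, Matrix.smul_apply, sub_neg_eq_add,
        Matrix.one_apply, Matrix.diagonal_apply]
  rw [← eval_mapMatrix_poly F z, h1]
  rw [Matrix.charpoly, Polynomial.eval, ← Polynomial.coe_eval₂RingHom]
  exact (RingHom.map_det _ _).symm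

lemma disc_eq_zero (F : Matrix ι ι ℂ) (c₁ c₂ r₁ r₂ : ι → ℂ) (α β : ℂ) :
    disc F c₁ c₂ r₁ r₂ α β = 0 := by
  set Fp : Matrix ι ι ℂ[X] :=
    (X : ℂ[X]) • (1 : Matrix ι ι ℂ[X]) + (C : ℂ →+* ℂ[X]).mapMatrix F with hFp
  set P : ℂ[X] := disc Fp ((C : ℂ →+* ℂ[X]) ∘ c₁) ((C : ℂ →+* ℂ[X]) ∘ c₂)
    ((C : ℂ →+* ℂ[X]) ∘ r₁) ((C : ℂ →+* ℂ[X]) ∘ r₂) (C α) (C β) with hP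
  have heval : ∀ z : ℂ, P.eval z = disc (z • (1 : Matrix ι ι ℂ) + F) c₁ c₂ r₁ r₂ α β := by
    intro z
    have := disc_map (Polynomial.evalRingHom z) Fp
      ((C : ℂ →+* ℂ[X]) ∘ c₁) ((C : ℂ →+* ℂ[X]) ∘ c₂)
      ((C : ℂ →+* ℂ[X]) ∘ r₁) ((C : ℂ →+* ℂ[X]) ∘ r₂) (C α) (C β)
    rw [eval_mapMatrix_poly] at this
    rw [hP]
    simpa [Function.comp_def] using this.symm
  have hroot : ∀ z : ℂ, ((-F).charpoly).eval z ≠ 0 → P.eval z = 0 := by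
    intro z hz
    rw [heval z]
    apply disc_eq_zero_of_unit
    rw [det_shift_eval]
    exact hz.isUnit
  have hP0 : P = 0 := by
    apply Polynomial.eq_zero_of_infinite_isRoot
    apply Set.Infinite.mono (s := {z : ℂ | ¬ ((-F).charpoly).eval z = 0})
    · intro z hz; exact hroot z hz
    · have hfin : Set.Finite {z : ℂ | ((-F).charpoly).eval z = 0} :=
        Polynomial.finite_setOf_isRoot ((-F).charpoly_monic.ne_zero)
      have := hfin.infinite_compl
      simpa [Set.compl_setOf] using this
  have := heval 0
  rw [hP0] at this
  simpa using this.symm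

end Complex

section Key
variable {R : Type*} [CommRing R]

lemma bord_shift_invariant (F : Matrix ι ι R) (c₁ c₂ r₁ r₂ : ι → R) (α β : R) :
    bord (F + α • vecMulVec c₁ r₁ + β • vecMulVec c₂ r₂) c₂ (fun j => -(r₁ j))
      = bord F c₂ (fun j => -(r₁ j)) := by
  classical
  set Bc : Matrix ι (Fin 1) R := Matrix.of fun i (_ : Fin 1) => c₂ i with hBc
  set Rr : Matrix (Fin 1) ι R := Matrix.of fun (_ : Fin 1) j => -(r₁ j) with hRr
  set L : Matrix (ι ⊕ Fin 1) (ι ⊕ Fin 1) R :=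
    Matrix.fromBlocks 1 (Matrix.of fun i (_ : Fin 1) => -(α * c₁ i)) 0 1 with hL
  set Rt : Matrix (ι ⊕ Fin 1) (ι ⊕ Fin 1) R :=
    Matrix.fromBlocks 1 0 (Matrix.of fun (_ : Fin 1) j => β * r₂ j) 1 with hRt
  have key : L * (Matrix.fromBlocks F Bc Rr 0) * Rt
      = Matrix.fromBlocks (F + α • vecMulVec c₁ r₁ + β • vecMulVec c₂ r₂) Bc Rr 0 := by
    rw [hL, hRt, Matrix.fromBlocks_multiply, Matrix.fromBlocks_multiply,
      Matrix.fromBlocks_inj]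
    refine ⟨?_, ?_, ?_, ?_⟩
    · rw [Matrix.mul_zero, add_zero, Matrix.one_mul, hRr, hBc, of_mul_of, Matrix.mul_one, Matrix.one_mul, of_mul_of]
      ext i j
      simp [vecMulVec, Matrix.add_apply, Matrix.smul_apply]
      ring
    · simp
    · simp
    · simp
  have hdetL : L.det = 1 := by
    rw [hL, Matrix.det_fromBlocks_zero₂₁]; simp
  have hdetR : Rt.det = 1 := by
    rw [hRt, Matrix.det_fromBlocks_zero₁₂]; simp
  rw [bord, bord, ← hBc, ← hRr, ← key, Matrix.det_mul, Matrix.det_mul, hdetL, hdetR,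
    one_mul, mul_one]

/-- The key abstract bilinear identity. -/
lemma key_identity (F : Matrix ι ι ℂ) (c₁ c₂ r₁ r₂ : ι → ℂ) (α β : ℂ) :
    (F + α • vecMulVec c₁ r₁ + β • vecMulVec c₂ r₂).det * F.det
      - (F + α • vecMulVec c₁ r₁).det * (F + β • vecMulVec c₂ r₂).det
      = -(α * β) * bord F c₁ (fun j => -(r₂ j))
          * bord (F + α • vecMulVec c₁ r₁ + β • vecMulVec c₂ r₂) c₂ (fun j => -(r₁ j)) := by
  have h := disc_eq_zero F c₁ c₂ r₁ r₂ α β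
  rw [disc] at h
  rw [bord_shift_invariant F c₁ c₂ r₁ r₂ α β]
  linear_combination h

end Key

lemma zpow_div_eq (x y : ℂ) (n : ℤ) : (x / y) ^ n = x ^ n * y ^ (-n) := by
  rw [div_zpow, _root_.zpow_neg, div_eq_mul_inv]

lemma neg_div_zpow_eq (P Q : ℂ) (n : ℤ) : (-P / Q) ^ n = P ^ n * (-Q) ^ (-n) := by
  rw [neg_div, ← div_neg, zpow_div_eq]

lemma scalarA (μ P Q x y u v : ℂ) (hP : P ≠ 0) (hQ : Q ≠ 0) (hPQ : P + Q ≠ 0)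
    (n k l : ℤ) :
    μ * Q / (P + Q) * (-P / Q) ^ (n + 1) * (x / y) ^ (-k) * (u / v) ^ (-l)
      = μ * Q / (P + Q) * (-P / Q) ^ n * (x / y) ^ (-k) * (u / v) ^ (-l)
        + -μ * (P ^ n * x ^ (-k) * u ^ (-l) * ((-Q) ^ (-n) * y ^ k * v ^ l)) := by
  have hPQ' : -P / Q ≠ 0 := div_ne_zero (neg_ne_zero.mpr hP) hQ
  rw [zpow_add_one₀ hPQ', neg_div_zpow_eq, zpow_div_eq x y, zpow_div_eq u v]
  simp only [neg_neg]
  generalize P ^ n = t1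
  generalize (-Q) ^ (-n) = t2
  generalize x ^ (-k) = t3
  generalize y ^ k = t4
  generalize u ^ (-l) = t5
  generalize v ^ l = t6
  field_simp
  ring

lemma scalarAt (μ P Q X Y : ℂ) (hP : P ≠ 0) (hQ : Q ≠ 0) (hPQ : P + Q ≠ 0) (n : ℤ) :
    -μ * P / (P + Q) * (-P / Q) ^ n * X * Y
      = μ * Q / (P + Q) * (-P / Q) ^ (n + 1) * X * Y := by
  have hPQ' : -P / Q ≠ 0 := div_ne_zero (neg_ne_zero.mpr hP) hQ
  rw [zpow_add_one₀ hPQ']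
  generalize (-P / Q) ^ n = t1
  field_simp

lemma scalarB (ν a Q1 Q2 u v : ℂ) (hQ1 : Q1 ≠ 0) (hQ2 : Q2 ≠ 0) (hQQ : Q1 + Q2 ≠ 0)
    (hs : 1 - a * Q1 ≠ 0) (ht : 1 + a * Q2 ≠ 0) (m k l : ℤ) :
    ν / (Q1 + Q2) * (-Q1 / Q2) ^ m * ((1 - a * Q1) / (1 + a * Q2)) ^ (-(k + 1))
        * (u / v) ^ (-l)
      = ν / (Q1 + Q2) * (-Q1 / Q2) ^ m * ((1 - a * Q1) / (1 + a * Q2)) ^ (-k)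
          * (u / v) ^ (-l)
        + a * ν * (Q1 ^ m * (1 - a * Q1) ^ (-(k + 1)) * u ^ (-l)
            * ((-Q2) ^ (-m) * (1 + a * Q2) ^ k * v ^ l)) := by
  have e1 : (1 - a * Q1) ^ (-k) = (1 - a * Q1) ^ (-(k + 1)) * (1 - a * Q1) := by
    rw [← zpow_add_one₀ hs]
    congr 1; ring
  have e2 : (1 + a * Q2) ^ (k + 1) = (1 + a * Q2) ^ k * (1 + a * Q2) :=
    zpow_add_one₀ ht k
  rw [zpow_div_eq (1 - a * Q1), zpow_div_eq (1 - a * Q1), zpow_div_eq u v,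
    neg_div_zpow_eq]
  simp only [neg_neg]
  rw [e1, e2]
  generalize Q1 ^ m = t1
  generalize (-Q2) ^ (-m) = t2
  generalize (1 - a * Q1) ^ (-(k + 1)) = t3
  generalize (1 + a * Q2) ^ k = t4
  generalize u ^ (-l) = t5
  generalize v ^ l = t6
  field_simp
  ring

end AUX

/-- Second fully discrete bilinear equation for the Gram-type tau functions of the
two-component fully discrete KP–Toda hierarchy. -/
theorem fully_discrete_bilinear_2 (N : ℕ) (hN : 1 ≤ N)
    (p pb q qb : Fin N → ℂ)
    (hp : ∀ i, p i ≠ 0) (hpb : ∀ i, pb i ≠ 0) (hq : ∀ i, q i ≠ 0) (hqb : ∀ i, qb i ≠ 0)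
    (hppb : ∀ i j, p i + pb j ≠ 0) (hqqb : ∀ i j, q i + qb j ≠ 0)
    (μ ν : ℂ)
    (a₁ a₂ b₁ b₂ : ℝ) (ha₁ : a₁ ≠ 0) (ha₂ : a₂ ≠ 0) (hb₁ : b₁ ≠ 0) (hb₂ : b₂ ≠ 0)
    (h1 : ∀ i, 1 - (a₁ : ℂ) * p i ≠ 0) (h2 : ∀ j, 1 + (a₁ : ℂ) * pb j ≠ 0)
    (h3 : ∀ i, 1 - (a₂ : ℂ) * q i ≠ 0) (h4 : ∀ j, 1 + (a₂ : ℂ) * qb j ≠ 0)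
    (h5 : ∀ i, 1 - (b₁ : ℂ) / p i ≠ 0) (h6 : ∀ j, 1 + (b₁ : ℂ) / pb j ≠ 0)
    (h7 : ∀ i, 1 - (b₂ : ℂ) / q i ≠ 0) (h8 : ∀ j, 1 + (b₂ : ℂ) / qb j ≠ 0)
    (A : ℤ → ℤ → ℤ → Matrix (Fin N) (Fin N) ℂ)
    (hA : ∀ n k₁ l₁ i j, A n k₁ l₁ i j =
      (μ * pb j / (p i + pb j)) * (-(p i) / pb j) ^ n *
      ((1 - (a₁ : ℂ) * p i) / (1 + (a₁ : ℂ) * pb j)) ^ (-k₁) *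
      ((1 - (b₁ : ℂ) / p i) / (1 + (b₁ : ℂ) / pb j)) ^ (-l₁))
    (At : ℤ → ℤ → ℤ → Matrix (Fin N) (Fin N) ℂ)
    (hAt : ∀ n k₁ l₁ i j, At n k₁ l₁ i j =
      (-μ * p i / (p i + pb j)) * (-(p i) / pb j) ^ n *
      ((1 - (a₁ : ℂ) * p i) / (1 + (a₁ : ℂ) * pb j)) ^ (-k₁) *
      ((1 - (b₁ : ℂ) / p i) / (1 + (b₁ : ℂ) / pb j)) ^ (-l₁))
    (B : ℤ → ℤ → ℤ → Matrix (Fin N) (Fin N) ℂ)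
    (hB : ∀ m k₂ l₂ i j, B m k₂ l₂ i j =
      (ν / (q i + qb j)) * (-(q i) / qb j) ^ m *
      ((1 - (a₂ : ℂ) * q i) / (1 + (a₂ : ℂ) * qb j)) ^ (-k₂) *
      ((1 - (b₂ : ℂ) / q i) / (1 + (b₂ : ℂ) / qb j)) ^ (-l₂))
    (Φ : ℤ → ℤ → ℤ → Fin N → ℂ)
    (hΦ : ∀ n k₁ l₁ j, Φ n k₁ l₁ j =
      p j ^ n * (1 - (a₁ : ℂ) * p j) ^ (-k₁) * (1 - (b₁ : ℂ) / p j) ^ (-l₁))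
    (Φb : ℤ → ℤ → ℤ → Fin N → ℂ)
    (hΦb : ∀ n k₁ l₁ j, Φb n k₁ l₁ j =
      (-(pb j)) ^ (-n) * (1 + (a₁ : ℂ) * pb j) ^ k₁ * (1 + (b₁ : ℂ) / pb j) ^ l₁)
    (Ψ : ℤ → ℤ → ℤ → Fin N → ℂ)
    (hΨ : ∀ m k₂ l₂ j, Ψ m k₂ l₂ j =
      q j ^ m * (1 - (a₂ : ℂ) * q j) ^ (-k₂) * (1 - (b₂ : ℂ) / q j) ^ (-l₂))
    (Ψb : ℤ → ℤ → ℤ → Fin N → ℂ)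
    (hΨb : ∀ m k₂ l₂ j, Ψb m k₂ l₂ j =
      (-(qb j)) ^ (-m) * (1 + (a₂ : ℂ) * qb j) ^ k₂ * (1 + (b₂ : ℂ) / qb j) ^ l₂)
    (f : ℤ → ℤ → ℤ → ℤ → ℤ → ℤ → ℂ)
    (hf : ∀ m k₂ l₂ n k₁ l₁, f m k₂ l₂ n k₁ l₁ = blockDet (A n k₁ l₁) (B m k₂ l₂))
    (g : ℤ → ℤ → ℤ → ℤ → ℤ → ℤ → ℂ)
    (hg : ∀ m k₂ l₂ n k₁ l₁, g m k₂ l₂ n k₁ l₁ = borderedDet (A n k₁ l₁) (B m k₂ l₂)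
      (Sum.elim (Φ n k₁ l₁) (fun _ => 0))
      (Sum.elim (fun _ => 0) (fun j => -(Ψb m k₂ l₂ j))))
    (gb : ℤ → ℤ → ℤ → ℤ → ℤ → ℤ → ℂ)
    (hgb : ∀ m k₂ l₂ n k₁ l₁, gb m k₂ l₂ n k₁ l₁ = borderedDet (At n k₁ l₁) (B m k₂ l₂)
      (Sum.elim (fun _ => 0) (Ψ m k₂ l₂))
      (Sum.elim (fun j => -(Φb n k₁ l₁ j)) (fun _ => 0))) :
    ∀ n k₁ l₁ m k₂ l₂ : ℤ,
      (1 / (a₂ : ℂ)) * (f m (k₂ + 1) l₂ (n + 1) k₁ l₁ * f m k₂ l₂ n k₁ l₁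
        - f m k₂ l₂ (n + 1) k₁ l₁ * f m (k₂ + 1) l₂ n k₁ l₁)
      = μ * ν * g m k₂ l₂ n k₁ l₁ * gb m (k₂ + 1) l₂ n k₁ l₁ := by
  intro n k₁ l₁ m k₂ l₂
  have ha₂' : (a₂ : ℂ) ≠ 0 := Complex.ofReal_ne_zero.mpr ha₂
  have hAshift : ∀ i j, A (n + 1) k₁ l₁ i j
      = A n k₁ l₁ i j + -μ * (Φ n k₁ l₁ i * Φb n k₁ l₁ j) := by
    intro i j
    rw [hA, hA, hΦ, hΦb]
    linear_combination scalarA μ (p i) (pb j) (1 - (a₁ : ℂ) * p i) (1 + (a₁ : ℂ) * pb j)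
      (1 - (b₁ : ℂ) / p i) (1 + (b₁ : ℂ) / pb j) (hp i) (hpb j) (hppb i j) n k₁ l₁
  have hBshift : ∀ i j, B m (k₂ + 1) l₂ i j
      = B m k₂ l₂ i j + (a₂ : ℂ) * ν * (Ψ m (k₂ + 1) l₂ i * Ψb m k₂ l₂ j) := by
    intro i j
    rw [hB, hB, hΨ, hΨb]
    linear_combination scalarB ν (a₂ : ℂ) (q i) (qb j) (1 - (b₂ : ℂ) / q i)
      (1 + (b₂ : ℂ) / qb j) (hq i) (hqb j) (hqqb i j) (h3 i) (h4 j) m k₂ l₂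
  have hAt' : At n k₁ l₁ = A (n + 1) k₁ l₁ := by
    ext i j
    rw [hAt, hA]
    exact scalarAt μ (p i) (pb j)
      (((1 - (a₁ : ℂ) * p i) / (1 + (a₁ : ℂ) * pb j)) ^ (-k₁))
      (((1 - (b₁ : ℂ) / p i) / (1 + (b₁ : ℂ) / pb j)) ^ (-l₁))
      (hp i) (hpb j) (hppb i j) n
  have E1 : Matrix.fromBlocks (A (n + 1) k₁ l₁) (1 : Matrix (Fin N) (Fin N) ℂ)
      (-1 : Matrix (Fin N) (Fin N) ℂ) (B m k₂ l₂) = (Matrix.fromBlocks (A n k₁ l₁) (1 : Matrix (Fin N) (Fin N) ℂ)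
      (-1 : Matrix (Fin N) (Fin N) ℂ) (B m k₂ l₂)) + (-μ) • vecMulVec (Sum.elim (Φ n k₁ l₁) (fun _ => 0) : Fin N ⊕ Fin N → ℂ) (Sum.elim (Φb n k₁ l₁) (fun _ => 0) : Fin N ⊕ Fin N → ℂ) := by
    ext i j
    rcases i with i | i <;> rcases j with j | j <;>
      simp only [Matrix.fromBlocks_apply₁₁, Matrix.fromBlocks_apply₁₂,
        Matrix.fromBlocks_apply₂₁, Matrix.fromBlocks_apply₂₂, Matrix.add_apply,
        Matrix.smul_apply, Matrix.vecMulVec_apply, Sum.elim_inl, Sum.elim_inr,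
        smul_eq_mul, mul_zero, zero_mul, add_zero]
    exact hAshift i j
  have E2 : Matrix.fromBlocks (A n k₁ l₁) (1 : Matrix (Fin N) (Fin N) ℂ)
      (-1 : Matrix (Fin N) (Fin N) ℂ) (B m (k₂ + 1) l₂) = (Matrix.fromBlocks (A n k₁ l₁) (1 : Matrix (Fin N) (Fin N) ℂ)
      (-1 : Matrix (Fin N) (Fin N) ℂ) (B m k₂ l₂)) + ((a₂ : ℂ) * ν) • vecMulVec (Sum.elim (fun _ => 0) (Ψ m (k₂ + 1) l₂) : Fin N ⊕ Fin N → ℂ) (Sum.elim (fun _ => 0) (Ψb m k₂ l₂) : Fin N ⊕ Fin N → ℂ) := by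
    ext i j
    rcases i with i | i <;> rcases j with j | j <;>
      simp only [Matrix.fromBlocks_apply₁₁, Matrix.fromBlocks_apply₁₂,
        Matrix.fromBlocks_apply₂₁, Matrix.fromBlocks_apply₂₂, Matrix.add_apply,
        Matrix.smul_apply, Matrix.vecMulVec_apply, Sum.elim_inl, Sum.elim_inr,
        smul_eq_mul, mul_zero, zero_mul, add_zero]
    exact hBshift i j
  have E3 : Matrix.fromBlocks (A (n + 1) k₁ l₁) (1 : Matrix (Fin N) (Fin N) ℂ)
      (-1 : Matrix (Fin N) (Fin N) ℂ) (B m (k₂ + 1) l₂) = (Matrix.fromBlocks (A n k₁ l₁) (1 : Matrix (Fin N) (Fin N) ℂ)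
      (-1 : Matrix (Fin N) (Fin N) ℂ) (B m k₂ l₂)) + (-μ) • vecMulVec (Sum.elim (Φ n k₁ l₁) (fun _ => 0) : Fin N ⊕ Fin N → ℂ) (Sum.elim (Φb n k₁ l₁) (fun _ => 0) : Fin N ⊕ Fin N → ℂ) + ((a₂ : ℂ) * ν) • vecMulVec (Sum.elim (fun _ => 0) (Ψ m (k₂ + 1) l₂) : Fin N ⊕ Fin N → ℂ) (Sum.elim (fun _ => 0) (Ψb m k₂ l₂) : Fin N ⊕ Fin N → ℂ) := by
    ext i j
    rcases i with i | i <;> rcases j with j | j <;>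
      simp only [Matrix.fromBlocks_apply₁₁, Matrix.fromBlocks_apply₁₂,
        Matrix.fromBlocks_apply₂₁, Matrix.fromBlocks_apply₂₂, Matrix.add_apply,
        Matrix.smul_apply, Matrix.vecMulVec_apply, Sum.elim_inl, Sum.elim_inr,
        smul_eq_mul, mul_zero, zero_mul, add_zero]
    · exact hAshift i j
    · exact hBshift i j
  have hbd : ∀ (X Y : Matrix (Fin N) (Fin N) ℂ) (c r : Fin N ⊕ Fin N → ℂ),
      borderedDet X Y c r = bord (Matrix.fromBlocks X (1 : Matrix (Fin N) (Fin N) ℂ)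
        (-1 : Matrix (Fin N) (Fin N) ℂ) Y) c r := fun _ _ _ _ => rfl
  have hbk : ∀ (X Y : Matrix (Fin N) (Fin N) ℂ),
      blockDet X Y = (Matrix.fromBlocks X (1 : Matrix (Fin N) (Fin N) ℂ)
        (-1 : Matrix (Fin N) (Fin N) ℂ) Y).det := fun _ _ => rfl
  have hrowg : (Sum.elim (fun _ => 0) (fun j => -(Ψb m k₂ l₂ j)) : Fin N ⊕ Fin N → ℂ)
      = fun x => -((Sum.elim (fun _ => 0) (Ψb m k₂ l₂) : Fin N ⊕ Fin N → ℂ) x) := by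
    funext x; rcases x with x | x <;> simp
  have hrowgb : (Sum.elim (fun j => -(Φb n k₁ l₁ j)) (fun _ => 0) : Fin N ⊕ Fin N → ℂ)
      = fun x => -((Sum.elim (Φb n k₁ l₁) (fun _ => 0) : Fin N ⊕ Fin N → ℂ) x) := by
    funext x; rcases x with x | x <;> simp
  have hf1 : f m (k₂ + 1) l₂ (n + 1) k₁ l₁ = ((Matrix.fromBlocks (A n k₁ l₁) (1 : Matrix (Fin N) (Fin N) ℂ)
      (-1 : Matrix (Fin N) (Fin N) ℂ) (B m k₂ l₂)) + (-μ) • vecMulVec (Sum.elim (Φ n k₁ l₁) (fun _ => 0) : Fin N ⊕ Fin N → ℂ) (Sum.elim (Φb n k₁ l₁) (fun _ => 0) : Fin N ⊕ Fin N → ℂ) + ((a₂ : ℂ) * ν) • vecMulVec (Sum.elim (fun _ => 0) (Ψ m (k₂ + 1) l₂) : Fin N ⊕ Fin N → ℂ) (Sum.elim (fun _ => 0) (Ψb m k₂ l₂) : Fin N ⊕ Fin N → ℂ)).det := by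
    rw [hf, hbk, E3]
  have hf2 : f m k₂ l₂ n k₁ l₁ = ((Matrix.fromBlocks (A n k₁ l₁) (1 : Matrix (Fin N) (Fin N) ℂ)
      (-1 : Matrix (Fin N) (Fin N) ℂ) (B m k₂ l₂))).det := by rw [hf, hbk]
  have hf3 : f m k₂ l₂ (n + 1) k₁ l₁ = ((Matrix.fromBlocks (A n k₁ l₁) (1 : Matrix (Fin N) (Fin N) ℂ)
      (-1 : Matrix (Fin N) (Fin N) ℂ) (B m k₂ l₂)) + (-μ) • vecMulVec (Sum.elim (Φ n k₁ l₁) (fun _ => 0) : Fin N ⊕ Fin N → ℂ) (Sum.elim (Φb n k₁ l₁) (fun _ => 0) : Fin N ⊕ Fin N → ℂ)).det := by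
    rw [hf, hbk, E1]
  have hf4 : f m (k₂ + 1) l₂ n k₁ l₁ = ((Matrix.fromBlocks (A n k₁ l₁) (1 : Matrix (Fin N) (Fin N) ℂ)
      (-1 : Matrix (Fin N) (Fin N) ℂ) (B m k₂ l₂)) + ((a₂ : ℂ) * ν) • vecMulVec (Sum.elim (fun _ => 0) (Ψ m (k₂ + 1) l₂) : Fin N ⊕ Fin N → ℂ) (Sum.elim (fun _ => 0) (Ψb m k₂ l₂) : Fin N ⊕ Fin N → ℂ)).det := by
    rw [hf, hbk, E2]
  have hg1 : g m k₂ l₂ n k₁ l₁ = bord (Matrix.fromBlocks (A n k₁ l₁) (1 : Matrix (Fin N) (Fin N) ℂ)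
      (-1 : Matrix (Fin N) (Fin N) ℂ) (B m k₂ l₂)) (Sum.elim (Φ n k₁ l₁) (fun _ => 0) : Fin N ⊕ Fin N → ℂ) (fun x => -((Sum.elim (fun _ => 0) (Ψb m k₂ l₂) : Fin N ⊕ Fin N → ℂ) x)) := by
    rw [hg, hbd, hrowg]
  have hgb1 : gb m (k₂ + 1) l₂ n k₁ l₁
      = bord ((Matrix.fromBlocks (A n k₁ l₁) (1 : Matrix (Fin N) (Fin N) ℂ)
      (-1 : Matrix (Fin N) (Fin N) ℂ) (B m k₂ l₂)) + (-μ) • vecMulVec (Sum.elim (Φ n k₁ l₁) (fun _ => 0) : Fin N ⊕ Fin N → ℂ) (Sum.elim (Φb n k₁ l₁) (fun _ => 0) : Fin N ⊕ Fin N → ℂ) + ((a₂ : ℂ) * ν) • vecMulVec (Sum.elim (fun _ => 0) (Ψ m (k₂ + 1) l₂) : Fin N ⊕ Fin N → ℂ) (Sum.elim (fun _ => 0) (Ψb m k₂ l₂) : Fin N ⊕ Fin N → ℂ)) (Sum.elim (fun _ => 0) (Ψ m (k₂ + 1) l₂) : Fin N ⊕ Fin N → ℂ) (fun x => -((Sum.elim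 (Φb n k₁ l₁) (fun _ => 0) : Fin N ⊕ Fin N → ℂ) x)) := by
    rw [hgb, hbd, hrowgb, hAt', E3]
  rw [hf1, hf2, hf3, hf4, hg1, hgb1,
    key_identity (Matrix.fromBlocks (A n k₁ l₁) (1 : Matrix (Fin N) (Fin N) ℂ)
      (-1 : Matrix (Fin N) (Fin N) ℂ) (B m k₂ l₂)) (Sum.elim (Φ n k₁ l₁) (fun _ => 0) : Fin N ⊕ Fin N → ℂ) (Sum.elim (fun _ => 0) (Ψ m (k₂ + 1) l₂) : Fin N ⊕ Fin N → ℂ) (Sum.elim (Φb n k₁ l₁) (fun _ => 0) : Fin N ⊕ Fin N → ℂ) (Sum.elim (fun _ => 0) (Ψb m k₂ l₂) : Fin N ⊕ Fin N → ℂ) (-μ) ((a₂ : ℂ) * ν)]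
  field_simp
end
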